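/- arXiv:math/0206266 — 5 statements merged into one kernel-verified Lean document; each statement's English description precedes it below -/
import Mathlib

section
/- Orchard Theorem: Let P = {P_1,...,P_n} be a generic configuration of n points in R^d. Define P ∼ Q iff P = Q or n(P,Q) ≡ binom(n-3, d-1) (mod 2). Then ∼ is an equivalence relation on P having at most 2 equivalence classes. -/
open Finset

/-- A finite set of points in `ℝ^d` is a generic configuration if every subset of at most
`d+1` points is affinely independent. -/
def Generic {d : ℕ} (P : Finset (Fin d → ℝ)) : Prop :=
  ∀ S : Finset (Fin d → ℝ), S ⊆ P → S.card ≤ d + 1 →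
    AffineIndependent ℝ (fun x : S => (x : Fin d → ℝ))

/-- The affine hyperplane spanned by the points of `S` separates `A` from `B`:
both points lie off the hyperplane, and in different connected components of its
complement. -/
def Separates {d : ℕ} (S : Finset (Fin d → ℝ)) (A B : Fin d → ℝ) : Prop :=
  A ∉ (affineSpan ℝ (S : Set (Fin d → ℝ)) : Set (Fin d → ℝ)) ∧
  B ∉ (affineSpan ℝ (S : Set (Fin d → ℝ)) : Set (Fin d → ℝ)) ∧
  A ∉ connectedComponentIn ((affineSpan ℝ (S : Set (Fin d → ℝ)) : Set (Fin d → ℝ)))ᶜ B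

open Classical in
/-- `sepCount P A B` = the number `n(A,B)` of hyperplanes spanned by `d` points of
`P \ {A,B}` separating `A` from `B`. -/
noncomputable def sepCount {d : ℕ} (P : Finset (Fin d → ℝ)) (A B : Fin d → ℝ) : ℕ :=
  (((P \ {A, B}).powersetCard d).filter (fun S => Separates S A B)).card

/-- The Orchard relation: `A ∼ B` iff `A = B` or `n(A,B) ≡ binom (n-3) (d-1) (mod 2)`. -/
def OrchardRel {d : ℕ} (P : Finset (Fin d → ℝ)) (A B : Fin d → ℝ) : Prop :=
  A = B ∨ sepCount P A B % 2 = Nat.choose (P.card - 3) (d - 1) % 2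

namespace Orchard

open scoped Classical

variable {n : ℕ}

local notation "V" => (Fin (n+1) → ℝ)

/-- rows of the matrix: first row `x`, then the difference vectors of `p`. -/
def rows (p : Fin (n+1) → V) (x : V) : Fin (n+1) → V :=
  Fin.cons x (fun i : Fin n => p i.succ - p 0)

lemma cons_eq_update (x : V) (t : Fin n → V) :
    (Fin.cons x t : Fin (n+1) → V) = Function.update (Fin.cons 0 t) 0 x := by
  funext i
  refine Fin.cases ?_ (fun j => ?_) i
  · simp
  · rw [Function.update_of_ne (Fin.succ_ne_zero j)]
    simp

/-- determinant as a linear function of the first row -/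
noncomputable def G (p : Fin (n+1) → V) : V →ₗ[ℝ] ℝ where
  toFun x := Matrix.det (Matrix.of (rows p x))
  map_add' x y := by
    show (Matrix.of (rows p (x+y))).det = (Matrix.of (rows p x)).det + (Matrix.of (rows p y)).det
    unfold rows
    rw [cons_eq_update (x+y), cons_eq_update x, cons_eq_update y]
    exact Matrix.detRowAlternating.toMultilinearMap.map_update_add _ 0 x y
  map_smul' c x := by
    show (Matrix.of (rows p (c • x))).det = c * (Matrix.of (rows p x)).det
    unfold rows
    rw [cons_eq_update (c • x), cons_eq_update x]
    exact Matrix.detRowAlternating.toMultilinearMap.map_update_smul _ 0 c x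

noncomputable def F (p : Fin (n+1) → V) (x : V) : ℝ := Matrix.det (Matrix.of (rows p (x - p 0)))

lemma F_eq (p : Fin (n+1) → V) (x : V) : F p x = G p x - G p (p 0) := by
  rw [show G p x - G p (p 0) = G p (x - p 0) from (map_sub (G p) x (p 0)).symm]
  rfl

lemma continuous_F (p : Fin (n+1) → V) : Continuous (F p) := by
  have : F p = fun x => G p x - G p (p 0) := funext (F_eq p)
  rw [this]
  exact ((G p).continuous_of_finiteDimensional).sub continuous_const

lemma convex_F_pos (p : Fin (n+1) → V) : Convex ℝ {x : V | 0 < F p x} := by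
  have : {x : V | 0 < F p x} = {x : V | G p (p 0) < G p x} := by
    ext x; simp [F_eq, sub_pos]
  rw [this]
  exact convex_halfSpace_gt (LinearMap.isLinear _) _

lemma convex_F_neg (p : Fin (n+1) → V) : Convex ℝ {x : V | F p x < 0} := by
  have : {x : V | F p x < 0} = {x : V | G p x < G p (p 0)} := by
    ext x; simp [F_eq, sub_neg]
  rw [this]
  exact convex_halfSpace_lt (LinearMap.isLinear _) _


lemma det_eq_zero_iff_rows {k : ℕ} (v : Fin k → Fin k → ℝ) :
    Matrix.det (Matrix.of v) = 0 ↔ ¬ LinearIndependent ℝ v := by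
  constructor
  · intro hdet hli
    rw [← Matrix.det_transpose, ← Matrix.exists_mulVec_eq_zero_iff] at hdet
    obtain ⟨g, hg0, hg⟩ := hdet
    rw [Fintype.linearIndependent_iff] at hli
    refine hg0 (funext (hli g ?_))
    · funext j
      have := congrFun hg j
      simpa [Matrix.mulVec, dotProduct, Finset.sum_apply, mul_comm] using this
  · intro h
    exact Matrix.detRowAlternating.map_linearDependent v h


/-- reindexing equivalence -/
def eSucc (k : ℕ) : Fin k ≃ {i : Fin (k+1) // i ≠ 0} where
  toFun j := ⟨j.succ, Fin.succ_ne_zero j⟩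
  invFun i := (i : Fin (k+1)).pred i.2
  left_inv j := by simp
  right_inv i := by
    ext
    simp [Fin.succ_pred]

lemma affine_to_lin {k : ℕ} {W : Type*} [AddCommGroup W] [Module ℝ W] (r : Fin (k+1) → W) :
    AffineIndependent ℝ r ↔ LinearIndependent ℝ (fun j : Fin k => r j.succ - r 0) := by
  rw [affineIndependent_iff_linearIndependent_vsub ℝ r 0]
  rw [← linearIndependent_equiv (eSucc k)]
  rfl

lemma rows_indep_iff (p : Fin (n+1) → V) (x : V) :
    LinearIndependent ℝ (rows p (x - p 0))
      ↔ AffineIndependent ℝ (Fin.cons (p 0) (Fin.cons x (fun i : Fin n => p i.succ)) : Fin (n+2) → V) := by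
  rw [affine_to_lin]
  have : (fun j : Fin (n+1) =>
      (Fin.cons (p 0) (Fin.cons x (fun i : Fin n => p i.succ)) : Fin (n+2) → V) j.succ -
      (Fin.cons (p 0) (Fin.cons x (fun i : Fin n => p i.succ)) : Fin (n+2) → V) 0) = rows p (x - p 0) := by
    funext j
    refine Fin.cases ?_ (fun i => ?_) j <;> simp [rows]
  rw [this]


lemma F_eq_zero_iff {p : Fin (n+1) → (Fin (n+1) → ℝ)} (hp : AffineIndependent ℝ p)
    (x : Fin (n+1) → ℝ) :
    F p x = 0 ↔ x ∈ affineSpan ℝ (Set.range p) := by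
  have htail : LinearIndependent ℝ (fun j : Fin n => p j.succ - p 0) := by
    rw [← affine_to_lin]; exact hp
  have himg : (fun v => v -ᵥ p 0) '' Set.range p
      = insert (0 : Fin (n+1) → ℝ) (Set.range (fun j : Fin n => p j.succ - p 0)) := by
    rw [← Set.range_comp]
    have hc : ((fun v => v -ᵥ p 0) ∘ p) = Fin.cons 0 (fun j : Fin n => p j.succ - p 0) := by
      funext i
      refine Fin.cases ?_ (fun j => ?_) i <;> simp [vsub_eq_sub]
    rw [hc, Fin.range_cons]
  have hspan : Submodule.span ℝ (Set.range (fun j : Fin n => p j.succ - p 0))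
      = vectorSpan ℝ (Set.range p) := by
    rw [vectorSpan_eq_span_vsub_set_right ℝ (Set.mem_range_self 0), himg,
      Submodule.span_insert_zero]
  have h0 : p 0 ∈ affineSpan ℝ (Set.range p) := mem_affineSpan ℝ (Set.mem_range_self 0)
  have hmem : x ∈ affineSpan ℝ (Set.range p)
      ↔ x - p 0 ∈ Submodule.span ℝ (Set.range (fun j : Fin n => p j.succ - p 0)) := by
    rw [hspan, ← direction_affineSpan ℝ (Set.range p), ← vsub_eq_sub,
      AffineSubspace.vsub_right_mem_direction_iff_mem h0]
  rw [hmem]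
  have : F p x = Matrix.det (Matrix.of (rows p (x - p 0))) := rfl
  rw [this]
  rw [det_eq_zero_iff_rows]
  unfold rows
  rw [linearIndependent_fin_cons]
  constructor
  · intro h
    by_contra hx
    exact h ⟨htail, hx⟩
  · intro h hli
    exact hli.2 h

lemma mem_component_iff {f : (Fin (n+1) → ℝ) → ℝ} (hf : Continuous f)
    (hpos : Convex ℝ {x | 0 < f x}) (hneg : Convex ℝ {x | f x < 0})
    {X Y : Fin (n+1) → ℝ} (hX : f X ≠ 0) (hY : f Y ≠ 0) :
    X ∈ connectedComponentIn {x | f x = 0}ᶜ Y ↔ 0 < f X * f Y := by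
  constructor
  · intro h
    rcases hX.lt_or_gt with hx | hx <;> rcases hY.lt_or_gt with hy | hy
    · exact mul_pos_of_neg_of_neg hx hy
    · exfalso
      obtain ⟨z, hz, hz0⟩ := (isPreconnected_connectedComponentIn).intermediate_value₂
        h (mem_connectedComponentIn (by simp [hY] : Y ∈ {x | f x = 0}ᶜ))
        (hf.continuousOn) (continuousOn_const (c := (0:ℝ))) (le_of_lt hx) (le_of_lt hy)
      exact absurd hz0 (connectedComponentIn_subset _ _ hz)
    · exfalso
      obtain ⟨z, hz, hz0⟩ := (isPreconnected_connectedComponentIn).intermediate_value₂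
        (mem_connectedComponentIn (by simp [hY] : Y ∈ {x | f x = 0}ᶜ)) h
        (hf.continuousOn) (continuousOn_const (c := (0:ℝ))) (le_of_lt hy) (le_of_lt hx)
      exact absurd hz0 (connectedComponentIn_subset _ _ hz)
    · exact mul_pos hx hy
  · intro h
    rcases hX.lt_or_gt with hx | hx
    · have hy : f Y < 0 := by nlinarith
      exact hneg.isPreconnected.subset_connectedComponentIn (x := Y) hy
        (fun z hz => by simp only [Set.mem_compl_iff, Set.mem_setOf_eq]; exact ne_of_lt hz) hx
    · have hy : 0 < f Y := by nlinarith
      exact hpos.isPreconnected.subset_connectedComponentIn (x := Y) hy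
        (fun z hz => by simp only [Set.mem_compl_iff, Set.mem_setOf_eq]; exact (ne_of_gt hz)) hx


lemma separates_iff {p : Fin (n+1) → (Fin (n+1) → ℝ)} (hp : AffineIndependent ℝ p)
    {S : Finset (Fin (n+1) → ℝ)} (hS : (S : Set (Fin (n+1) → ℝ)) = Set.range p)
    (X Y : Fin (n+1) → ℝ) :
    Separates S X Y ↔ F p X * F p Y < 0 := by
  have hset : ((affineSpan ℝ (S : Set (Fin (n+1) → ℝ))) : Set (Fin (n+1) → ℝ))
      = {x | F p x = 0} := by
    rw [hS]
    ext x
    simp only [SetLike.mem_coe, Set.mem_setOf_eq]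
    exact (F_eq_zero_iff hp x).symm
  unfold Separates
  rw [hset]
  constructor
  · rintro ⟨hX, hY, hC⟩
    have hX' : F p X ≠ 0 := hX
    have hY' : F p Y ≠ 0 := hY
    have := (mem_component_iff (continuous_F p) (convex_F_pos p) (convex_F_neg p) hX' hY').not.mp hC
    rcases (mul_ne_zero hX' hY').lt_or_gt with h | h
    · exact h
    · exact absurd h this
  · intro h
    have hX' : F p X ≠ 0 := by
      intro h0
      rw [h0, zero_mul] at h
      exact lt_irrefl 0 h
    have hY' : F p Y ≠ 0 := by
      intro h0
      rw [h0, mul_zero] at h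
      exact lt_irrefl 0 h
    refine ⟨hX', hY', ?_⟩
    rw [mem_component_iff (continuous_F p) (convex_F_pos p) (convex_F_neg p) hX' hY']
    exact not_lt_of_gt h

/-- From genericity, any injective family into a small subset of `P` is affinely independent. -/
lemma generic_indep {d : ℕ} {P : Finset (Fin d → ℝ)} (hgen : Generic P)
    {ι : Type*} (r : ι → (Fin d → ℝ)) (hinj : Function.Injective r)
    (Q : Finset (Fin d → ℝ)) (hQP : Q ⊆ P) (hcard : Q.card ≤ d + 1)
    (hr : ∀ i, r i ∈ Q) : AffineIndependent ℝ r := by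
  have h := hgen Q hQP hcard
  have : r = (fun x : Q => (x : Fin d → ℝ)) ∘
      (⟨fun i => (⟨r i, hr i⟩ : Q), fun i j hij => hinj (congrArg Subtype.val hij)⟩ :
        ι ↪ Q) := rfl
  rw [this]
  exact h.comp_embedding _


lemma F_snoc_antisymm (t : Fin n → (Fin (n+1) → ℝ)) (X Y : Fin (n+1) → ℝ) :
    F (Fin.snoc t X) Y = - F (Fin.snoc t Y) X := by
  cases n with
  | zero =>
    show Matrix.det _ = - Matrix.det _
    rw [Matrix.det_fin_one, Matrix.det_fin_one]
    simp [rows, Fin.snoc]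
  | succ m =>
    have h0 : ∀ Z : Fin (m+2) → ℝ, (Fin.snoc t Z : Fin (m+2) → (Fin (m+2) → ℝ)) 0 = t 0 :=
      fun Z => by
        rw [show (0 : Fin (m+2)) = Fin.castSucc 0 from rfl, Fin.snoc_castSucc]
    have hlast : Fin.last (m+1) = Fin.succ (Fin.last m) := rfl
    have hrow : ∀ Z W : Fin (m+2) → ℝ, ∀ j : Fin (m+1),
        rows (Fin.snoc t Z) W (Fin.succ j)
          = (Fin.snoc t Z : Fin (m+2) → (Fin (m+2) → ℝ)) (Fin.succ j) - t 0 := by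
      intro Z W j
      simp only [rows, Fin.cons_succ, h0]
    have hswap : rows (Fin.snoc t X) (Y - t 0)
        = rows (Fin.snoc t Y) (X - t 0) ∘ Equiv.swap 0 (Fin.last (m+1)) := by
      funext i
      by_cases hi0 : i = 0
      · subst hi0
        simp only [Function.comp_apply, Equiv.swap_apply_left]
        rw [hlast, hrow, hlast.symm, Fin.snoc_last]
        simp [rows]
      · by_cases hil : i = Fin.last (m+1)
        · subst hil
          simp only [Function.comp_apply, Equiv.swap_apply_right]
          rw [hlast, hrow, hlast.symm, Fin.snoc_last]
          simp [rows]
        · rw [show (rows (Fin.snoc t Y) (X - t 0) ∘ Equiv.swap 0 (Fin.last (m+1))) i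
              = rows (Fin.snoc t Y) (X - t 0) i from by
            rw [Function.comp_apply, Equiv.swap_apply_of_ne_of_ne hi0 hil]]
          obtain ⟨j, hj⟩ := Fin.exists_succ_eq.mpr hi0
          subst hj
          have hjl : Fin.succ j ≠ Fin.last (m+1) := hil
          obtain ⟨k, hk⟩ := Fin.exists_castSucc_eq.mpr hjl
          rw [hrow, hrow, ← hk, Fin.snoc_castSucc, Fin.snoc_castSucc]
    have hb : F (Fin.snoc t X) Y = Matrix.det (Matrix.of (rows (Fin.snoc t X) (Y - t 0))) := by
      unfold F
      rw [h0 X]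
    have hb' : F (Fin.snoc t Y) X = Matrix.det (Matrix.of (rows (Fin.snoc t Y) (X - t 0))) := by
      unfold F
      rw [h0 Y]
    rw [hb, hb', hswap]
    have hne : (0 : Fin (m+2)) ≠ Fin.last (m+1) := by
      simp [Fin.ext_iff]
    exact Matrix.detRowAlternating.map_swap
      (v := rows (Fin.snoc t Y) (X - t 0)) hne


lemma sign_helper_even (x y z : ℝ) (hx : x ≠ 0) (hy : y ≠ 0) (hz : z ≠ 0) :
    ((if x * y < 0 then 1 else 0) + (if y * z < 0 then 1 else 0)
      + (if x * z < 0 then 1 else 0) : ZMod 2) = 0 := by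
  rcases hx.lt_or_gt with hx | hx <;> rcases hy.lt_or_gt with hy | hy <;>
    rcases hz.lt_or_gt with hz | hz <;>
    simp [mul_neg_iff, hx, hy, hz, hx.not_gt, hy.not_gt, hz.not_gt] <;> decide

lemma sign_helper_odd (x y z : ℝ) (hx : x ≠ 0) (hy : y ≠ 0) (hz : z ≠ 0) :
    ((if 0 < x * y then 1 else 0) + (if 0 < y * z then 1 else 0)
      + (if 0 < x * z then 1 else 0) : ZMod 2) = 1 := by
  rcases hx.lt_or_gt with hx | hx <;> rcases hy.lt_or_gt with hy | hy <;>
    rcases hz.lt_or_gt with hz | hz <;>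
    simp [mul_pos_iff, hx, hy, hz, hx.not_gt, hy.not_gt, hz.not_gt] <;> decide


lemma range_snoc {k : ℕ} {α : Type*} (t : Fin k → α) (c : α) :
    Set.range (Fin.snoc t c : Fin (k+1) → α) = insert c (Set.range t) := by
  ext y
  constructor
  · rintro ⟨i, rfl⟩
    refine Fin.lastCases ?_ (fun j => ?_) i
    · rw [Fin.snoc_last]
      exact Set.mem_insert _ _
    · rw [Fin.snoc_castSucc]
      exact Set.mem_insert_of_mem _ ⟨j, rfl⟩
  · rintro (rfl | ⟨j, rfl⟩)
    · exact ⟨Fin.last k, Fin.snoc_last _ _⟩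
    · exact ⟨j.castSucc, Fin.snoc_castSucc _ _ _⟩

lemma snoc_injective {k : ℕ} {α : Type*} {t : Fin k → α} (ht : Function.Injective t)
    {c : α} (hc : c ∉ Set.range t) :
    Function.Injective (Fin.snoc t c : Fin (k+1) → α) := by
  intro a b
  refine Fin.lastCases ?_ (fun i => ?_) a <;> refine Fin.lastCases ?_ (fun j => ?_) b
  all_goals intro h
  · rfl
  · rw [Fin.snoc_last, Fin.snoc_castSucc] at h
    exact absurd ⟨j, h.symm⟩ hc
  · rw [Fin.snoc_last, Fin.snoc_castSucc] at h
    exact absurd ⟨i, h⟩ hc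
  · rw [Fin.snoc_castSucc, Fin.snoc_castSucc] at h
    rw [ht h]

lemma cons_family_injective {α : Type*} {p : Fin (n+1) → α} (hp : Function.Injective p)
    {A : α} (hA : A ∉ Set.range p) :
    Function.Injective (Fin.cons (p 0) (Fin.cons A (fun i : Fin n => p i.succ))
      : Fin (n+2) → α) := by
  have htail : Function.Injective (fun i : Fin n => p i.succ) :=
    fun i j hij => Fin.succ_injective _ (hp hij)
  have hAt : A ∉ Set.range (fun i : Fin n => p i.succ) := by
    rintro ⟨j, rfl⟩
    exact hA ⟨j.succ, rfl⟩
  refine Fin.cons_injective_of_injective ?_ (Fin.cons_injective_of_injective hAt htail)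
  rw [Fin.range_cons]
  rintro (rfl | ⟨j, hj⟩)
  · exact hA ⟨0, rfl⟩
  · exact Fin.succ_ne_zero j (hp hj)


lemma exists_enum {d : ℕ} (S : Finset (Fin d → ℝ)) {k : ℕ} (h : S.card = k) :
    ∃ p : Fin k → (Fin d → ℝ), Function.Injective p ∧ Set.range p = ↑S ∧ ∀ i, p i ∈ S := by
  subst h
  set e := S.equivFin
  refine ⟨fun i => (e.symm i : Fin d → ℝ), ?_, ?_, fun i => (e.symm i).2⟩
  · exact fun i j hij => e.symm.injective (Subtype.ext hij)
  · ext y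
    constructor
    · rintro ⟨i, rfl⟩
      exact (e.symm i).2
    · intro hy
      exact ⟨e ⟨y, hy⟩, by simp⟩

lemma F_ne_zero {p : Fin (n+1) → (Fin (n+1) → ℝ)} {A : Fin (n+1) → ℝ}
    (hind : AffineIndependent ℝ
      (Fin.cons (p 0) (Fin.cons A (fun i : Fin n => p i.succ)) : Fin (n+2) → (Fin (n+1) → ℝ))) :
    F p A ≠ 0 := by
  intro h0
  exact (det_eq_zero_iff_rows _).mp h0 ((rows_indep_iff p A).mpr hind)

lemma F_ne_zero_generic {P : Finset (Fin (n+1) → ℝ)} (hgen : Generic P)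
    {p : Fin (n+1) → (Fin (n+1) → ℝ)} (hpinj : Function.Injective p)
    {Q : Finset (Fin (n+1) → ℝ)} (hQ : Q ⊆ P) (hQcard : Q.card ≤ n+2)
    {A : Fin (n+1) → ℝ} (hAQ : A ∈ Q) (hpQ : ∀ i, p i ∈ Q) (hA : A ∉ Set.range p) :
    F p A ≠ 0 := by
  refine F_ne_zero (generic_indep hgen _ (cons_family_injective hpinj hA) Q hQ hQcard ?_)
  intro i
  refine Fin.cases ?_ (fun j => ?_) i
  · exact hpQ 0
  · refine Fin.cases ?_ (fun k => ?_) j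
    · exact hAQ
    · exact hpQ k.succ

lemma even_part {P : Finset (Fin (n+1) → ℝ)} (hgen : Generic P)
    {S : Finset (Fin (n+1) → ℝ)} (hSP : S ⊆ P) (hScard : S.card = n+1)
    {A B C : Fin (n+1) → ℝ} (hA : A ∈ P) (hB : B ∈ P) (hC : C ∈ P)
    (hAS : A ∉ S) (hBS : B ∉ S) (hCS : C ∉ S) :
    ((if Separates S A B then 1 else 0) + (if Separates S B C then 1 else 0)
      + (if Separates S A C then 1 else 0) : ZMod 2) = 0 := by
  obtain ⟨p, hpinj, hprange, hpm⟩ := exists_enum S hScard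
  have hp : AffineIndependent ℝ p := generic_indep hgen p hpinj S hSP (by omega) hpm
  have hins : ∀ {X : Fin (n+1) → ℝ}, X ∈ P → X ∉ S → F p X ≠ 0 := by
    intro X hXP hXS
    refine F_ne_zero_generic hgen hpinj (Q := insert X S)
      (Finset.insert_subset hXP hSP)
      (le_trans (Finset.card_insert_le _ _) (by omega))
      (Finset.mem_insert_self _ _) (fun i => Finset.mem_insert_of_mem (hpm i)) ?_
    rw [hprange]
    simpa using hXS
  rw [if_congr (separates_iff hp hprange.symm A B) rfl rfl,
    if_congr (separates_iff hp hprange.symm B C) rfl rfl,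
    if_congr (separates_iff hp hprange.symm A C) rfl rfl]
  exact sign_helper_even _ _ _ (hins hA hAS) (hins hB hBS) (hins hC hCS)


lemma odd_part {P : Finset (Fin (n+1) → ℝ)} (hgen : Generic P)
    {T : Finset (Fin (n+1) → ℝ)} (hTP : T ⊆ P) (hTcard : T.card = n)
    {A B C : Fin (n+1) → ℝ} (hA : A ∈ P) (hB : B ∈ P) (hC : C ∈ P)
    (hAT : A ∉ T) (hBT : B ∉ T) (hCT : C ∉ T)
    (hAB : A ≠ B) (hBC : B ≠ C) (hAC : A ≠ C) :
    ((if Separates (insert C T) A B then 1 else 0)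
      + (if Separates (insert A T) B C then 1 else 0)
      + (if Separates (insert B T) A C then 1 else 0) : ZMod 2) = 1 := by
  obtain ⟨t, htinj, htrange, htm⟩ := exists_enum T hTcard
  have hnr : ∀ {X : Fin (n+1) → ℝ}, X ∉ T → X ∉ Set.range t := by
    intro X hX
    rw [htrange]
    simpa using hX
  have hsnocinj : ∀ {X : Fin (n+1) → ℝ}, X ∉ T →
      Function.Injective (Fin.snoc t X : Fin (n+1) → (Fin (n+1) → ℝ)) :=
    fun hX => snoc_injective htinj (hnr hX)
  have hrange : ∀ X : Fin (n+1) → ℝ,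
      Set.range (Fin.snoc t X : Fin (n+1) → (Fin (n+1) → ℝ)) = ↑(insert X T) := by
    intro X
    rw [range_snoc, htrange, Finset.coe_insert]
  have hmem : ∀ X : Fin (n+1) → ℝ, ∀ i, (Fin.snoc t X : Fin (n+1) → (Fin (n+1) → ℝ)) i
      ∈ insert X T := by
    intro X i
    refine Fin.lastCases ?_ (fun j => ?_) i
    · rw [Fin.snoc_last]; exact Finset.mem_insert_self _ _
    · rw [Fin.snoc_castSucc]; exact Finset.mem_insert_of_mem (htm j)
  have haff : ∀ {X : Fin (n+1) → ℝ}, X ∈ P → X ∉ T →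
      AffineIndependent ℝ (Fin.snoc t X : Fin (n+1) → (Fin (n+1) → ℝ)) := by
    intro X hXP hXT
    exact generic_indep hgen _ (hsnocinj hXT) (insert X T)
      (Finset.insert_subset hXP hTP)
      (le_trans (Finset.card_insert_le _ _) (by omega)) (hmem X)
  have hne : ∀ {X Y : Fin (n+1) → ℝ}, X ∈ P → X ∉ T → Y ∈ P → Y ∉ T → Y ≠ X →
      F (Fin.snoc t X) Y ≠ 0 := by
    intro X Y hXP hXT hYP hYT hYX
    refine F_ne_zero_generic hgen (hsnocinj hXT) (Q := insert Y (insert X T))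
      (Finset.insert_subset hYP (Finset.insert_subset hXP hTP))
      (le_trans (Finset.card_insert_le _ _)
        (by have := Finset.card_insert_le X T; omega))
      (Finset.mem_insert_self _ _)
      (fun i => Finset.mem_insert_of_mem (hmem X i)) ?_
    rw [hrange X]
    simp only [Finset.coe_insert, Set.mem_insert_iff, Finset.mem_coe]
    push_neg
    exact ⟨hYX, hYT⟩
  have hx : F (Fin.snoc t B) C ≠ 0 := hne hB hBT hC hCT hBC.symm
  have hy : F (Fin.snoc t C) A ≠ 0 := hne hC hCT hA hAT hAC
  have hz : F (Fin.snoc t A) B ≠ 0 := hne hA hAT hB hBT hAB.symm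
  have h1 : Separates (insert C T) A B ↔ 0 < F (Fin.snoc t B) C * F (Fin.snoc t C) A :=
    (separates_iff (haff hC hCT) (hrange C).symm A B).trans (by
      rw [F_snoc_antisymm t C B, mul_neg, neg_lt_zero,
        mul_comm (F (Fin.snoc t C) A) (F (Fin.snoc t B) C)])
  have h2 : Separates (insert A T) B C ↔ 0 < F (Fin.snoc t C) A * F (Fin.snoc t A) B :=
    (separates_iff (haff hA hAT) (hrange A).symm B C).trans (by
      rw [F_snoc_antisymm t A C, mul_neg, neg_lt_zero,
        mul_comm (F (Fin.snoc t A) B) (F (Fin.snoc t C) A)])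
  have h3 : Separates (insert B T) A C ↔ 0 < F (Fin.snoc t B) C * F (Fin.snoc t A) B :=
    (separates_iff (haff hB hBT) (hrange B).symm A C).trans (by
      rw [F_snoc_antisymm t B A, neg_mul, neg_lt_zero,
        mul_comm (F (Fin.snoc t A) B) (F (Fin.snoc t B) C)])
  rw [if_congr h1 rfl rfl, if_congr h2 rfl rfl, if_congr h3 rfl rfl]
  exact sign_helper_odd _ _ _ hx hy hz


lemma split_sum {α : Type*} [DecidableEq α] (U : Finset α) (Z : α) (hZ : Z ∈ U) (k : ℕ)
    (f : Finset α → ZMod 2) :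
    ∑ S ∈ U.powersetCard (k+1), f S
      = ∑ S ∈ (U.erase Z).powersetCard (k+1), f S
        + ∑ T ∈ (U.erase Z).powersetCard k, f (insert Z T) := by
  rw [← Finset.sum_filter_add_sum_filter_not (U.powersetCard (k+1)) (fun S => Z ∈ S)]
  rw [add_comm]
  congr 1
  · apply Finset.sum_congr
    · ext S
      simp only [Finset.mem_filter, Finset.mem_powersetCard, Finset.subset_erase]
      tauto
    · intro _ _; rfl
  · refine Finset.sum_nbij' (fun S => S.erase Z) (fun T => insert Z T) ?_ ?_ ?_ ?_ ?_
    · intro S hS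
      simp only [Finset.mem_filter, Finset.mem_powersetCard] at hS
      obtain ⟨⟨hSU, hScard⟩, hZS⟩ := hS
      simp only [Finset.mem_powersetCard]
      constructor
      · exact Finset.erase_subset_erase Z hSU
      · rw [Finset.card_erase_of_mem hZS, hScard]
        omega
    · intro T hT
      simp only [Finset.mem_powersetCard, Finset.subset_erase] at hT
      obtain ⟨⟨hTU, hZT⟩, hTcard⟩ := hT
      simp only [Finset.mem_filter, Finset.mem_powersetCard]
      refine ⟨⟨Finset.insert_subset hZ hTU, ?_⟩, Finset.mem_insert_self _ _⟩
      rw [Finset.card_insert_of_notMem hZT, hTcard]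
    · intro S hS
      simp only [Finset.mem_filter] at hS
      exact Finset.insert_erase hS.2
    · intro T hT
      simp only [Finset.mem_powersetCard, Finset.subset_erase] at hT
      exact Finset.erase_insert hT.1.2
    · intro S hS
      simp only [Finset.mem_filter] at hS
      rw [Finset.insert_erase hS.2]

lemma core {P : Finset (Fin (n+1) → ℝ)} (hgen : Generic P)
    {A B C : Fin (n+1) → ℝ} (hA : A ∈ P) (hB : B ∈ P) (hC : C ∈ P)
    (hAB : A ≠ B) (hBC : B ≠ C) (hAC : A ≠ C) :
    (sepCount P A B : ZMod 2) + (sepCount P B C : ZMod 2) + (sepCount P A C : ZMod 2)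
      = (Nat.choose (P.card - 3) n : ZMod 2) := by
  classical
  set P3 : Finset (Fin (n+1) → ℝ) := P \ {A, B, C} with hP3
  have hset1 : (P \ {A, B}).erase C = P3 := by
    ext x
    simp only [hP3, Finset.mem_erase, Finset.mem_sdiff, Finset.mem_insert,
      Finset.mem_singleton]
    tauto
  have hset2 : (P \ {B, C}).erase A = P3 := by
    ext x
    simp only [hP3, Finset.mem_erase, Finset.mem_sdiff, Finset.mem_insert,
      Finset.mem_singleton]
    tauto
  have hset3 : (P \ {A, C}).erase B = P3 := by
    ext x
    simp only [hP3, Finset.mem_erase, Finset.mem_sdiff, Finset.mem_insert,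
      Finset.mem_singleton]
    tauto
  have hcast : ∀ (X Y : Fin (n+1) → ℝ), (sepCount P X Y : ZMod 2)
      = ∑ S ∈ (P \ {X, Y}).powersetCard (n+1), (if Separates S X Y then 1 else 0 : ZMod 2) := by
    intro X Y
    unfold sepCount
    rw [Finset.natCast_card_filter]
  have hmem2 : ∀ {X Y Z : Fin (n+1) → ℝ}, Z ∈ P → Z ≠ X → Z ≠ Y → Z ∈ P \ {X, Y} := by
    intro X Y Z hZ h1 h2
    simp [Finset.mem_sdiff, h1, h2, hZ]
  have e1 := (hcast A B).trans
    (split_sum (P \ {A, B}) C (hmem2 hC (Ne.symm hAC) (Ne.symm hBC)) n _)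
  have e2 := (hcast B C).trans
    (split_sum (P \ {B, C}) A (hmem2 hA hAB hAC) n _)
  have e3 := (hcast A C).trans
    (split_sum (P \ {A, C}) B (hmem2 hB (Ne.symm hAB) hBC) n _)
  rw [hset1] at e1
  rw [hset2] at e2
  rw [hset3] at e3
  have hSfacts : ∀ S ∈ P3.powersetCard (n+1), S ⊆ P ∧ S.card = n+1
      ∧ A ∉ S ∧ B ∉ S ∧ C ∉ S := by
    intro S hS
    rw [Finset.mem_powersetCard] at hS
    obtain ⟨hSP3, hScard⟩ := hS
    have hsub : S ⊆ P := hSP3.trans (Finset.sdiff_subset)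
    refine ⟨hsub, hScard, ?_, ?_, ?_⟩ <;> intro hmem <;>
      have := hSP3 hmem <;> simp [hP3] at this
  have hTfacts : ∀ T ∈ P3.powersetCard n, T ⊆ P ∧ T.card = n
      ∧ A ∉ T ∧ B ∉ T ∧ C ∉ T := by
    intro T hT
    rw [Finset.mem_powersetCard] at hT
    obtain ⟨hTP3, hTcard⟩ := hT
    have hsub : T ⊆ P := hTP3.trans (Finset.sdiff_subset)
    refine ⟨hsub, hTcard, ?_, ?_, ?_⟩ <;> intro hmem <;>
      have := hTP3 hmem <;> simp [hP3] at this
  rw [e1, e2, e3]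
  have hre : ∀ a b c d e f : ZMod 2, (a + b) + (c + d) + (e + f) = (a + c + e) + (b + d + f) := by
    intros; ring
  rw [hre]
  have hzero : (∑ S ∈ P3.powersetCard (n+1), (if Separates S A B then 1 else 0 : ZMod 2))
      + (∑ S ∈ P3.powersetCard (n+1), (if Separates S B C then 1 else 0 : ZMod 2))
      + (∑ S ∈ P3.powersetCard (n+1), (if Separates S A C then 1 else 0 : ZMod 2)) = 0 := by
    rw [← Finset.sum_add_distrib, ← Finset.sum_add_distrib]
    rw [Finset.sum_congr rfl (fun S hS => ?_)]
    · exact Finset.sum_const_zero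
    · obtain ⟨h1, h2, h3, h4, h5⟩ := hSfacts S hS
      exact even_part hgen h1 h2 hA hB hC h3 h4 h5
  have hone : (∑ T ∈ P3.powersetCard n, (if Separates (insert C T) A B then 1 else 0 : ZMod 2))
      + (∑ T ∈ P3.powersetCard n, (if Separates (insert A T) B C then 1 else 0 : ZMod 2))
      + (∑ T ∈ P3.powersetCard n, (if Separates (insert B T) A C then 1 else 0 : ZMod 2))
      = (Nat.choose (P.card - 3) n : ZMod 2) := by
    rw [← Finset.sum_add_distrib, ← Finset.sum_add_distrib]
    rw [Finset.sum_congr rfl (fun T hT => ?_)]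
    · rw [Finset.sum_const, nsmul_eq_mul, mul_one, Finset.card_powersetCard]
      congr 2
      rw [hP3, Finset.card_sdiff_of_subset]
      · congr 1
        rw [Finset.card_insert_of_notMem (by simp [hAB, hAC]),
          Finset.card_insert_of_notMem (by simp [hBC]), Finset.card_singleton]
      · intro x hx
        simp only [Finset.mem_insert, Finset.mem_singleton] at hx
        rcases hx with rfl | rfl | rfl
        · exact hA
        · exact hB
        · exact hC
    · obtain ⟨h1, h2, h3, h4, h5⟩ := hTfacts T hT
      exact odd_part hgen h1 h2 hA hB hC h3 h4 h5 hAB hBC hAC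
  rw [hzero, hone, zero_add]


lemma separates_comm {d : ℕ} {S : Finset (Fin d → ℝ)} {A B : Fin d → ℝ}
    (h : Separates S A B) : Separates S B A := by
  obtain ⟨h1, h2, h3⟩ := h
  refine ⟨h2, h1, fun hBA => ?_⟩
  have heq := connectedComponentIn_eq hBA
  have hAA : A ∈ connectedComponentIn
      ((affineSpan ℝ (S : Set (Fin d → ℝ)) : Set (Fin d → ℝ)))ᶜ A :=
    mem_connectedComponentIn h1
  rw [heq] at hAA
  exact h3 hAA

lemma sepCount_comm {d : ℕ} (P : Finset (Fin d → ℝ)) (A B : Fin d → ℝ) :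
    sepCount P A B = sepCount P B A := by
  unfold sepCount
  apply congrArg Finset.card
  apply Finset.ext
  intro S
  simp only [Finset.mem_filter, Finset.mem_powersetCard]
  constructor
  · rintro ⟨⟨hsub, hcard⟩, hsep⟩
    rw [Finset.pair_comm A B] at hsub
    exact ⟨⟨hsub, hcard⟩, separates_comm hsep⟩
  · rintro ⟨⟨hsub, hcard⟩, hsep⟩
    rw [Finset.pair_comm B A] at hsub
    exact ⟨⟨hsub, hcard⟩, separates_comm hsep⟩

end Orchard

/-- Orchard Theorem: for a generic configuration `P` of points in `ℝ^d`,
the Orchard relation is an equivalence relation on `P` with at most two classes. -/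
theorem orchard_theorem {d : ℕ} (P : Finset (Fin d → ℝ)) (hgen : Generic P) :
    (∀ A ∈ P, OrchardRel P A A) ∧
    (∀ A ∈ P, ∀ B ∈ P, OrchardRel P A B → OrchardRel P B A) ∧
    (∀ A ∈ P, ∀ B ∈ P, ∀ C ∈ P,
      OrchardRel P A B → OrchardRel P B C → OrchardRel P A C) ∧
    (∀ A ∈ P, ∀ B ∈ P, ∀ C ∈ P,
      OrchardRel P A B ∨ OrchardRel P B C ∨ OrchardRel P A C) := by
  cases d with
  | zero =>
    have heq : ∀ A B : Fin 0 → ℝ, A = B := fun A B => funext (fun i => i.elim0)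
    exact ⟨fun A _ => Or.inl rfl, fun A _ B _ _ => Or.inl (heq B A),
      fun A _ B _ C _ _ _ => Or.inl (heq A C),
      fun A _ B _ C _ => Or.inl (Or.inl (heq A B))⟩
  | succ n =>
    have hrel : ∀ A B : Fin (n+1) → ℝ, OrchardRel P A B ↔
        (A = B ∨ (sepCount P A B : ZMod 2) = (Nat.choose (P.card - 3) n : ZMod 2)) := by
      intro A B
      unfold OrchardRel
      refine or_congr Iff.rfl ?_
      have : n + 1 - 1 = n := rfl
      rw [this]
      exact ⟨fun h => (ZMod.natCast_eq_natCast_iff _ _ _).mpr h,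
        fun h => (ZMod.natCast_eq_natCast_iff _ _ _).mp h⟩
    have hZtrans : ∀ u v w c : ZMod 2, u + v + w = c → u = c → v = c → w = c := by decide
    have hZtot : ∀ u v w c : ZMod 2, u + v + w = c → u = c ∨ v = c ∨ w = c := by decide
    refine ⟨fun A _ => Or.inl rfl, ?_, ?_, ?_⟩
    · intro A _ B _ h
      rcases (hrel A B).mp h with rfl | h
      · exact Or.inl rfl
      · refine (hrel B A).mpr (Or.inr ?_)
        rw [Orchard.sepCount_comm P B A]
        exact h
    · intro A hA B hB C hC h1 h2
      by_cases hab : A = B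
      · subst hab; exact h2
      · by_cases hbc : B = C
        · subst hbc; exact h1
        · by_cases hac : A = C
          · exact Or.inl hac
          · have h1' := ((hrel A B).mp h1).resolve_left hab
            have h2' := ((hrel B C).mp h2).resolve_left hbc
            have hcore := Orchard.core hgen hA hB hC hab hbc hac
            exact (hrel A C).mpr (Or.inr (hZtrans _ _ _ _ hcore h1' h2'))
    · intro A hA B hB C hC
      by_cases hab : A = B
      · exact Or.inl (Or.inl hab)
      · by_cases hbc : B = C
        · exact Or.inr (Or.inl (Or.inl hbc))
        · by_cases hac : A = C
          · exact Or.inr (Or.inr (Or.inl hac))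
          · have hcore := Orchard.core hgen hA hB hC hab hbc hac
            rcases hZtot _ _ _ _ hcore with h | h | h
            · exact Or.inl ((hrel A B).mpr (Or.inr h))
            · exact Or.inr (Or.inl ((hrel B C).mpr (Or.inr h)))
            · exact Or.inr (Or.inr ((hrel A C).mpr (Or.inr h)))
end

section
/- Let P be a generic configuration of n points in R^d and suppose P_i, P_j, P_k are three distinct points such that n(P_i,P_j) ≡ binom(n-3,d-1) (mod 2) and n(P_j,P_k) ≡ binom(n-3,d-1) (mod 2). Then n(P_i,P_k) ≡ binom(n-3,d-1) (mod 2). (Transitivity of the Orchard relation.) -/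
open Finset

variable {d : ℕ}

/-- homogeneous lift of a point -/
def liftPt {d : ℕ} (x : Fin d → ℝ) : Fin (d+1) → ℝ := Fin.snoc x 1

/-- matrix whose rows are lifts of the `d` points of `v` followed by lift of `x` -/
def fmat {d : ℕ} (v : Fin d → (Fin d → ℝ)) (x : Fin d → ℝ) :
    Matrix (Fin (d+1)) (Fin (d+1)) ℝ :=
  Matrix.of (Fin.snoc (fun i => liftPt (v i)) (liftPt x))

noncomputable def fdet {d : ℕ} (v : Fin d → (Fin d → ℝ)) (x : Fin d → ℝ) : ℝ := (fmat v x).det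

lemma fmat_row_castSucc (v : Fin d → (Fin d → ℝ)) (x : Fin d → ℝ) (i : Fin d) :
    fmat v x i.castSucc = liftPt (v i) := by
  funext j; simp [fmat, Matrix.of_apply, Fin.snoc_castSucc]

lemma fmat_row_last (v : Fin d → (Fin d → ℝ)) (x : Fin d → ℝ) :
    fmat v x (Fin.last d) = liftPt x := by
  funext j; simp [fmat, Matrix.of_apply, Fin.snoc_last]

lemma fmat_row (v : Fin d → (Fin d → ℝ)) (x : Fin d → ℝ) (i : Fin (d+1)) :
    fmat v x i = liftPt ((Fin.snoc v x : Fin (d+1) → Fin d → ℝ) i) := by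
  rcases Fin.eq_castSucc_or_eq_last i with ⟨j, rfl⟩ | rfl
  · simp [fmat_row_castSucc, Fin.snoc_castSucc]
  · simp [fmat_row_last, Fin.snoc_last]

lemma fmat_eq_updateRow (v : Fin d → (Fin d → ℝ)) (x y : Fin d → ℝ) :
    fmat v y = (fmat v x).updateRow (Fin.last d) (liftPt y) := by
  ext i j
  by_cases h : i = Fin.last d
  · subst h; simp [fmat_row_last, Matrix.updateRow_self]
  · rw [Matrix.updateRow_ne h]
    rcases Fin.eq_castSucc_or_eq_last i with ⟨k, rfl⟩ | rfl
    · simp [fmat_row_castSucc]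
    · exact absurd rfl h

lemma liftPt_combo {x y z : Fin d → ℝ} {a b c : ℝ} (h : a + b + c = 1) :
    liftPt (a • x + b • y + c • z) = a • liftPt x + (b • liftPt y + c • liftPt z) := by
  funext j
  rcases Fin.eq_castSucc_or_eq_last j with ⟨k, rfl⟩ | rfl
  · simp [liftPt, Fin.snoc_castSucc]; ring
  · simp [liftPt, Fin.snoc_last]; linarith

lemma fdet_affine (v : Fin d → (Fin d → ℝ)) {x y z : Fin d → ℝ} {a b c : ℝ}
    (h : a + b + c = 1) :
    fdet v (a • x + b • y + c • z) = a * fdet v x + b * fdet v y + c * fdet v z := by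
  have hx : ∀ w : Fin d → ℝ, fdet v w = ((fmat v x).updateRow (Fin.last d) (liftPt w)).det := by
    intro w; rw [fdet, fmat_eq_updateRow v x w]
  rw [hx, liftPt_combo h, Matrix.det_updateRow_add, Matrix.det_updateRow_add,
    Matrix.det_updateRow_smul, Matrix.det_updateRow_smul, Matrix.det_updateRow_smul,
    ← hx, ← hx, ← hx]
  ring

lemma fdet_affine2 (v : Fin d → (Fin d → ℝ)) {x y : Fin d → ℝ} {a b : ℝ}
    (h : a + b = 1) :
    fdet v (a • x + b • y) = a * fdet v x + b * fdet v y := by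
  have h0 : a + b + 0 = 1 := by linarith
  have := fdet_affine v (x := x) (y := y) (z := 0) h0
  simpa using this

lemma fdet_continuous (v : Fin d → (Fin d → ℝ)) : Continuous (fdet v) := by
  apply Continuous.matrix_det
  apply continuous_matrix
  intro i j
  rcases Fin.eq_castSucc_or_eq_last i with ⟨k, rfl⟩ | rfl
  · simpa [fmat_row_castSucc] using continuous_const
  · simp only [fmat_row_last, liftPt]
    rcases Fin.eq_castSucc_or_eq_last j with ⟨k, rfl⟩ | rfl
    · simpa [Fin.snoc_castSucc] using continuous_apply k
    · simpa [Fin.snoc_last] using continuous_const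

variable {d : ℕ}

lemma vecMul_fmat {v : Fin d → (Fin d → ℝ)} {x : Fin d → ℝ} {cf : Fin (d+1) → ℝ}
    (h : Matrix.vecMul cf (fmat v x) = 0) :
    (∑ i, cf i = 0) ∧ (∑ i, cf i • (Fin.snoc v x : Fin (d+1) → Fin d → ℝ) i) = 0 := by
  set w : Fin (d+1) → Fin d → ℝ := Fin.snoc v x with hw
  have hj : ∀ j, ∑ i, cf i * liftPt (w i) j = 0 := by
    intro j
    have := congrFun h j
    simpa [Matrix.vecMul, dotProduct, fmat_row] using this
  constructor
  · have := hj (Fin.last d)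
    simpa [liftPt, Fin.snoc_last] using this
  · funext k
    have := hj (Fin.castSucc k)
    simpa [liftPt, Fin.snoc_castSucc] using this

lemma fdet_ne_zero_of_affineIndependent {v : Fin d → (Fin d → ℝ)} {x : Fin d → ℝ}
    (h : AffineIndependent ℝ (Fin.snoc v x : Fin (d+1) → Fin d → ℝ)) : fdet v x ≠ 0 := by
  intro h0
  obtain ⟨cf, hcf, hmul⟩ := Matrix.exists_vecMul_eq_zero_iff.mpr h0
  obtain ⟨hsum, hcomb⟩ := vecMul_fmat hmul
  have := affineIndependent_iff.mp h Finset.univ cf (by simpa using hsum) (by simpa using hcomb)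
  exact hcf (funext fun i => this i (Finset.mem_univ i))

/-- The zero set of `fdet v` is an affine subspace. -/
noncomputable def fdetZero (v : Fin d → (Fin d → ℝ)) : AffineSubspace ℝ (Fin d → ℝ) where
  carrier := {x | fdet v x = 0}
  smul_vsub_vadd_mem' := by
    intro c p1 p2 p3 h1 h2 h3
    have hc : c + -c + 1 = 1 := by ring
    have : c • (p1 -ᵥ p2) +ᵥ p3 = c • p1 + (-c) • p2 + (1:ℝ) • p3 := by
      simp [vsub_eq_sub, vadd_eq_add, smul_sub]; module
    simp only [Set.mem_setOf_eq] at h1 h2 h3 ⊢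
    rw [this, fdet_affine v hc, h1, h2, h3]
    ring

lemma affineSpan_subset_fdetZero (v : Fin d → (Fin d → ℝ)) :
    (affineSpan ℝ (Set.range v) : Set (Fin d → ℝ)) ⊆ {x | fdet v x = 0} := by
  have : affineSpan ℝ (Set.range v) ≤ fdetZero v := by
    apply affineSpan_le.mpr
    rintro _ ⟨i, rfl⟩
    show fdet v (v i) = 0
    apply Matrix.det_zero_of_row_eq (i := Fin.castSucc i) (j := Fin.last d)
    · exact (Fin.castSucc_lt_last i).ne
    · rw [fmat_row_castSucc, fmat_row_last]
  exact this

lemma fdetZero_subset_affineSpan {v : Fin d → (Fin d → ℝ)} (hv : AffineIndependent ℝ v) :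
    {x | fdet v x = 0} ⊆ (affineSpan ℝ (Set.range v) : Set (Fin d → ℝ)) := by
  intro x hx
  obtain ⟨cf, hcf, hmul⟩ := Matrix.exists_vecMul_eq_zero_iff.mpr hx
  obtain ⟨hsum, hcomb⟩ := vecMul_fmat hmul
  rw [Fin.sum_univ_castSucc] at hsum hcomb
  simp only [Fin.snoc_castSucc, Fin.snoc_last] at hcomb
  by_cases hcl : cf (Fin.last d) = 0
  · exfalso
    rw [hcl] at hsum hcomb
    simp only [zero_smul, add_zero] at hsum hcomb
    have hz := affineIndependent_iff.mp hv Finset.univ (fun i => cf (Fin.castSucc i))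
      (by simpa using hsum) (by simpa using hcomb)
    apply hcf
    funext i
    rcases Fin.eq_castSucc_or_eq_last i with ⟨k, rfl⟩ | rfl
    · exact hz k (Finset.mem_univ k)
    · exact hcl
  · set cl := cf (Fin.last d) with hcl_def
    set ww : Fin d → ℝ := fun i => -(cf (Fin.castSucc i)) / cl with hww_def
    have hww : ∑ i, ww i = 1 := by
      rw [hww_def]
      rw [← Finset.sum_div]
      rw [div_eq_one_iff_eq hcl]
      rw [Finset.sum_neg_distrib]
      linarith
    have h2 : ∑ i, (-(cf (Fin.castSucc i))) • v i = cl • x := by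
      rw [Finset.sum_congr rfl (fun i _ => neg_smul (cf (Fin.castSucc i)) (v i))]
      rw [Finset.sum_neg_distrib]
      exact neg_eq_of_add_eq_zero_right hcomb
    have h3 : ∑ i, ww i • v i = x := by
      have hstep : ∀ i : Fin d, ww i • v i = cl⁻¹ • ((-(cf (Fin.castSucc i))) • v i) := by
        intro i
        rw [smul_smul, hww_def]
        congr 1
        field_simp
      rw [Finset.sum_congr rfl (fun i _ => hstep i), ← Finset.smul_sum, h2, smul_smul,
        inv_mul_cancel₀ hcl, one_smul]
    have := affineCombination_mem_affineSpan hww v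
    rwa [Finset.affineCombination_eq_linear_combination _ _ _ hww, h3] at this

variable {d : ℕ}

lemma convex_fdet_pos (v : Fin d → (Fin d → ℝ)) : Convex ℝ {x | 0 < fdet v x} := by
  intro x hx y hy a b ha hb hab
  simp only [Set.mem_setOf_eq] at hx hy ⊢
  rw [fdet_affine2 v hab]
  rcases eq_or_lt_of_le ha with rfl | ha'
  · rw [zero_add] at hab; rw [hab]; simpa using hy
  · have : 0 ≤ b * fdet v y := mul_nonneg hb hy.le
    nlinarith
lemma convex_fdet_neg (v : Fin d → (Fin d → ℝ)) : Convex ℝ {x | fdet v x < 0} := by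
  intro x hx y hy a b ha hb hab
  simp only [Set.mem_setOf_eq] at hx hy ⊢
  rw [fdet_affine2 v hab]
  rcases eq_or_lt_of_le ha with rfl | ha'
  · rw [zero_add] at hab; rw [hab]; simpa using hy
  · have : b * fdet v y ≤ 0 := mul_nonpos_of_nonneg_of_nonpos hb hy.le
    nlinarith

lemma connCompIn_eq_pos {v : Fin d → (Fin d → ℝ)} {B : Fin d → ℝ}
    (hB : 0 < fdet v B) :
    connectedComponentIn {x | fdet v x = 0}ᶜ B = {x | 0 < fdet v x} := by
  have hopen_pos : IsOpen {x | 0 < fdet v x} := isOpen_lt continuous_const (fdet_continuous v)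
  have hopen_neg : IsOpen {x | fdet v x < 0} := isOpen_lt (fdet_continuous v) continuous_const
  have hsub : {x | 0 < fdet v x} ⊆ {x | fdet v x = 0}ᶜ := fun x hx => by
    simp only [Set.mem_compl_iff, Set.mem_setOf_eq] at *; exact ne_of_gt hx
  apply le_antisymm
  · apply IsPreconnected.subset_left_of_subset_union hopen_pos hopen_neg
    · rw [Set.disjoint_left]; intro x h1 h2
      exact absurd h1 (by simp only [Set.mem_setOf_eq] at *; linarith)
    · intro x hx
      rcases lt_trichotomy (fdet v x) 0 with h | h | h
      · exact Or.inr h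
      · exact absurd h (connectedComponentIn_subset _ _ hx)
      · exact Or.inl h
    · exact ⟨B, mem_connectedComponentIn (ne_of_gt hB), hB⟩
    · exact isPreconnected_connectedComponentIn
  · exact ((convex_fdet_pos v).isPreconnected).subset_connectedComponentIn hB hsub
lemma connCompIn_eq_neg {v : Fin d → (Fin d → ℝ)} {B : Fin d → ℝ}
    (hB : fdet v B < 0) :
    connectedComponentIn {x | fdet v x = 0}ᶜ B = {x | fdet v x < 0} := by
  have hopen_pos : IsOpen {x | 0 < fdet v x} := isOpen_lt continuous_const (fdet_continuous v)
  have hopen_neg : IsOpen {x | fdet v x < 0} := isOpen_lt (fdet_continuous v) continuous_const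
  have hsub : {x | fdet v x < 0} ⊆ {x | fdet v x = 0}ᶜ := fun x hx => by
    simp only [Set.mem_compl_iff, Set.mem_setOf_eq] at *; exact ne_of_lt hx
  apply le_antisymm
  · apply IsPreconnected.subset_left_of_subset_union hopen_neg hopen_pos
    · rw [Set.disjoint_left]; intro x h1 h2
      exact absurd h1 (by simp only [Set.mem_setOf_eq] at *; linarith)
    · intro x hx
      rcases lt_trichotomy (fdet v x) 0 with h | h | h
      · exact Or.inl h
      · exact absurd h (connectedComponentIn_subset _ _ hx)
      · exact Or.inr h
    · exact ⟨B, mem_connectedComponentIn (ne_of_lt hB), hB⟩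
    · exact isPreconnected_connectedComponentIn
  · exact ((convex_fdet_neg v).isPreconnected).subset_connectedComponentIn hB hsub

lemma span_eq_fdetZeroSet {v : Fin d → (Fin d → ℝ)} {S : Finset (Fin d → ℝ)}
    (hv : AffineIndependent ℝ v) (hS : Set.range v = ↑S) :
    (affineSpan ℝ (S : Set (Fin d → ℝ)) : Set (Fin d → ℝ)) = {x | fdet v x = 0} := by
  rw [← hS]
  exact le_antisymm (affineSpan_subset_fdetZero v) (fdetZero_subset_affineSpan hv)

lemma separates_iff_fdet {v : Fin d → (Fin d → ℝ)} {S : Finset (Fin d → ℝ)}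
    {A B : Fin d → ℝ} (hv : AffineIndependent ℝ v) (hS : Set.range v = ↑S)
    (hA : fdet v A ≠ 0) (hB : fdet v B ≠ 0) :
    Separates S A B ↔ fdet v A * fdet v B < 0 := by
  rw [Separates, span_eq_fdetZeroSet hv hS]
  rcases hB.lt_or_gt with hb | hb
  · rw [connCompIn_eq_neg hb]
    constructor
    · rintro ⟨h1, -, h3⟩
      simp only [Set.mem_setOf_eq] at h3
      have ha : 0 < fdet v A := by rcases hA.lt_or_gt with h | h; exact absurd h h3; exact h
      exact mul_neg_of_pos_of_neg ha hb
    · intro hprod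
      have ha : 0 < fdet v A := by nlinarith [hA.lt_or_gt]; 
      exact ⟨by simpa using hA, by simpa using hB, by simp only [Set.mem_setOf_eq]; linarith⟩
  · rw [connCompIn_eq_pos hb]
    constructor
    · rintro ⟨h1, -, h3⟩
      simp only [Set.mem_setOf_eq] at h3
      have ha : fdet v A < 0 := by rcases hA.lt_or_gt with h | h; exact h; exact absurd h h3
      exact mul_neg_of_neg_of_pos ha hb
    · intro hprod
      have ha : fdet v A < 0 := by nlinarith [hA.lt_or_gt]
      exact ⟨by simpa using hA, by simpa using hB, by simp only [Set.mem_setOf_eq]; linarith⟩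

variable {d : ℕ}

lemma snoc_injective {n : ℕ} {α : Type*} {u : Fin n → α} {x : α}
    (hu : Function.Injective u) (hx : x ∉ Set.range u) :
    Function.Injective (Fin.snoc u x : Fin (n+1) → α) := by
  intro i j hij
  rcases Fin.eq_castSucc_or_eq_last i with ⟨i', rfl⟩ | rfl <;>
    rcases Fin.eq_castSucc_or_eq_last j with ⟨j', rfl⟩ | rfl
  · simp only [Fin.snoc_castSucc] at hij
    exact congrArg _ (hu hij)
  · simp only [Fin.snoc_castSucc, Fin.snoc_last] at hij
    exact absurd ⟨i', hij⟩ hx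
  · simp only [Fin.snoc_castSucc, Fin.snoc_last] at hij
    exact absurd ⟨j', hij.symm⟩ hx
  · rfl

lemma range_snoc {n : ℕ} {α : Type*} (u : Fin n → α) (x : α) :
    Set.range (Fin.snoc u x : Fin (n+1) → α) = insert x (Set.range u) := by
  ext y
  constructor
  · rintro ⟨i, rfl⟩
    rcases Fin.eq_castSucc_or_eq_last i with ⟨i', rfl⟩ | rfl
    · exact Or.inr ⟨i', by simp [Fin.snoc_castSucc]⟩
    · exact Or.inl (by simp [Fin.snoc_last])
  · rintro (rfl | ⟨i, rfl⟩)
    · exact ⟨Fin.last n, by simp [Fin.snoc_last]⟩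
    · exact ⟨i.castSucc, by simp [Fin.snoc_castSucc]⟩

/-- transfer genericity to an arbitrary injective family -/
lemma generic_affineIndependent {P : Finset (Fin d → ℝ)} (hgen : Generic P)
    {m : ℕ} {w : Fin m → (Fin d → ℝ)} (hw : Function.Injective w)
    (hmem : ∀ i, w i ∈ P) (hm : m ≤ d + 1) :
    AffineIndependent ℝ w := by
  classical
  set S : Finset (Fin d → ℝ) := Finset.univ.image w with hS
  have hSP : S ⊆ P := by
    intro x hx
    simp only [hS, Finset.mem_image] at hx
    obtain ⟨i, -, rfl⟩ := hx
    exact hmem i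
  have hcard : S.card ≤ d + 1 := by
    rw [hS, Finset.card_image_of_injective _ hw, Finset.card_univ, Fintype.card_fin]
    exact hm
  have hind := hgen S hSP hcard
  have he : ∀ i : Fin m, w i ∈ S := fun i => by
    simp only [hS, Finset.mem_image]; exact ⟨i, Finset.mem_univ i, rfl⟩
  let e : Fin m ↪ S := ⟨fun i => ⟨w i, he i⟩, fun i j h => hw (congrArg Subtype.val h)⟩
  have := hind.comp_embedding e
  convert this using 1
  rfl

/-- antisymmetry of `fdet` in the last two slots -/
lemma fdet_snoc_antisymm {e : ℕ} (u : Fin e → (Fin (e+1) → ℝ)) (x y : Fin (e+1) → ℝ) :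
    fdet (Fin.snoc u x : Fin (e+1) → Fin (e+1) → ℝ) y
      = - fdet (Fin.snoc u y : Fin (e+1) → Fin (e+1) → ℝ) x := by
  set a : Fin (e+2) := Fin.castSucc (Fin.last e)
  set b : Fin (e+2) := Fin.last (e+1)
  have hab : a ≠ b := (Fin.castSucc_lt_last (Fin.last e)).ne
  have hmat : fmat (Fin.snoc u x : Fin (e+1) → Fin (e+1) → ℝ) y
      = (fmat (Fin.snoc u y : Fin (e+1) → Fin (e+1) → ℝ) x).submatrix (Equiv.swap a b) id := by
    ext i j
    rcases Fin.eq_castSucc_or_eq_last i with ⟨k, rfl⟩ | rfl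
    · rcases Fin.eq_castSucc_or_eq_last k with ⟨k', rfl⟩ | rfl
      · have h1 : (Fin.castSucc (Fin.castSucc k')) ≠ a := by
          simp only [a, ne_eq, Fin.castSucc_inj]
          exact (Fin.castSucc_lt_last k').ne
        have h2 : (Fin.castSucc (Fin.castSucc k')) ≠ b := (Fin.castSucc_lt_last _).ne
        rw [Matrix.submatrix_apply, Equiv.swap_apply_of_ne_of_ne h1 h2, id]
        rw [fmat_row_castSucc, fmat_row_castSucc, Fin.snoc_castSucc, Fin.snoc_castSucc]
      · rw [Matrix.submatrix_apply, Equiv.swap_apply_left, id]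
        rw [fmat_row_castSucc, fmat_row_last, Fin.snoc_last]
    · rw [Matrix.submatrix_apply, Equiv.swap_apply_right, id]
      rw [fmat_row_last]
      show liftPt y j = fmat _ x (Fin.castSucc (Fin.last e)) j
      rw [fmat_row_castSucc, Fin.snoc_last]
  rw [fdet, hmat, Matrix.det_permute, Equiv.Perm.sign_swap hab]
  simp [fdet]

lemma pos_prod3 {x y z : ℝ} (h : 0 < x*y*z) :
    (0<x ∧ 0<y ∧ 0<z) ∨ (0<x ∧ y<0 ∧ z<0) ∨ (x<0 ∧ 0<y ∧ z<0) ∨ (x<0 ∧ y<0 ∧ 0<z) := by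
  rcases mul_pos_iff.mp h with ⟨hxy, hz⟩ | ⟨hxy, hz⟩
  · rcases mul_pos_iff.mp hxy with ⟨hx, hy⟩ | ⟨hx, hy⟩
    · exact Or.inl ⟨hx, hy, hz⟩
    · exact Or.inr (Or.inr (Or.inr ⟨hx, hy, hz⟩))
  · rcases mul_neg_iff.mp hxy with ⟨hx, hy⟩ | ⟨hx, hy⟩
    · exact Or.inr (Or.inl ⟨hx, hy, hz⟩)
    · exact Or.inr (Or.inr (Or.inl ⟨hx, hy, hz⟩))

lemma parityA (x y z : ℝ) (h : 0 < x*y*z) :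
    ((if x < 0 then 1 else 0) + (if y < 0 then 1 else 0) + (if z < 0 then 1 else 0)) % 2 = 0 := by
  rcases pos_prod3 h with ⟨h1,h2,h3⟩|⟨h1,h2,h3⟩|⟨h1,h2,h3⟩|⟨h1,h2,h3⟩ <;>
    norm_num [asymm h1, asymm h2, asymm h3, h1, h2, h3]

lemma parityB (x y z : ℝ) (h : 0 < x*y*z) :
    ((if 0 < x then 1 else 0) + (if 0 < y then 1 else 0) + (if 0 < z then 1 else 0)) % 2 = 1 := by
  rcases pos_prod3 h with ⟨h1,h2,h3⟩|⟨h1,h2,h3⟩|⟨h1,h2,h3⟩|⟨h1,h2,h3⟩ <;>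
    norm_num [asymm h1, asymm h2, asymm h3, h1, h2, h3]

variable {d : ℕ}

lemma count_split {X : Type*} [DecidableEq X] (Q : Finset X) {C : X} (hC : C ∉ Q) (e : ℕ)
    (p : Finset X → Prop) [DecidablePred p] :
    (((insert C Q).powersetCard (e+1)).filter p).card
      = ((Q.powersetCard (e+1)).filter p).card
        + ((Q.powersetCard e).filter (fun T => p (insert C T))).card := by
  rw [Finset.powersetCard_succ_insert hC, Finset.filter_union]
  rw [Finset.card_union_of_disjoint]
  · congr 1
    rw [Finset.filter_image]
    apply Finset.card_image_of_injOn
    intro T1 h1 T2 h2 heq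
    have hc1 : C ∉ T1 := fun hc => hC ((Finset.mem_powersetCard.mp (Finset.mem_filter.mp h1).1).1 hc)
    have hc2 : C ∉ T2 := fun hc => hC ((Finset.mem_powersetCard.mp (Finset.mem_filter.mp h2).1).1 hc)
    rw [← Finset.erase_insert hc1, ← Finset.erase_insert hc2, heq]
  · apply Finset.disjoint_filter_filter
    rw [Finset.disjoint_left]
    intro S hS hS'
    have h1 : S ⊆ Q := (Finset.mem_powersetCard.mp hS).1
    obtain ⟨T, hT, rfl⟩ := Finset.mem_image.mp hS'
    exact hC (h1 (Finset.mem_insert_self C T))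

/-- the enumeration of a finset of known cardinality -/
lemma exists_enum {X : Type*} (S : Finset X) {n : ℕ} (h : S.card = n) :
    ∃ v : Fin n → X, Function.Injective v ∧ Set.range v = ↑S := by
  classical
  let g : Fin n ≃ {x // x ∈ S} := (S.equivFin.trans (finCongr h)).symm
  refine ⟨fun i => (g i : X), Subtype.val_injective.comp g.injective, ?_⟩
  have : Set.range (fun i => (g i : X)) = Set.range (Subtype.val : {x // x ∈ S} → X) :=
    g.surjective.range_comp _
  rw [this, Subtype.range_coe]

lemma snoc_mem {X : Type*} {P : Finset X} {n : ℕ} {u : Fin n → X} {x : X}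
    (hu : ∀ i, u i ∈ P) (hx : x ∈ P) :
    ∀ i, (Fin.snoc u x : Fin (n+1) → X) i ∈ P := by
  intro i
  rcases Fin.eq_castSucc_or_eq_last i with ⟨k, rfl⟩ | rfl
  · rw [Fin.snoc_castSucc]; exact hu k
  · rw [Fin.snoc_last]; exact hx

lemma fdet_ne_zero_generic {P : Finset (Fin d → ℝ)} (hgen : Generic P)
    {v : Fin d → (Fin d → ℝ)} {x : Fin d → ℝ} (hv : Function.Injective v)
    (hmem : ∀ i, v i ∈ P) (hx : x ∈ P) (hxr : x ∉ Set.range v) :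
    fdet v x ≠ 0 :=
  fdet_ne_zero_of_affineIndependent
    (generic_affineIndependent hgen (snoc_injective hv hxr) (snoc_mem hmem hx) (le_refl (d+1)))

/-- transitivity of the Orchard relation. If `n(Pᵢ,Pⱼ)` and `n(Pⱼ,Pₖ)` are both
congruent to `binom (n-3) (d-1)` mod 2, then so is `n(Pᵢ,Pₖ)`. -/
theorem orchard_transitive {d : ℕ} (P : Finset (Fin d → ℝ)) (hgen : Generic P)
    (Pi Pj Pk : Fin d → ℝ) (hi : Pi ∈ P) (hj : Pj ∈ P) (hk : Pk ∈ P)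
    (hij : Pi ≠ Pj) (hjk : Pj ≠ Pk) (hik : Pi ≠ Pk)
    (h1 : sepCount P Pi Pj % 2 = Nat.choose (P.card - 3) (d - 1) % 2)
    (h2 : sepCount P Pj Pk % 2 = Nat.choose (P.card - 3) (d - 1) % 2) :
    sepCount P Pi Pk % 2 = Nat.choose (P.card - 3) (d - 1) % 2 := by

  classical
  rcases Nat.eq_zero_or_pos d with hd0 | hdpos
  · subst hd0
    exact absurd (funext fun i : Fin 0 => i.elim0) hij
  obtain ⟨e, rfl⟩ : ∃ e, d = e + 1 := ⟨d - 1, (Nat.succ_pred_eq_of_pos hdpos).symm⟩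
  set Q : Finset (Fin (e+1) → ℝ) := P \ {Pi, Pj, Pk} with hQdef
  have hQP : Q ⊆ P := Finset.sdiff_subset
  have hiQ : Pi ∉ Q := by simp [hQdef]
  have hjQ : Pj ∉ Q := by simp [hQdef]
  have hkQ : Pk ∉ Q := by simp [hQdef]
  have hins_k : P \ {Pi, Pj} = insert Pk Q := by
    ext t
    simp only [hQdef, Finset.mem_sdiff, Finset.mem_insert, Finset.mem_singleton]
    constructor
    · rintro ⟨htP, ht⟩
      by_cases htk : t = Pk
      · exact Or.inl htk
      · exact Or.inr ⟨htP, by tauto⟩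
    · rintro (rfl | ⟨htP, ht⟩)
      · exact ⟨hk, fun h => h.elim (fun h' => hik h'.symm) (fun h' => hjk h'.symm)⟩
      · exact ⟨htP, by tauto⟩
  have hins_i : P \ {Pj, Pk} = insert Pi Q := by
    ext t
    simp only [hQdef, Finset.mem_sdiff, Finset.mem_insert, Finset.mem_singleton]
    constructor
    · rintro ⟨htP, ht⟩
      by_cases hti : t = Pi
      · exact Or.inl hti
      · exact Or.inr ⟨htP, by tauto⟩
    · rintro (rfl | ⟨htP, ht⟩)
      · exact ⟨hi, fun h => h.elim (fun h' => hij h') (fun h' => hik h')⟩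
      · exact ⟨htP, by tauto⟩
  have hins_j : P \ {Pi, Pk} = insert Pj Q := by
    ext t
    simp only [hQdef, Finset.mem_sdiff, Finset.mem_insert, Finset.mem_singleton]
    constructor
    · rintro ⟨htP, ht⟩
      by_cases htj : t = Pj
      · exact Or.inl htj
      · exact Or.inr ⟨htP, by tauto⟩
    · rintro (rfl | ⟨htP, ht⟩)
      · exact ⟨hj, fun h => h.elim (fun h' => hij h'.symm) (fun h' => hjk h')⟩
      · exact ⟨htP, by tauto⟩
  have hdec : ∀ (x y z : Fin (e+1) → ℝ), P \ {x, y} = insert z Q → z ∉ Q →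
      sepCount P x y
        = ((Q.powersetCard (e+1)).filter (fun S => Separates S x y)).card
          + ((Q.powersetCard e).filter (fun T => Separates (insert z T) x y)).card := by
    intro x y z hxy hz
    unfold sepCount
    rw [hxy]
    exact count_split Q hz e _
  set N1 := ((Q.powersetCard (e+1)).filter (fun S => Separates S Pi Pj)).card with hN1
  set N2 := ((Q.powersetCard (e+1)).filter (fun S => Separates S Pj Pk)).card with hN2
  set N3 := ((Q.powersetCard (e+1)).filter (fun S => Separates S Pi Pk)).card with hN3
  set M1 := ((Q.powersetCard e).filter (fun T => Separates (insert Pk T) Pi Pj)).card with hM1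
  set M2 := ((Q.powersetCard e).filter (fun T => Separates (insert Pi T) Pj Pk)).card with hM2
  set M3 := ((Q.powersetCard e).filter (fun T => Separates (insert Pj T) Pi Pk)).card with hM3
  have hd1 : sepCount P Pi Pj = N1 + M1 := hdec Pi Pj Pk hins_k hkQ
  have hd2 : sepCount P Pj Pk = N2 + M2 := hdec Pj Pk Pi hins_i hiQ
  have hd3 : sepCount P Pi Pk = N3 + M3 := hdec Pi Pk Pj hins_j hjQ
  -- per-S parity
  have perS : ∀ S ∈ Q.powersetCard (e+1),
      ((if Separates S Pi Pj then 1 else 0) + (if Separates S Pj Pk then 1 else 0)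
        + (if Separates S Pi Pk then 1 else 0)) % 2 = 0 := by
    intro S hS
    obtain ⟨hSQ, hScard⟩ := Finset.mem_powersetCard.mp hS
    obtain ⟨v, hvinj, hvrange⟩ := exists_enum S hScard
    have hvmem : ∀ i2, v i2 ∈ P := fun i2 =>
      hQP (hSQ (Finset.mem_coe.mp (hvrange ▸ ⟨i2, rfl⟩)))
    have hnotin : ∀ {x : Fin (e+1) → ℝ}, x ∉ Q → x ∉ Set.range v := by
      intro x hx hmem
      rw [hvrange] at hmem
      exact hx (hSQ (Finset.mem_coe.mp hmem))
    have hfi := fdet_ne_zero_generic hgen hvinj hvmem hi (hnotin hiQ)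
    have hfj := fdet_ne_zero_generic hgen hvinj hvmem hj (hnotin hjQ)
    have hfk := fdet_ne_zero_generic hgen hvinj hvmem hk (hnotin hkQ)
    have hvaff : AffineIndependent ℝ v := generic_affineIndependent hgen hvinj hvmem (by omega)
    rw [if_congr (separates_iff_fdet hvaff hvrange hfi hfj) rfl rfl,
        if_congr (separates_iff_fdet hvaff hvrange hfj hfk) rfl rfl,
        if_congr (separates_iff_fdet hvaff hvrange hfi hfk) rfl rfl]
    apply parityA
    have hne : fdet v Pi * fdet v Pj * fdet v Pk ≠ 0 := mul_ne_zero (mul_ne_zero hfi hfj) hfk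
    have hsq : (fdet v Pi * fdet v Pj) * (fdet v Pj * fdet v Pk) * (fdet v Pi * fdet v Pk)
        = (fdet v Pi * fdet v Pj * fdet v Pk)^2 := by ring
    rw [hsq]
    exact lt_of_le_of_ne (sq_nonneg _) (Ne.symm (pow_ne_zero 2 hne))
  -- per-T parity
  have perT : ∀ T ∈ Q.powersetCard e,
      ((if Separates (insert Pk T) Pi Pj then 1 else 0)
        + (if Separates (insert Pi T) Pj Pk then 1 else 0)
        + (if Separates (insert Pj T) Pi Pk then 1 else 0)) % 2 = 1 := by
    intro T hT
    obtain ⟨hTQ, hTcard⟩ := Finset.mem_powersetCard.mp hT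
    obtain ⟨u, huinj, hurange⟩ := exists_enum T hTcard
    have humem : ∀ i2, u i2 ∈ P := fun i2 =>
      hQP (hTQ (Finset.mem_coe.mp (hurange ▸ ⟨i2, rfl⟩)))
    have hnotin : ∀ {x : Fin (e+1) → ℝ}, x ∉ Q → x ∉ Set.range u := by
      intro x hx hmem
      rw [hurange] at hmem
      exact hx (hTQ (Finset.mem_coe.mp hmem))
    have hrangemem : ∀ {x z : Fin (e+1) → ℝ}, x ∉ Q → x ≠ z →
        x ∉ Set.range (Fin.snoc u z : Fin (e+1) → (Fin (e+1) → ℝ)) := by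
      intro x z hx hxz hmem
      rw [range_snoc] at hmem
      rcases Set.mem_insert_iff.mp hmem with rfl | hmem'
      · exact hxz rfl
      · exact hnotin hx hmem'
    have hKinj := snoc_injective huinj (hnotin hkQ)
    have hIinj := snoc_injective huinj (hnotin hiQ)
    have hJinj := snoc_injective huinj (hnotin hjQ)
    have hKmem := snoc_mem humem hk
    have hImem := snoc_mem humem hi
    have hJmem := snoc_mem humem hj
    have hKrange : Set.range (Fin.snoc u Pk : Fin (e+1) → (Fin (e+1) → ℝ))
        = ↑(insert Pk T) := by rw [range_snoc, hurange, Finset.coe_insert]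
    have hIrange : Set.range (Fin.snoc u Pi : Fin (e+1) → (Fin (e+1) → ℝ))
        = ↑(insert Pi T) := by rw [range_snoc, hurange, Finset.coe_insert]
    have hJrange : Set.range (Fin.snoc u Pj : Fin (e+1) → (Fin (e+1) → ℝ))
        = ↑(insert Pj T) := by rw [range_snoc, hurange, Finset.coe_insert]
    have hKaff := generic_affineIndependent hgen hKinj hKmem (by omega)
    have hIaff := generic_affineIndependent hgen hIinj hImem (by omega)
    have hJaff := generic_affineIndependent hgen hJinj hJmem (by omega)
    have hfKi : fdet (Fin.snoc u Pk) Pi ≠ 0 :=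
      fdet_ne_zero_generic hgen hKinj hKmem hi (hrangemem hiQ hik)
    have hfKj : fdet (Fin.snoc u Pk) Pj ≠ 0 :=
      fdet_ne_zero_generic hgen hKinj hKmem hj (hrangemem hjQ hjk)
    have hfIj : fdet (Fin.snoc u Pi) Pj ≠ 0 :=
      fdet_ne_zero_generic hgen hIinj hImem hj (hrangemem hjQ hij.symm)
    have hfIk : fdet (Fin.snoc u Pi) Pk ≠ 0 :=
      fdet_ne_zero_generic hgen hIinj hImem hk (hrangemem hkQ hik.symm)
    have hfJi : fdet (Fin.snoc u Pj) Pi ≠ 0 :=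
      fdet_ne_zero_generic hgen hJinj hJmem hi (hrangemem hiQ hij)
    have hfJk : fdet (Fin.snoc u Pj) Pk ≠ 0 :=
      fdet_ne_zero_generic hgen hJinj hJmem hk (hrangemem hkQ hjk.symm)
    set a := fdet (Fin.snoc u Pj) Pk with ha_def
    set b := fdet (Fin.snoc u Pk) Pi with hb_def
    set c := fdet (Fin.snoc u Pi) Pj with hc_def
    have hE1 : Separates (insert Pk T) Pi Pj ↔ 0 < a * b := by
      rw [separates_iff_fdet hKaff hKrange hfKi hfKj, fdet_snoc_antisymm u Pk Pj, ← ha_def,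
        ← hb_def]
      constructor <;> intro h'' <;> nlinarith
    have hE2 : Separates (insert Pi T) Pj Pk ↔ 0 < b * c := by
      rw [separates_iff_fdet hIaff hIrange hfIj hfIk, fdet_snoc_antisymm u Pi Pk, ← hb_def,
        ← hc_def]
      constructor <;> intro h'' <;> nlinarith
    have hE3 : Separates (insert Pj T) Pi Pk ↔ 0 < c * a := by
      rw [separates_iff_fdet hJaff hJrange hfJi hfJk, fdet_snoc_antisymm u Pj Pi, ← hc_def,
        ← ha_def]
      constructor <;> intro h'' <;> nlinarith
    rw [if_congr hE1 rfl rfl, if_congr hE2 rfl rfl, if_congr hE3 rfl rfl]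
    apply parityB
    have hne : a * b * c ≠ 0 := mul_ne_zero (mul_ne_zero hfJk hfKi) hfIj
    have hsq : (a * b) * (b * c) * (c * a) = (a * b * c)^2 := by ring
    rw [hsq]
    exact lt_of_le_of_ne (sq_nonneg _) (Ne.symm (pow_ne_zero 2 hne))
  -- aggregation
  have keyA : (N1 + N2 + N3) % 2 = 0 := by
    have hsum : N1 + N2 + N3 = ∑ S ∈ Q.powersetCard (e+1),
        ((if Separates S Pi Pj then 1 else 0) + (if Separates S Pj Pk then 1 else 0)
          + (if Separates S Pi Pk then 1 else 0)) := by
      rw [hN1, hN2, hN3, Finset.card_filter, Finset.card_filter, Finset.card_filter,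
        ← Finset.sum_add_distrib, ← Finset.sum_add_distrib]
    rw [hsum, Finset.sum_nat_mod, Finset.sum_congr rfl perS]
    simp
  have keyB : (M1 + M2 + M3) % 2 = (Q.powersetCard e).card % 2 := by
    have hsum : M1 + M2 + M3 = ∑ T ∈ Q.powersetCard e,
        ((if Separates (insert Pk T) Pi Pj then 1 else 0)
          + (if Separates (insert Pi T) Pj Pk then 1 else 0)
          + (if Separates (insert Pj T) Pi Pk then 1 else 0)) := by
      rw [hM1, hM2, hM3, Finset.card_filter, Finset.card_filter, Finset.card_filter,
        ← Finset.sum_add_distrib, ← Finset.sum_add_distrib]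
    rw [hsum, Finset.sum_nat_mod, Finset.sum_congr rfl perT]
    rw [Finset.sum_const, smul_eq_mul, mul_one]
  have hQcard : Q.card = P.card - 3 := by
    rw [hQdef, Finset.card_sdiff_of_subset]
    · congr 1
      rw [Finset.card_insert_of_notMem (by simp [hij, hik]),
        Finset.card_insert_of_notMem (by simp [hjk]), Finset.card_singleton]
    · intro x hx
      simp only [Finset.mem_insert, Finset.mem_singleton] at hx
      rcases hx with rfl | rfl | rfl <;> assumption
  have hpows : (Q.powersetCard e).card = Nat.choose (P.card - 3) e := by
    rw [Finset.card_powersetCard, hQcard]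
  rw [hpows] at keyB
  simp only [Nat.add_sub_cancel] at h1 h2 ⊢
  rw [hd1] at h1
  rw [hd2] at h2
  rw [hd3]
  generalize Nat.choose (P.card - 3) e = K at keyB h1 h2 ⊢
  omega
end

section
/- Flip Proposition, part (i): Let P(-1) and P(+1) be two generic configurations of n points in R^d related by a flip with flipset F(t) of d+1 points. If two distinct points P(t), Q(t) are either both in F(t) or both in the complement P(t)\F(t), then n(P(1),Q(1)) = n(P(-1),Q(-1)); in particular P(-1) ∼ Q(-1) if and only if P(+1) ∼ Q(+1) for the Orchard relation. -/
open Finset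

/-- A labelled tuple of points of `ℝ^d` is generic if every subset of at most `d+1` of the
points is affinely independent. -/
def GenericTuple {d n : ℕ} (P : Fin n → (Fin d → ℝ)) : Prop :=
  ∀ S : Finset (Fin n), S.card ≤ d + 1 → AffineIndependent ℝ (fun i : S => P (i : Fin n))

/-- A flip: a continuous path `t ↦ P t` of `n`-tuples of points of `ℝ^d`, `t ∈ [-1,1]`,
generic for `t ≠ 0`, such that at `t = 0` exactly one set `F` of `d+1` points is affinely
dependent (lying in a common hyperplane spanned by any `d` of them), and the orientation of
the simplex on the flipset reverses between `t = -1` and `t = 1`. -/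
structure IsFlip (d n : ℕ) (P : ℝ → Fin n → (Fin d → ℝ)) (F : Finset (Fin n)) : Prop where
  cont : ∀ i, ContinuousOn (fun t => P t i) (Set.Icc (-1 : ℝ) 1)
  cardF : F.card = d + 1
  generic : ∀ t ∈ Set.Icc (-1 : ℝ) 1, t ≠ 0 → GenericTuple (P t)
  degen : ¬ AffineIndependent ℝ (fun i : F => P 0 (i : Fin n))
  small_indep : ∀ S : Finset (Fin n), S.card ≤ d →
    AffineIndependent ℝ (fun i : S => P 0 (i : Fin n))
  flipset_unique : ∀ G : Finset (Fin n), G.card = d + 1 → G ≠ F →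
    AffineIndependent ℝ (fun i : G => P 0 (i : Fin n))
  reversal : ∀ e : Fin (d + 1) → Fin n, Function.Injective e → (∀ r, e r ∈ F) →
    Matrix.det (Matrix.of fun r c : Fin d => (P (-1) (e r.succ) - P (-1) (e 0)) c) *
      Matrix.det (Matrix.of fun r c : Fin d => (P 1 (e r.succ) - P 1 (e 0)) c) < 0


noncomputable def detAff {d : ℕ} (u : Fin (d + 1) → (Fin d → ℝ)) : ℝ :=
  Matrix.det (Matrix.of fun r c : Fin d => (u r.succ - u 0) c)

/-- The equiv `Fin d ≃ {x : Fin (d+1) // x ≠ 0}` by `succ`. -/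
def succEquiv (d : ℕ) : Fin d ≃ {x : Fin (d + 1) // x ≠ 0} where
  toFun i := ⟨i.succ, Fin.succ_ne_zero i⟩
  invFun x := (x : Fin (d + 1)).pred x.2
  left_inv i := by simp
  right_inv x := by
    ext1
    simp

theorem affineIndependent_iff_detAff_ne_zero {d : ℕ} (u : Fin (d + 1) → (Fin d → ℝ)) :
    AffineIndependent ℝ u ↔ detAff u ≠ 0 := by
  rw [affineIndependent_iff_linearIndependent_vsub ℝ u 0]
  rw [← linearIndependent_equiv (succEquiv d)]
  have : ((fun i : {x : Fin (d + 1) // x ≠ 0} => u ↑i -ᵥ u 0) ∘ (succEquiv d))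
      = fun i : Fin d => (Matrix.of fun r c : Fin d => (u r.succ - u 0) c) i := by
    funext i
    simp [succEquiv, vsub_eq_sub]
    rfl
  rw [this]
  change LinearIndependent ℝ (Matrix.of fun r c : Fin d => (u r.succ - u 0) c).row ↔ _
  rw [Matrix.linearIndependent_rows_iff_isUnit, Matrix.isUnit_iff_isUnit_det,
    isUnit_iff_ne_zero]
  rfl

noncomputable def hypDet {m : ℕ} (s : Fin (m + 1) → (Fin (m + 1) → ℝ))
    (x : Fin (m + 1) → ℝ) : ℝ :=
  detAff (Fin.snoc s x)

theorem hypDet_rows {m : ℕ} (s : Fin (m + 1) → (Fin (m + 1) → ℝ)) (x : Fin (m + 1) → ℝ) :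
    (fun r : Fin (m + 1) => (Fin.snoc s x : Fin (m + 2) → (Fin (m + 1) → ℝ)) r.succ -
        (Fin.snoc s x : Fin (m + 2) → (Fin (m + 1) → ℝ)) 0)
      = Fin.snoc (fun i : Fin m => s i.succ - s 0) (x - s 0) := by
  funext r
  refine Fin.lastCases ?_ (fun i => ?_) r
  · rw [Fin.succ_last]
    have h0 : (0 : Fin (m + 2)) = Fin.castSucc 0 := rfl
    rw [h0, Fin.snoc_castSucc, Fin.snoc_last, Fin.snoc_last]
  · rw [Fin.succ_castSucc]
    have h0 : (0 : Fin (m + 2)) = Fin.castSucc 0 := rfl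
    rw [h0, Fin.snoc_castSucc, Fin.snoc_castSucc, Fin.snoc_castSucc]

theorem hypDet_eq {m : ℕ} (s : Fin (m + 1) → (Fin (m + 1) → ℝ)) (x : Fin (m + 1) → ℝ) :
    hypDet s x = Matrix.det (Matrix.of fun r c : Fin (m + 1) =>
      (Fin.snoc (fun i : Fin m => s i.succ - s 0) (x - s 0) :
        Fin (m + 1) → (Fin (m + 1) → ℝ)) r c) := by
  unfold hypDet detAff
  congr 1
  funext r c
  exact congrFun (congrFun (hypDet_rows s x) r) c

theorem affInd_iff_li {m : ℕ} (s : Fin (m + 1) → (Fin (m + 1) → ℝ)) :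
    AffineIndependent ℝ s ↔ LinearIndependent ℝ (fun i : Fin m => s i.succ - s 0) := by
  rw [affineIndependent_iff_linearIndependent_vsub ℝ s 0,
    ← linearIndependent_equiv (succEquiv m)]
  have : ((fun i : {x : Fin (m + 1) // x ≠ 0} => s ↑i -ᵥ s 0) ∘ (succEquiv m))
      = fun i : Fin m => s i.succ - s 0 := by
    funext i; simp [succEquiv, vsub_eq_sub]
  rw [this]

theorem span_diff_eq {m : ℕ} (s : Fin (m + 1) → (Fin (m + 1) → ℝ)) :
    Submodule.span ℝ (Set.range fun i : Fin m => s i.succ - s 0)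
      = vectorSpan ℝ (Set.range s) := by
  rw [vectorSpan_range_eq_span_range_vsub_right_ne ℝ s 0]
  congr 1
  have hco : ((fun i : {x : Fin (m + 1) // x ≠ 0} => s ↑i -ᵥ s 0) ∘ (succEquiv m))
      = fun i : Fin m => s i.succ - s 0 := by
    funext i; simp [succEquiv, vsub_eq_sub]
  rw [← Function.Surjective.range_comp (succEquiv m).surjective
    (fun i : {x : Fin (m + 1) // x ≠ 0} => s ↑i -ᵥ s 0), hco]

theorem hypDet_ne_zero_iff {m : ℕ} (s : Fin (m + 1) → (Fin (m + 1) → ℝ))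
    (x : Fin (m + 1) → ℝ) :
    hypDet s x ≠ 0 ↔ LinearIndependent ℝ (fun i : Fin m => s i.succ - s 0) ∧
      (x - s 0) ∉ Submodule.span ℝ (Set.range fun i : Fin m => s i.succ - s 0) := by
  rw [hypDet_eq, ← isUnit_iff_ne_zero, ← Matrix.isUnit_iff_isUnit_det,
    ← Matrix.linearIndependent_rows_iff_isUnit]
  have : (fun i => (Matrix.of fun r c : Fin (m + 1) =>
      (Fin.snoc (fun i : Fin m => s i.succ - s 0) (x - s 0) :
        Fin (m + 1) → (Fin (m + 1) → ℝ)) r c) i)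
      = Fin.snoc (fun i : Fin m => s i.succ - s 0) (x - s 0) := rfl
  rw [show Matrix.row _ = Fin.snoc (fun i : Fin m => s i.succ - s 0) (x - s 0) from this,
    linearIndependent_fin_snoc]

theorem hypDet_zero_iff_mem {m : ℕ} {s : Fin (m + 1) → (Fin (m + 1) → ℝ)}
    (hs : AffineIndependent ℝ s) (x : Fin (m + 1) → ℝ) :
    hypDet s x = 0 ↔ x ∈ (affineSpan ℝ (Set.range s) : Set (Fin (m + 1) → ℝ)) := by
  have hli := (affInd_iff_li s).1 hs
  have key : hypDet s x ≠ 0 ↔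
      x ∉ (affineSpan ℝ (Set.range s) : Set (Fin (m + 1) → ℝ)) := by
    rw [hypDet_ne_zero_iff]
    simp only [hli, true_and]
    rw [span_diff_eq]
    have h0 : s 0 ∈ affineSpan ℝ (Set.range s) :=
      mem_affineSpan ℝ (Set.mem_range_self 0)
    rw [← direction_affineSpan ℝ (Set.range s)]
    have := AffineSubspace.vsub_right_mem_direction_iff_mem h0 x
    simp only [vsub_eq_sub] at this
    rw [this]
    rfl
  constructor
  · intro h0
    by_contra hx
    exact (key.2 hx) h0
  · intro hx
    by_contra h0
    exact (key.1 h0) hx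

noncomputable def hypL {m : ℕ} (s : Fin (m + 1) → (Fin (m + 1) → ℝ)) :
    (Fin (m + 1) → ℝ) →ₗ[ℝ] ℝ where
  toFun y := ((Matrix.of fun r c : Fin (m + 1) =>
      (Fin.snoc (fun i : Fin m => s i.succ - s 0) (0 : Fin (m + 1) → ℝ) :
        Fin (m + 1) → (Fin (m + 1) → ℝ)) r c).updateRow
        (Fin.last m) y).det
  map_add' u v := Matrix.det_updateRow_add _ _ u v
  map_smul' a u := Matrix.det_updateRow_smul _ _ a u

theorem hypDet_eq_hypL {m : ℕ} (s : Fin (m + 1) → (Fin (m + 1) → ℝ))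
    (x : Fin (m + 1) → ℝ) : hypDet s x = hypL s (x - s 0) := by
  rw [hypDet_eq]
  show _ = ((Matrix.of fun r c : Fin (m + 1) =>
      (Fin.snoc (fun i : Fin m => s i.succ - s 0) (0 : Fin (m + 1) → ℝ) :
        Fin (m + 1) → (Fin (m + 1) → ℝ)) r c).updateRow
        (Fin.last m) (x - s 0)).det
  congr 1
  funext r c
  by_cases hr : r = Fin.last m
  · subst hr
    rw [Matrix.updateRow_self, Matrix.of_apply, Fin.snoc_last]
  · obtain ⟨i, rfl⟩ := Fin.exists_castSucc_eq.mpr hr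
    rw [Matrix.updateRow_ne hr, Matrix.of_apply, Matrix.of_apply,
      Fin.snoc_castSucc, Fin.snoc_castSucc]

theorem separates_iff_hypDet {m : ℕ} {s : Fin (m + 1) → (Fin (m + 1) → ℝ)}
    (hs : AffineIndependent ℝ s) {T' : Finset (Fin (m + 1) → ℝ)}
    (hT : (T' : Set (Fin (m + 1) → ℝ)) = Set.range s) (A B : Fin (m + 1) → ℝ) :
    Separates T' A B ↔ hypDet s A * hypDet s B < 0 := by
  have hzero := fun x => hypDet_zero_iff_mem hs x
  have hcont : Continuous (hypDet s) := by
    have hfn : hypDet s = fun x => hypL s (x - s 0) := funext (hypDet_eq_hypL s)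
    rw [hfn]
    exact (LinearMap.continuous_of_finiteDimensional (hypL s)).comp
      (continuous_id.sub continuous_const)
  unfold Separates
  rw [hT]
  constructor
  · rintro ⟨hA, hB, hAB⟩
    have hA' : hypDet s A ≠ 0 := fun h => hA ((hzero A).1 h)
    have hB' : hypDet s B ≠ 0 := fun h => hB ((hzero B).1 h)
    by_contra hprod
    have hpos : 0 < hypDet s A * hypDet s B :=
      lt_of_le_of_ne (not_lt.1 hprod) (Ne.symm (mul_ne_zero hA' hB'))
    rcases mul_pos_iff.1 hpos with ⟨ha, hb⟩ | ⟨ha, hb⟩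
    · -- both positive : halfspace  hypL s (s 0) < hypL s x
      set C : Set (Fin (m + 1) → ℝ) := {x | hypL s (s 0) < hypL s x} with hC
      have hmemC : ∀ x, 0 < hypDet s x → x ∈ C := by
        intro x hx
        have := hypDet_eq_hypL s x
        rw [map_sub] at this
        simp only [hC, Set.mem_setOf_eq]
        linarith [this ▸ hx]
      have hCsub : C ⊆ (affineSpan ℝ (Set.range s) : Set (Fin (m + 1) → ℝ))ᶜ := by
        intro x hx
        simp only [Set.mem_compl_iff]
        intro hmem
        have h0 : hypDet s x = 0 := (hzero x).2 hmem
        have := hypDet_eq_hypL s x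
        rw [map_sub] at this
        simp only [hC, Set.mem_setOf_eq] at hx
        linarith [this ▸ h0]
      have hconv : Convex ℝ C := convex_halfSpace_gt (hypL s).isLinear _
      exact hAB (hconv.isPreconnected.subset_connectedComponentIn
        (hmemC B hb) hCsub (hmemC A ha))
    · set C : Set (Fin (m + 1) → ℝ) := {x | hypL s x < hypL s (s 0)} with hC
      have hmemC : ∀ x, hypDet s x < 0 → x ∈ C := by
        intro x hx
        have := hypDet_eq_hypL s x
        rw [map_sub] at this
        simp only [hC, Set.mem_setOf_eq]
        linarith [this ▸ hx]
      have hCsub : C ⊆ (affineSpan ℝ (Set.range s) : Set (Fin (m + 1) → ℝ))ᶜ := by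
        intro x hx
        simp only [Set.mem_compl_iff]
        intro hmem
        have h0 : hypDet s x = 0 := (hzero x).2 hmem
        have := hypDet_eq_hypL s x
        rw [map_sub] at this
        simp only [hC, Set.mem_setOf_eq] at hx
        linarith [this ▸ h0]
      have hconv : Convex ℝ C := convex_halfSpace_lt (hypL s).isLinear _
      exact hAB (hconv.isPreconnected.subset_connectedComponentIn
        (hmemC B hb) hCsub (hmemC A ha))
  · intro hprod
    have hA' : hypDet s A ≠ 0 := left_ne_zero_of_mul hprod.ne
    have hB' : hypDet s B ≠ 0 := right_ne_zero_of_mul hprod.ne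
    have hAmem : A ∈ (affineSpan ℝ (Set.range s) : Set (Fin (m + 1) → ℝ))ᶜ := by
      simp only [Set.mem_compl_iff]
      exact fun h => hA' ((hzero A).2 h)
    have hBmem : B ∈ (affineSpan ℝ (Set.range s) : Set (Fin (m + 1) → ℝ))ᶜ := by
      simp only [Set.mem_compl_iff]
      exact fun h => hB' ((hzero B).2 h)
    refine ⟨hAmem, hBmem, ?_⟩
    intro hAK
    set K := connectedComponentIn
      ((affineSpan ℝ (Set.range s) : Set (Fin (m + 1) → ℝ)))ᶜ B with hK
    have hKpre : IsPreconnected K := isPreconnected_connectedComponentIn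
    have hKsub : K ⊆ (affineSpan ℝ (Set.range s) : Set (Fin (m + 1) → ℝ))ᶜ :=
      connectedComponentIn_subset _ _
    have hBK : B ∈ K := mem_connectedComponentIn hBmem
    have hzeroK : ∀ x ∈ K, hypDet s x ≠ 0 := by
      intro x hx h0
      exact (hKsub hx) ((hzero x).1 h0)
    rcases mul_neg_iff.1 hprod with ⟨ha, hb⟩ | ⟨ha, hb⟩
    · have himage := hKpre.intermediate_value hBK hAK hcont.continuousOn
      have h0mem : (0 : ℝ) ∈ Set.Icc (hypDet s B) (hypDet s A) := ⟨hb.le, ha.le⟩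
      obtain ⟨x, hxK, hx0⟩ := himage h0mem
      exact hzeroK x hxK hx0
    · have himage := hKpre.intermediate_value hAK hBK hcont.continuousOn
      have h0mem : (0 : ℝ) ∈ Set.Icc (hypDet s A) (hypDet s B) := ⟨ha.le, hb.le⟩
      obtain ⟨x, hxK, hx0⟩ := himage h0mem
      exact hzeroK x hxK hx0

theorem sign_const {f : ℝ → ℝ} (hf : ContinuousOn f (Set.Icc (-1 : ℝ) 1))
    (hne : ∀ t ∈ Set.Icc (-1 : ℝ) 1, f t ≠ 0) : (f (-1) < 0 ↔ f 1 < 0) := by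
  have hab : (-1 : ℝ) ≤ 1 := by norm_num
  constructor
  · intro h1
    by_contra h2
    have h2' : 0 < f 1 := lt_of_le_of_ne (not_lt.1 h2) (Ne.symm (hne 1 (by norm_num)))
    obtain ⟨x, hx, hx0⟩ := intermediate_value_Icc hab hf ⟨h1.le, h2'.le⟩
    exact hne x hx hx0
  · intro h1
    by_contra h2
    have h2' : 0 < f (-1) := lt_of_le_of_ne (not_lt.1 h2) (Ne.symm (hne (-1) (by norm_num)))
    obtain ⟨x, hx, hx0⟩ := intermediate_value_Icc' hab hf ⟨h1.le, h2'.le⟩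
    exact hne x hx hx0

theorem snocInjective {n m : ℕ} {e : Fin m → Fin n} (he : Function.Injective e)
    {r : Fin n} (hr : ∀ i, e i ≠ r) :
    Function.Injective (Fin.snoc e r : Fin (m + 1) → Fin n) := by
  intro a b hab
  rcases Fin.eq_castSucc_or_eq_last a with ⟨i, rfl⟩ | rfl <;>
    rcases Fin.eq_castSucc_or_eq_last b with ⟨j, rfl⟩ | rfl
  · rw [Fin.snoc_castSucc, Fin.snoc_castSucc] at hab
    exact congrArg Fin.castSucc (he hab)
  · rw [Fin.snoc_castSucc, Fin.snoc_last] at hab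
    exact absurd hab (hr i)
  · rw [Fin.snoc_castSucc, Fin.snoc_last] at hab
    exact absurd hab.symm (hr j)
  · rfl

theorem compIndepFinset {d n k : ℕ} {Q : Fin n → (Fin d → ℝ)} {G : Finset (Fin n)}
    (hG : AffineIndependent ℝ (fun i : G => Q (i : Fin n))) (w : Fin k → Fin n)
    (hmem : ∀ r, w r ∈ G) (hw : Function.Injective w) :
    AffineIndependent ℝ (fun i => Q (w i)) := by
  have h2 := hG.comp_embedding
    ⟨fun r => ⟨w r, hmem r⟩, fun a b hab => hw (congrArg Subtype.val hab)⟩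
  exact h2

theorem compIndep {d n k : ℕ} {Q : Fin n → (Fin d → ℝ)} (hQ : GenericTuple Q)
    (hk : k ≤ d + 1) (w : Fin k → Fin n) (hw : Function.Injective w) :
    AffineIndependent ℝ (fun i => Q (w i)) := by
  have hcard : (Finset.univ.image w).card ≤ d + 1 :=
    le_trans Finset.card_image_le (by simpa using hk)
  exact compIndepFinset (hQ _ hcard) w
    (fun r => Finset.mem_image_of_mem w (Finset.mem_univ r)) hw

/-- Flip Proposition, part (i). -/
theorem flip_prop_i {d n : ℕ} (P : ℝ → Fin n → (Fin d → ℝ)) (F : Finset (Fin n))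
    (hflip : IsFlip d n P F) (p q : Fin n) (hpq : p ≠ q)
    (h : (p ∈ F ∧ q ∈ F) ∨ (p ∉ F ∧ q ∉ F)) :
    sepCount (Finset.univ.image (P 1)) (P 1 p) (P 1 q) =
      sepCount (Finset.univ.image (P (-1))) (P (-1) p) (P (-1) q) ∧
    (OrchardRel (Finset.univ.image (P (-1))) (P (-1) p) (P (-1) q) ↔
      OrchardRel (Finset.univ.image (P 1)) (P 1 p) (P 1 q)) := by
  classical
  match d, P, hflip, h with
  | 0, P, hflip, h =>
    exfalso
    obtain ⟨a, ha⟩ := Finset.card_eq_one.mp hflip.cardF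
    have hrev := hflip.reversal (fun _ => a) (fun x y _ => @Subsingleton.elim _ Fin.subsingleton_one x y)
      (fun r => by rw [ha]; exact Finset.mem_singleton_self a)
    rw [Matrix.det_isEmpty, Matrix.det_isEmpty] at hrev
    norm_num at hrev
  | (m + 1), P, hflip, h =>
  have h1I : (1 : ℝ) ∈ Set.Icc (-1 : ℝ) 1 := by norm_num
  have hm1I : (-1 : ℝ) ∈ Set.Icc (-1 : ℝ) 1 := by norm_num
  have hm1ne : (-1 : ℝ) ≠ 0 := by norm_num
  have gen : ∀ t : ℝ, t ∈ Set.Icc (-1 : ℝ) 1 → t ≠ 0 → GenericTuple (P t) := hflip.generic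
  -- injectivity at generic times
  have hinj : ∀ t : ℝ, t ∈ Set.Icc (-1 : ℝ) 1 → t ≠ 0 → Function.Injective (P t) := by
    intro t ht ht0 i j hij
    by_contra hne
    have hpair : ({i, j} : Finset (Fin n)).card ≤ m + 1 + 1 :=
      le_trans (Finset.card_insert_le _ _) (by simp)
    have hind := gen t ht ht0 {i, j} hpair
    have hmi : i ∈ ({i, j} : Finset (Fin n)) := by simp
    have hmj : j ∈ ({i, j} : Finset (Fin n)) := by simp
    have := hind.injective (a₁ := ⟨i, hmi⟩) (a₂ := ⟨j, hmj⟩) hij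
    exact hne (congrArg Subtype.val this)
  have hinj1 : Function.Injective (P 1) := hinj 1 h1I one_ne_zero
  have hinjm1 : Function.Injective (P (-1)) := hinj (-1) hm1I hm1ne
  set U : Finset (Fin n) := Finset.univ \ {p, q} with hU
  -- the counting reduction, from point sets to index sets
  have hcount : ∀ t : ℝ, Function.Injective (P t) →
      sepCount (Finset.univ.image (P t)) (P t p) (P t q)
        = ((U.powersetCard (m + 1)).filter
            (fun T => Separates (T.image (P t)) (P t p) (P t q))).card := by
    intro t hinjt
    have himg : (Finset.univ.image (P t)) \ {P t p, P t q} = U.image (P t) := by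
      ext x
      simp only [Finset.mem_sdiff, Finset.mem_image, Finset.mem_univ, true_and,
        Finset.mem_insert, Finset.mem_singleton, hU]
      constructor
      · rintro ⟨⟨i, rfl⟩, hx⟩
        rw [not_or] at hx
        exact ⟨i, by rw [not_or]; exact
          ⟨fun hip => hx.1 (by rw [hip]), fun hiq => hx.2 (by rw [hiq])⟩, rfl⟩
      · rintro ⟨i, hi, rfl⟩
        rw [not_or] at hi
        refine ⟨⟨i, rfl⟩, ?_⟩
        rw [not_or]
        exact ⟨fun hc => hi.1 (hinjt hc), fun hc => hi.2 (hinjt hc)⟩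
    unfold sepCount
    rw [himg]
    refine (Finset.card_nbij (fun T => T.image (P t)) ?_ ?_ ?_).symm
    · intro T hT
      simp only [Finset.mem_coe, Finset.mem_filter, Finset.mem_powersetCard] at hT ⊢
      exact ⟨⟨Finset.image_subset_image hT.1.1,
        by rw [Finset.card_image_of_injective _ hinjt]; exact hT.1.2⟩, hT.2⟩
    · intro T1 _ T2 _ hEq
      exact Finset.image_injective hinjt hEq
    · intro S hS
      simp only [Finset.coe_filter, Set.mem_setOf_eq, Finset.mem_powersetCard] at hS
      obtain ⟨⟨hsub, hcard⟩, hsepS⟩ := hS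
      refine ⟨U.filter (fun i => P t i ∈ S), ?_, ?_⟩
      · have himgT : (U.filter (fun i => P t i ∈ S)).image (P t) = S := by
          ext x
          simp only [Finset.mem_image, Finset.mem_filter]
          constructor
          · rintro ⟨i, ⟨_, hPS⟩, rfl⟩
            exact hPS
          · intro hx
            obtain ⟨i, hiU, hix⟩ := Finset.mem_image.1 (hsub hx)
            exact ⟨i, ⟨hiU, by rw [hix]; exact hx⟩, hix⟩
        simp only [Finset.coe_filter, Set.mem_setOf_eq, Finset.mem_powersetCard]
        refine ⟨⟨Finset.filter_subset _ _, ?_⟩, by rw [himgT]; exact hsepS⟩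
        have := Finset.card_image_of_injective (U.filter (fun i => P t i ∈ S)) hinjt
        rw [himgT, hcard] at this
        exact this.symm
      · ext x
        simp only [Finset.mem_image, Finset.mem_filter]
        constructor
        · rintro ⟨i, ⟨_, hPS⟩, rfl⟩
          exact hPS
        · intro hx
          obtain ⟨i, hiU, hix⟩ := Finset.mem_image.1 (hsub hx)
          exact ⟨i, ⟨hiU, by rw [hix]; exact hx⟩, hix⟩
  -- transfer of the separation predicate between t = 1 and t = -1
  have hpred : ∀ T ∈ U.powersetCard (m + 1),
      (Separates (T.image (P 1)) (P 1 p) (P 1 q) ↔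
        Separates (T.image (P (-1))) (P (-1) p) (P (-1) q)) := by
    intro T hT
    rw [Finset.mem_powersetCard] at hT
    obtain ⟨hTU, hTcard⟩ := hT
    set e : Fin (m + 1) → Fin n := fun i => ((T.orderIsoOfFin hTcard) i : Fin n) with he
    have heinj : Function.Injective e := fun a b hab => by
      have := (T.orderIsoOfFin hTcard).injective (Subtype.ext hab)
      exact this
    have hemem : ∀ i, e i ∈ T := fun i => ((T.orderIsoOfFin hTcard) i).2
    have herange : Set.range e = (T : Set (Fin n)) := by
      ext x
      constructor
      · rintro ⟨i, rfl⟩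
        exact hemem i
      · intro hx
        obtain ⟨i, hi⟩ := (T.orderIsoOfFin hTcard).surjective ⟨x, hx⟩
        exact ⟨i, congrArg Subtype.val hi⟩
    have hpT : p ∉ T := by
      intro hp
      have := hTU hp
      simp [hU] at this
    have hqT : q ∉ T := by
      intro hq
      have := hTU hq
      simp [hU] at this
    set wp : Fin (m + 2) → Fin n := Fin.snoc e p with hwp
    set wq : Fin (m + 2) → Fin n := Fin.snoc e q with hwq
    have hwpinj : Function.Injective wp :=
      snocInjective heinj (fun i hip => hpT (hip ▸ hemem i))
    have hwqinj : Function.Injective wq :=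
      snocInjective heinj (fun i hiq => hqT (hiq ▸ hemem i))
    -- affine independence along the whole path
    have hall : ∀ w : Fin (m + 2) → Fin n, Function.Injective w →
        Finset.univ.image w ≠ F → ∀ t ∈ Set.Icc (-1 : ℝ) 1,
          AffineIndependent ℝ (fun i => P t (w i)) := by
      intro w hw hwF t ht
      by_cases ht0 : t = 0
      · subst ht0
        have hcard : (Finset.univ.image w).card = m + 1 + 1 := by
          rw [Finset.card_image_of_injective _ hw, Finset.card_univ, Fintype.card_fin]
        exact compIndepFinset (hflip.flipset_unique _ hcard hwF) w
          (fun r => Finset.mem_image_of_mem w (Finset.mem_univ r)) hw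
      · exact compIndep (gen t ht ht0) (le_refl (m + 2)) w hw
    have hwpF : Finset.univ.image wp ≠ F := by
      intro hEq
      rcases h with ⟨hpF, hqF⟩ | ⟨hpF, hqF⟩
      · rw [← hEq] at hqF
        obtain ⟨r, _, hr⟩ := Finset.mem_image.1 hqF
        rcases Fin.eq_castSucc_or_eq_last r with ⟨i, rfl⟩ | rfl
        · rw [hwp, Fin.snoc_castSucc] at hr
          exact hqT (hr ▸ hemem i)
        · rw [hwp, Fin.snoc_last] at hr
          exact hpq hr
      · apply hpF
        rw [← hEq]
        apply Finset.mem_image.2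
        exact ⟨Fin.last (m + 1), Finset.mem_univ _, by rw [hwp, Fin.snoc_last]⟩
    have hwqF : Finset.univ.image wq ≠ F := by
      intro hEq
      rcases h with ⟨hpF, hqF⟩ | ⟨hpF, hqF⟩
      · rw [← hEq] at hpF
        obtain ⟨r, _, hr⟩ := Finset.mem_image.1 hpF
        rcases Fin.eq_castSucc_or_eq_last r with ⟨i, rfl⟩ | rfl
        · rw [hwq, Fin.snoc_castSucc] at hr
          exact hpT (hr ▸ hemem i)
        · rw [hwq, Fin.snoc_last] at hr
          exact hpq hr.symm
      · apply hqF
        rw [← hEq]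
        apply Finset.mem_image.2
        exact ⟨Fin.last (m + 1), Finset.mem_univ _, by rw [hwq, Fin.snoc_last]⟩
    have hne : ∀ w : Fin (m + 2) → Fin n, Function.Injective w →
        Finset.univ.image w ≠ F → ∀ t ∈ Set.Icc (-1 : ℝ) 1,
          detAff (fun i => P t (w i)) ≠ 0 := fun w hw hwF t ht =>
      (affineIndependent_iff_detAff_ne_zero _).1 (hall w hw hwF t ht)
    -- continuity of the determinant functions
    have hcontw : ∀ w : Fin (m + 2) → Fin n,
        ContinuousOn (fun t => detAff (fun i => P t (w i))) (Set.Icc (-1 : ℝ) 1) := by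
      intro w
      have hdet : Continuous fun M : Matrix (Fin (m + 1)) (Fin (m + 1)) ℝ => M.det :=
        Continuous.matrix_det continuous_id
      have hfn : (fun t => detAff (fun i => P t (w i)))
          = (fun M : Matrix (Fin (m + 1)) (Fin (m + 1)) ℝ => M.det) ∘
            (fun t => Matrix.of fun r c : Fin (m + 1) =>
              (P t (w r.succ) - P t (w 0)) c) := rfl
      rw [hfn]
      apply hdet.comp_continuousOn
      apply continuousOn_pi.2
      intro r
      apply continuousOn_pi.2
      intro c
      exact ((continuous_apply c).comp_continuousOn (hflip.cont (w r.succ))).sub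
        ((continuous_apply c).comp_continuousOn (hflip.cont (w 0)))
    -- the product function and its sign constancy
    have hgcont : ContinuousOn
        (fun t => detAff (fun i => P t (wp i)) * detAff (fun i => P t (wq i)))
        (Set.Icc (-1 : ℝ) 1) := (hcontw wp).mul (hcontw wq)
    have hgne : ∀ t ∈ Set.Icc (-1 : ℝ) 1,
        detAff (fun i => P t (wp i)) * detAff (fun i => P t (wq i)) ≠ 0 :=
      fun t ht => mul_ne_zero (hne wp hwpinj hwpF t ht) (hne wq hwqinj hwqF t ht)
    have hsign := sign_const hgcont hgne
    -- identification of Separates with the sign of the product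
    have hchar : ∀ t : ℝ, t ∈ Set.Icc (-1 : ℝ) 1 → t ≠ 0 →
        (Separates (T.image (P t)) (P t p) (P t q) ↔
          detAff (fun i => P t (wp i)) * detAff (fun i => P t (wq i)) < 0) := by
      intro t ht ht0
      have hs : AffineIndependent ℝ (fun i => P t (e i)) :=
        compIndep (gen t ht ht0) (by omega) e heinj
      have hT' : ((T.image (P t) : Finset (Fin (m + 1) → ℝ)) : Set (Fin (m + 1) → ℝ))
          = Set.range (fun i => P t (e i)) := by
        rw [Finset.coe_image, ← herange, ← Set.range_comp]
        rfl
      rw [separates_iff_hypDet hs hT' (P t p) (P t q)]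
      have h1 : hypDet (fun i => P t (e i)) (P t p) = detAff (fun i => P t (wp i)) := by
        unfold hypDet
        congr 1
        rw [hwp, show (fun i => P t (e i)) = (P t) ∘ e from rfl, ← Fin.comp_snoc]
        rfl
      have h2 : hypDet (fun i => P t (e i)) (P t q) = detAff (fun i => P t (wq i)) := by
        unfold hypDet
        congr 1
        rw [hwq, show (fun i => P t (e i)) = (P t) ∘ e from rfl, ← Fin.comp_snoc]
        rfl
      rw [h1, h2]
    rw [hchar 1 h1I one_ne_zero, hchar (-1) hm1I hm1ne]
    exact hsign.symm
  -- conclude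
  have hsep : sepCount (Finset.univ.image (P 1)) (P 1 p) (P 1 q)
      = sepCount (Finset.univ.image (P (-1))) (P (-1) p) (P (-1) q) := by
    rw [hcount 1 hinj1, hcount (-1) hinjm1]
    congr 1
    exact Finset.filter_congr hpred
  refine ⟨hsep, ?_⟩
  have hne1 : P 1 p ≠ P 1 q := fun hc => hpq (hinj1 hc)
  have hnem1 : P (-1) p ≠ P (-1) q := fun hc => hpq (hinjm1 hc)
  have hcard1 : (Finset.univ.image (P 1)).card = n := by
    rw [Finset.card_image_of_injective _ hinj1, Finset.card_univ, Fintype.card_fin]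
  have hcardm1 : (Finset.univ.image (P (-1))).card = n := by
    rw [Finset.card_image_of_injective _ hinjm1, Finset.card_univ, Fintype.card_fin]
  unfold OrchardRel
  rw [hsep, hcard1, hcardm1]
  constructor
  · rintro (hc | hc)
    · exact absurd hc hnem1
    · exact Or.inr hc
  · rintro (hc | hc)
    · exact absurd hc hne1
    · exact Or.inr hc
end

section
/- Proposition 3.1: Let P = {P_1,...,P_n} ⊂ R^d be a generic configuration. For distinct points P, Q of P, the Orchard relation P ∼ Q holds if and only if (-1)^{binom(n-3,d-1)} · ∏_S det(S - P) · det(S - Q) > 0, where the product runs over all d-element subsets S = {P_{i_1} < ... < P_{i_d}} of P \ {P, Q} and det(S - X) denotes the determinant of the d×d matrix with rows P_{i_1} - X, ..., P_{i_d} - X. -/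
open Finset
attribute [local instance] Classical.propDecidable

/-- `detRows f X` is the determinant of the `d × d` matrix whose rows are `f 0 - X, ...,
f (d-1) - X`. -/
noncomputable def detRows {d : ℕ} (f : Fin d → (Fin d → ℝ)) (X : Fin d → ℝ) : ℝ :=
  Matrix.det (Matrix.of fun r c : Fin d => (f r - X) c)

/-- `detPair S A B = det(S - A) · det(S - B)` for a `d`-element subset `S`, the rows being
the points of `S` listed in a fixed order (the product of the two determinants does not
depend on the chosen order). -/
noncomputable def detPair {d : ℕ} (S : Finset (Fin d → ℝ)) (A B : Fin d → ℝ) : ℝ :=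
  if h : S.card = d then
    detRows (fun r => (S.equivFin.symm (Fin.cast h.symm r) : Fin d → ℝ)) A *
      detRows (fun r => (S.equivFin.symm (Fin.cast h.symm r) : Fin d → ℝ)) B
  else 0


private lemma det_rows_add_const {d : ℕ} (u : Fin d → (Fin d → ℝ)) (c : Fin d → ℝ) :
    Matrix.detRowAlternating (R := ℝ) (fun r => u r + c)
      = Matrix.detRowAlternating u
        + ∑ r : Fin d, Matrix.detRowAlternating (Function.update u r c) := by
  classical
  have h := (Matrix.detRowAlternating (R := ℝ) (n := Fin d)).toMultilinearMap.map_add_univ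
    u (fun _ => c)
  have hfun : (u + fun _ => c) = fun r => u r + c := rfl
  rw [hfun] at h
  simp only [AlternatingMap.coe_multilinearMap] at h
  rw [h]
  set D := Matrix.detRowAlternating (R := ℝ) (n := Fin d) with hD
  have hT : ∀ s : Finset (Fin d), s ∉ insert Finset.univ ((Finset.univ : Finset (Fin d)).image (fun r => ({r}ᶜ : Finset (Fin d)))) →
      D (s.piecewise u (fun _ => c)) = 0 := by
    intro s hs
    simp only [Finset.mem_insert, Finset.mem_image, Finset.mem_univ, true_and] at hs
    push_neg at hs
    obtain ⟨hs1, hs2⟩ := hs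
    -- sᶜ has at least two elements
    have h1 : sᶜ.Nonempty := by
      rw [← Finset.card_pos, Finset.card_compl, Nat.sub_pos_iff_lt]
      rcases lt_or_eq_of_le (Finset.card_le_univ s) with h | h
      · simpa using h
      · exact absurd (Finset.eq_univ_of_card s (by simpa using h)) hs1
    obtain ⟨i, hi⟩ := h1
    have h2 : ∃ j ∈ sᶜ, j ≠ i := by
      by_contra hcon
      push_neg at hcon
      have : sᶜ = {i} := by
        apply Finset.eq_singleton_iff_unique_mem.2 ⟨hi, fun j hj => hcon j hj⟩
      exact hs2 i (by rw [← this]; simp)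
    obtain ⟨j, hj, hji⟩ := h2
    apply (Matrix.detRowAlternating (R := ℝ) (n := Fin d)).map_eq_zero_of_eq _ (i := i) (j := j) _ (Ne.symm hji)
    simp only [Finset.mem_compl] at hi hj
    simp [Finset.piecewise, hi, hj]
  rw [← Finset.sum_subset (Finset.subset_univ _) (fun s _ hs => hT s hs)]
  have huniv : (Finset.univ : Finset (Fin d)) ∉ (Finset.univ : Finset (Fin d)).image (fun r => ({r}ᶜ : Finset (Fin d))) := by
    simp only [Finset.mem_image, Finset.mem_univ, true_and]
    rintro ⟨r, hr⟩
    have : r ∈ ({r}ᶜ : Finset (Fin d)) := by rw [hr]; exact Finset.mem_univ r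
    simp at this
  rw [Finset.sum_insert huniv, Finset.sum_image (by
    intro x _ y _ hxy
    have := congrArg (fun s : Finset (Fin d) => sᶜ) hxy
    simpa using this)]
  congr 1
  · congr 1
    ext r c'
    simp [Finset.piecewise]
  · apply Finset.sum_congr rfl
    intro r _
    congr 1
    ext i c'
    by_cases hir : i = r
    · subst hir; simp [Finset.piecewise]
    · simp [Finset.piecewise, hir, Function.update_of_ne hir]

private lemma detRows_eq {d : ℕ} (f : Fin d → (Fin d → ℝ)) (X : Fin d → ℝ) :
    detRows f X = Matrix.detRowAlternating (R := ℝ) (fun r => f r - X) := rfl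

private lemma detRows_line {d : ℕ} (f : Fin d → (Fin d → ℝ)) (A B : Fin d → ℝ)
    {a b : ℝ} (hab : a + b = 1) :
    detRows f (a • A + b • B) = a * detRows f A + b * detRows f B := by
  classical
  set c : Fin d → ℝ := A - B with hc
  set u : Fin d → (Fin d → ℝ) := fun r => f r - A with hu
  have key : ∀ t : ℝ, detRows f (A - t • c)
      = detRows f A + t * ∑ r : Fin d, Matrix.detRowAlternating (R := ℝ) (Function.update u r c) := by
    intro t
    have h1 : (fun r => f r - (A - t • c)) = fun r => u r + t • c := by
      funext r; simp [hu]; abel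
    rw [detRows_eq, h1, det_rows_add_const u (t • c)]
    have h2 : ∀ r : Fin d, Matrix.detRowAlternating (R := ℝ) (Function.update u r (t • c))
        = t * Matrix.detRowAlternating (R := ℝ) (Function.update u r c) := by
      intro r
      have := (Matrix.detRowAlternating (R := ℝ) (n := Fin d)).map_update_smul u r t c
      simpa using this
    rw [Finset.sum_congr rfl fun r _ => h2 r, ← Finset.mul_sum, detRows_eq]
  have hAB : a • A + b • B = A - b • c := by
    funext i
    simp [hc, Pi.sub_apply, smul_sub]
    have : a = 1 - b := by linarith
    rw [this]; ring
  have hB : B = A - (1:ℝ) • c := by funext i; simp [hc]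
  rw [hAB, key b, hB, key 1]
  have ha : a = 1 - b := by linarith
  rw [ha]; ring

private lemma detRows_convex_pos {d : ℕ} (f : Fin d → (Fin d → ℝ)) :
    Convex ℝ {X : Fin d → ℝ | 0 < detRows f X} := by
  intro X hX Y hY a b ha hb hab
  have := detRows_line f X Y hab
  simp only [Set.mem_setOf_eq] at hX hY ⊢
  rw [this]
  rcases eq_or_lt_of_le ha with h | h
  · rw [← h] at hab ⊢; simpa using mul_pos (by linarith : (0:ℝ) < b) hY
  · nlinarith
private lemma detRows_convex_neg {d : ℕ} (f : Fin d → (Fin d → ℝ)) :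
    Convex ℝ {X : Fin d → ℝ | detRows f X < 0} := by
  intro X hX Y hY a b ha hb hab
  have := detRows_line f X Y hab
  simp only [Set.mem_setOf_eq] at hX hY ⊢
  rw [this]
  rcases eq_or_lt_of_le ha with h | h
  · rw [← h] at hab ⊢; simpa using mul_neg_of_pos_of_neg (by linarith : (0:ℝ) < b) hY
  · nlinarith

private lemma detRows_continuous {d : ℕ} (f : Fin d → (Fin d → ℝ)) :
    Continuous (detRows f) := by
  apply Continuous.matrix_det
  apply continuous_matrix
  intro r c
  show Continuous fun X : Fin d → ℝ => f r c - X c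
  exact continuous_const.sub (continuous_apply c)

private lemma detRows_eq_zero_of_mem_span {d : ℕ} (f : Fin d → (Fin d → ℝ)) {X : Fin d → ℝ}
    (hX : X ∈ affineSpan ℝ (Set.range f)) : detRows f X = 0 := by
  classical
  obtain ⟨w, hw, hXw⟩ := eq_affineCombination_of_mem_affineSpan_of_fintype hX
  rw [Finset.affineCombination_eq_linear_combination _ _ _ hw] at hXw
  unfold detRows
  rw [← Matrix.exists_vecMul_eq_zero_iff]
  refine ⟨w, fun h0 => by simp [h0] at hw, ?_⟩
  funext j
  have : ∑ r : Fin d, w r • (f r - X) = 0 := by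
    have : ∑ r : Fin d, w r • (f r - X) = (∑ r : Fin d, w r • f r) - (∑ r : Fin d, w r) • X := by
      rw [Finset.sum_smul, ← Finset.sum_sub_distrib]
      exact Finset.sum_congr rfl fun r _ => smul_sub (w r) (f r) X
    rw [this, hw, ← hXw]; simp
  have hj := congrFun this j
  simpa [Matrix.vecMul, dotProduct, mul_comm] using hj

private lemma mem_span_of_detRows_eq_zero {d : ℕ} {f : Fin d → (Fin d → ℝ)}
    (hf : AffineIndependent ℝ f) {X : Fin d → ℝ} (h : detRows f X = 0) :
    X ∈ affineSpan ℝ (Set.range f) := by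
  classical
  unfold detRows at h
  obtain ⟨v, hv0, hvM⟩ := Matrix.exists_vecMul_eq_zero_iff.2 h
  have hsum : ∑ r : Fin d, v r • (f r - X) = 0 := by
    funext j
    have hj := congrFun hvM j
    simpa [Matrix.vecMul, dotProduct, mul_comm] using hj
  have hsum' : ∑ r : Fin d, v r • f r = (∑ r : Fin d, v r) • X := by
    have : ∑ r : Fin d, v r • (f r - X) = (∑ r : Fin d, v r • f r) - (∑ r : Fin d, v r) • X := by
      rw [Finset.sum_smul, ← Finset.sum_sub_distrib]
      exact Finset.sum_congr rfl fun r _ => smul_sub (v r) (f r) X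
    rw [this] at hsum
    exact sub_eq_zero.1 hsum
  by_cases hs : (∑ r : Fin d, v r) = 0
  · exfalso
    have hz := affineIndependent_iff.1 hf Finset.univ v (by simpa using hs)
      (by rw [hsum', hs, zero_smul])
    exact hv0 (funext fun r => hz r (Finset.mem_univ r))
  · set s : ℝ := ∑ r : Fin d, v r with hsdef
    set w : Fin d → ℝ := fun r => v r / s with hwdef
    have hw : ∑ r : Fin d, w r = 1 := by
      simp only [hwdef, ← Finset.sum_div]
      field_simp
      exact hsdef.symm
    have hmem := affineCombination_mem_affineSpan hw f
    rw [Finset.affineCombination_eq_linear_combination _ _ _ hw] at hmem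
    have hXeq : ∑ r : Fin d, w r • f r = X := by
      have : ∑ r : Fin d, w r • f r = s⁻¹ • ∑ r : Fin d, v r • f r := by
        rw [Finset.smul_sum]
        exact Finset.sum_congr rfl fun r _ => by
          rw [smul_smul, hwdef]; congr 1; field_simp
      rw [this, hsum', smul_smul, inv_mul_cancel₀ hs, one_smul]
    rwa [hXeq] at hmem

private lemma separates_iff_detRows_mul_neg {d : ℕ} {S : Finset (Fin d → ℝ)}
    {f : Fin d → (Fin d → ℝ)} (hf : AffineIndependent ℝ f)
    (hrange : Set.range f = (S : Set (Fin d → ℝ)))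
    {A B : Fin d → ℝ} (hA : detRows f A ≠ 0) (hB : detRows f B ≠ 0) :
    Separates S A B ↔ detRows f A * detRows f B < 0 := by
  have hspan : (affineSpan ℝ (S : Set (Fin d → ℝ)) : Set (Fin d → ℝ))
      = {X | detRows f X = 0} := by
    rw [← hrange]
    ext X
    exact ⟨fun h => detRows_eq_zero_of_mem_span f h, fun h => mem_span_of_detRows_eq_zero hf h⟩
  set H := (affineSpan ℝ (S : Set (Fin d → ℝ)) : Set (Fin d → ℝ)) with hH
  have hAH : A ∉ H := by rw [hspan]; exact hA
  have hBH : B ∉ H := by rw [hspan]; exact hB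
  have hcsub : ∀ X : Fin d → ℝ, detRows f X ≠ 0 → X ∈ Hᶜ := by
    intro X hX
    rw [Set.mem_compl_iff, hspan]; exact hX
  constructor
  · rintro ⟨-, -, hcomp⟩
    by_contra hpos
    push_neg at hpos
    have hpos' : 0 < detRows f A * detRows f B :=
      lt_of_le_of_ne hpos (Ne.symm (mul_ne_zero hA hB))
    rcases mul_pos_iff.1 hpos' with ⟨hA2, hB2⟩ | ⟨hA2, hB2⟩
    · exact hcomp ((detRows_convex_pos f).isPreconnected.subset_connectedComponentIn hB2
        (fun X hX => hcsub X (ne_of_gt hX)) hA2)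
    · exact hcomp ((detRows_convex_neg f).isPreconnected.subset_connectedComponentIn hB2
        (fun X hX => hcsub X (ne_of_lt hX)) hA2)
  · intro hlt
    refine ⟨hAH, hBH, ?_⟩
    intro hmem
    have hBK : B ∈ connectedComponentIn Hᶜ B := mem_connectedComponentIn hBH
    have hcont : ContinuousOn (detRows f) (connectedComponentIn Hᶜ B) :=
      (detRows_continuous f).continuousOn
    have hKsub : connectedComponentIn Hᶜ B ⊆ Hᶜ := connectedComponentIn_subset _ _
    have hzero : ∃ X ∈ connectedComponentIn Hᶜ B, detRows f X = 0 := by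
      rcases mul_neg_iff.1 hlt with ⟨hA2, hB2⟩ | ⟨hA2, hB2⟩
      · have := isPreconnected_connectedComponentIn.intermediate_value hBK hmem hcont
          (Set.mem_Icc.2 ⟨le_of_lt hB2, le_of_lt hA2⟩)
        obtain ⟨X, hXK, hX0⟩ := this
        exact ⟨X, hXK, hX0⟩
      · have := isPreconnected_connectedComponentIn.intermediate_value hmem hBK hcont
          (Set.mem_Icc.2 ⟨le_of_lt hA2, le_of_lt hB2⟩)
        obtain ⟨X, hXK, hX0⟩ := this
        exact ⟨X, hXK, hX0⟩
    obtain ⟨X, hXK, hX0⟩ := hzero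
    have : X ∈ H := by rw [hspan]; exact hX0
    exact (hKsub hXK) this


private lemma detRows_ne_zero_of_generic {d : ℕ} {P S : Finset (Fin d → ℝ)} (hgen : Generic P)
    (hSP : S ⊆ P) (hScard : S.card = d) {X : Fin d → ℝ} (hXP : X ∈ P) (hXS : X ∉ S)
    {f : Fin d → (Fin d → ℝ)} (hfinj : Function.Injective f)
    (hrange : Set.range f = (S : Set (Fin d → ℝ))) :
    detRows f X ≠ 0 := by
  classical
  intro h
  unfold detRows at h
  obtain ⟨v, hv0, hvM⟩ := Matrix.exists_vecMul_eq_zero_iff.2 h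
  have hsum : ∑ r : Fin d, v r • (f r - X) = 0 := by
    funext j
    have hj := congrFun hvM j
    simpa [Matrix.vecMul, dotProduct, mul_comm] using hj
  have hfS : ∀ r : Fin d, f r ∈ S := by
    intro r
    have : f r ∈ Set.range f := Set.mem_range_self r
    rwa [hrange, Finset.mem_coe] at this
  have hfX : ∀ r : Fin d, f r ≠ X := fun r hr => hXS (hr ▸ hfS r)
  set w : (Fin d → ℝ) → ℝ := fun y =>
    (if y = X then -(∑ r : Fin d, v r) else 0)
      + ∑ r ∈ Finset.univ.filter (fun r => f r = y), v r with hwdef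
  have hTsub : insert X S ⊆ P := Finset.insert_subset hXP hSP
  have hTcard : (insert X S).card ≤ d + 1 := by
    rw [Finset.card_insert_of_notMem hXS, hScard]
  have hind := hgen (insert X S) hTsub hTcard
  have hwX : w X = -(∑ r : Fin d, v r) := by
    have : Finset.univ.filter (fun r => f r = X) = ∅ :=
      Finset.filter_eq_empty_iff.2 (fun {r} _ => hfX r)
    simp [hwdef, this]
  have hwS : ∀ y ∈ S, w y = ∑ r ∈ Finset.univ.filter (fun r => f r = y), v r := by
    intro y hy
    have : y ≠ X := fun hyX => hXS (hyX ▸ hy)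
    simp [hwdef, this]
  have hsum0 : ∑ y ∈ insert X S, w y = 0 := by
    rw [Finset.sum_insert hXS, hwX]
    rw [Finset.sum_congr rfl hwS]
    rw [Finset.sum_fiberwise_of_maps_to (fun r _ => hfS r) v]
    ring
  have hsum1 : ∑ y ∈ insert X S, w y • y = 0 := by
    rw [Finset.sum_insert hXS, hwX]
    have : ∀ y ∈ S, w y • y = ∑ r ∈ Finset.univ.filter (fun r => f r = y), v r • f r := by
      intro y hy
      rw [hwS y hy, Finset.sum_smul]
      exact Finset.sum_congr rfl fun r hr => by
        rw [(Finset.mem_filter.1 hr).2]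
    rw [Finset.sum_congr rfl this, Finset.sum_fiberwise_of_maps_to (fun r _ => hfS r)]
    have expand : ∑ r : Fin d, v r • (f r - X)
        = (∑ r : Fin d, v r • f r) - (∑ r : Fin d, v r) • X := by
      rw [Finset.sum_smul, ← Finset.sum_sub_distrib]
      exact Finset.sum_congr rfl fun r _ => smul_sub (v r) (f r) X
    rw [expand] at hsum
    have := sub_eq_zero.1 hsum
    rw [this, neg_smul]
    exact neg_add_cancel _
  have hall := AffineIndependent.eq_zero_of_sum_eq_zero_subtype hind hsum0 hsum1
  apply hv0
  funext r
  have hwfr := hall (f r) (Finset.mem_insert_of_mem (hfS r))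
  have : Finset.univ.filter (fun r' => f r' = f r) = {r} := by
    ext r'
    simp only [Finset.mem_filter, Finset.mem_univ, true_and, Finset.mem_singleton]
    exact ⟨fun h' => hfinj h', fun h' => h' ▸ rfl⟩
  rw [hwS (f r) (hfS r), this, Finset.sum_singleton] at hwfr
  exact hwfr


private lemma detPair_props {d : ℕ} {P : Finset (Fin d → ℝ)} (hgen : Generic P)
    {A B : Fin d → ℝ} (hA : A ∈ P) (hB : B ∈ P) {S : Finset (Fin d → ℝ)}
    (hS : S ∈ (P \ {A, B}).powersetCard d) :
    detPair S A B ≠ 0 ∧ (detPair S A B < 0 ↔ Separates S A B) := by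
  classical
  obtain ⟨hsub, hcard⟩ := Finset.mem_powersetCard.1 hS
  have hSP : S ⊆ P := hsub.trans (Finset.sdiff_subset)
  have hAS : A ∉ S := by
    intro h
    have := hsub h
    simp [Finset.mem_sdiff] at this
  have hBS : B ∉ S := by
    intro h
    have := hsub h
    simp [Finset.mem_sdiff] at this
  set f : Fin d → (Fin d → ℝ) :=
    fun r => ((S.equivFin.symm (Fin.cast hcard.symm r)) : Fin d → ℝ) with hfdef
  have hfinj : Function.Injective f := by
    intro a b hab
    have h1 := Subtype.coe_injective hab
    have h2 := S.equivFin.symm.injective h1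
    exact (finCongr hcard.symm).injective h2
  have hrange : Set.range f = (S : Set (Fin d → ℝ)) := by
    have : f = (fun x : S => (x : Fin d → ℝ)) ∘ ((finCongr hcard.symm).trans S.equivFin.symm) := rfl
    rw [this, Function.Surjective.range_comp (Equiv.surjective _)]
    exact Subtype.range_coe
  have hfind : AffineIndependent ℝ f := by
    have h1 := hgen S hSP (by rw [hcard]; omega)
    exact h1.comp_embedding ((finCongr hcard.symm).trans S.equivFin.symm).toEmbedding
  have hdA : detRows f A ≠ 0 := detRows_ne_zero_of_generic hgen hSP hcard hA hAS hfinj hrange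
  have hdB : detRows f B ≠ 0 := detRows_ne_zero_of_generic hgen hSP hcard hB hBS hfinj hrange
  have hdp : detPair S A B = detRows f A * detRows f B := by
    rw [detPair, dif_pos hcard]
  rw [hdp]
  exact ⟨mul_ne_zero hdA hdB, (separates_iff_detRows_mul_neg hfind hrange hdA hdB).symm⟩

/-- Proposition 3.1: for distinct points `A, B` of a generic configuration
`P` of `n` points in `ℝ^d`, the Orchard relation `A ∼ B` holds iff
`(-1)^{binom (n-3) (d-1)} ∏_S det(S-A)·det(S-B) > 0`, the product running over all
`d`-element subsets `S` of `P \ {A,B}`. -/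
theorem orchard_det_criterion {d : ℕ} (P : Finset (Fin d → ℝ)) (hgen : Generic P)
    (A B : Fin d → ℝ) (hA : A ∈ P) (hB : B ∈ P) (hAB : A ≠ B) :
    (OrchardRel P A B ↔
      0 < (-1 : ℝ) ^ (Nat.choose (P.card - 3) (d - 1)) *
        ∏ S ∈ (P \ {A, B}).powersetCard d, detPair S A B) := by
  classical
  set 𝒮 := (P \ {A, B}).powersetCard d with h𝒮
  set c := Nat.choose (P.card - 3) (d - 1) with hc
  have key : ∀ S ∈ 𝒮, detPair S A B ≠ 0 ∧ (detPair S A B < 0 ↔ Separates S A B) :=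
    fun S hS => detPair_props hgen hA hB hS
  set t := 𝒮.filter (fun S => Separates S A B) with ht
  have hsplit : ∏ S ∈ 𝒮, detPair S A B
      = (∏ S ∈ t, detPair S A B) * ∏ S ∈ 𝒮.filter (fun S => ¬ Separates S A B), detPair S A B :=
    (Finset.prod_filter_mul_prod_filter_not 𝒮 _ _).symm
  have hpos2 : 0 < ∏ S ∈ 𝒮.filter (fun S => ¬ Separates S A B), detPair S A B := by
    apply Finset.prod_pos
    intro S hS
    obtain ⟨hS𝒮, hnsep⟩ := Finset.mem_filter.1 hS
    rcases (key S hS𝒮).1.lt_or_gt with h | h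
    · exact absurd (((key S hS𝒮).2).1 h) hnsep
    · exact h
  have hpos1 : 0 < ∏ S ∈ t, -detPair S A B := by
    apply Finset.prod_pos
    intro S hS
    obtain ⟨hS𝒮, hsep⟩ := Finset.mem_filter.1 hS
    have := ((key S hS𝒮).2).2 hsep
    linarith
  have hneg : ∏ S ∈ t, detPair S A B = (-1 : ℝ) ^ t.card * ∏ S ∈ t, -detPair S A B := by
    rw [← Finset.prod_const, ← Finset.prod_mul_distrib]
    exact Finset.prod_congr rfl fun S _ => by ring
  have hsep_eq : sepCount P A B = t.card := by
    rw [sepCount, ht, h𝒮]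
  have horch : OrchardRel P A B ↔ sepCount P A B % 2 = c % 2 := by
    rw [OrchardRel]
    exact ⟨fun h => h.resolve_left hAB, fun h => Or.inr h⟩
  rw [horch, hsep_eq, hsplit, hneg]
  set k := t.card
  set q : ℝ := (∏ S ∈ t, -detPair S A B) * ∏ S ∈ 𝒮.filter (fun S => ¬ Separates S A B), detPair S A B with hq
  have hqpos : 0 < q := mul_pos hpos1 hpos2
  have harr : (-1 : ℝ) ^ c * ((-1 : ℝ) ^ k * (∏ S ∈ t, -detPair S A B)
      * ∏ S ∈ 𝒮.filter (fun S => ¬ Separates S A B), detPair S A B) = (-1 : ℝ) ^ (c + k) * q := by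
    rw [pow_add, hq]; ring
  rw [harr]
  constructor
  · intro hmod
    have heven : Even (c + k) := Nat.even_iff.2 (by omega)
    rw [heven.neg_one_pow, one_mul]
    exact hqpos
  · intro hpos
    by_contra hne
    have hodd : Odd (c + k) := Nat.odd_iff.2 (by omega)
    rw [hodd.neg_one_pow] at hpos
    linarith
end

section
/- Theorem 4.1A (Projective Orchard Theorem, well-definedness): Let P be a generic configuration of n points in RP^d with binom(n-2,d) even. For any projective hyperplane H ⊂ RP^d disjoint from P, identifying RP^d \ H with R^d yields an affine generic configuration whose Orchard partition into two classes does not depend on the choice of H. Hence there is a natural partition of P into at most two classes. -/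
open Finset
attribute [local instance] Classical.propDecidable

/-- `d`-dimensional real projective space. -/
abbrev ProjSp (d : ℕ) := Projectivization ℝ (Fin (d + 1) → ℝ)

/-- A finite set of points of `RP^d` is generic if no `k+1 ≤ d+1` of its points lie in a
projective subspace of dimension `< k`, i.e. representatives of any at most `d+1` of the
points are linearly independent. -/
def GenericProj {d : ℕ} (Q : Finset (ProjSp d)) : Prop :=
  ∀ S : Finset (ProjSp d), S ⊆ Q → S.card ≤ d + 1 →
    LinearIndependent ℝ (fun x : S => Projectivization.rep (x : ProjSp d))

/-- The affine chart associated with a linear form `f`: a point `x` of `RP^d` with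
`f` nonvanishing on it is sent to its unique representative in the affine hyperplane
`{v | f v = 1}` (a copy of `ℝ^d`). -/
noncomputable def chart {d : ℕ} (f : (Fin (d + 1) → ℝ) →ₗ[ℝ] ℝ) (x : ProjSp d) :
    Fin (d + 1) → ℝ :=
  (f x.rep)⁻¹ • x.rep

/-- `H` separates `A` from `B` inside the ambient set `Amb`: both points lie in `Amb \ H`
and in different connected components of `Amb \ H`. -/
def SeparatesIn {d : ℕ} (Amb H : Set (Fin (d + 1) → ℝ)) (A B : Fin (d + 1) → ℝ) : Prop :=
  A ∈ Amb \ H ∧ B ∈ Amb \ H ∧ A ∉ connectedComponentIn (Amb \ H) B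

/-- The number of hyperplanes of the affine chart `Amb` spanned by `d` points of
`Q \ {A, B}` which separate `A` from `B` in `Amb`. -/
noncomputable def sepCountIn {d : ℕ} (Amb : Set (Fin (d + 1) → ℝ))
    (Q : Finset (Fin (d + 1) → ℝ)) (A B : Fin (d + 1) → ℝ) : ℕ :=
  (((Q \ {A, B}).powersetCard d).filter (fun S =>
    SeparatesIn Amb (affineSpan ℝ (S : Set (Fin (d + 1) → ℝ)) :
      Set (Fin (d + 1) → ℝ)) A B)).card

/-- The Orchard relation of the projective configuration `Q` read in the affine chart
given by the linear form `f`. -/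
noncomputable def ChartRel {d : ℕ} (f : (Fin (d + 1) → ℝ) →ₗ[ℝ] ℝ)
    (Q : Finset (ProjSp d)) (x y : ProjSp d) : Prop :=
  x = y ∨ sepCountIn {v | f v = 1} (Q.image (chart f)) (chart f x) (chart f y) % 2 =
    Nat.choose (Q.card - 3) (d - 1) % 2

open Module Projectivization

variable {d : ℕ}

lemma projsp0_eq (x y : ProjSp 0) : x = y := by
  have hx := x.rep_nonzero
  have hy := y.rep_nonzero
  have hx0 : x.rep 0 ≠ 0 := by
    intro h; apply hx; funext i
    have : i = 0 := by apply Fin.ext; have := i.is_lt; omega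
    rw [this, h]; rfl
  have hy0 : y.rep 0 ≠ 0 := by
    intro h; apply hy; funext i
    have : i = 0 := by apply Fin.ext; have := i.is_lt; omega
    rw [this, h]; rfl
  rw [← x.mk_rep, ← y.mk_rep, Projectivization.mk_eq_mk_iff']
  refine ⟨x.rep 0 / y.rep 0, ?_⟩
  funext i
  have : i = 0 := by apply Fin.ext; have := i.is_lt; omega
  subst this
  simp [div_mul_cancel₀, hy0]

lemma chart_ne_zero {f : (Fin (d + 1) → ℝ) →ₗ[ℝ] ℝ} {x : ProjSp d} (hx : f x.rep ≠ 0) :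
    chart f x ≠ 0 := smul_ne_zero (inv_ne_zero hx) x.rep_nonzero

lemma f_chart {f : (Fin (d + 1) → ℝ) →ₗ[ℝ] ℝ} {x : ProjSp d} (hx : f x.rep ≠ 0) :
    f (chart f x) = 1 := by
  simp only [chart, map_smul, smul_eq_mul]
  exact inv_mul_cancel₀ hx

lemma chart_mk {f : (Fin (d + 1) → ℝ) →ₗ[ℝ] ℝ} {x : ProjSp d} (hx : f x.rep ≠ 0) :
    Projectivization.mk ℝ (chart f x) (chart_ne_zero hx) = x := by
  conv_rhs => rw [← x.mk_rep]
  rw [Projectivization.mk_eq_mk_iff']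
  exact ⟨(f x.rep)⁻¹, rfl⟩

lemma chart_inj {f : (Fin (d + 1) → ℝ) →ₗ[ℝ] ℝ} {x y : ProjSp d} (hx : f x.rep ≠ 0)
    (hy : f y.rep ≠ 0) (h : chart f x = chart f y) : x = y := by
  rw [← chart_mk hx, ← chart_mk hy]
  exact Projectivization.mk_eq_mk_iff' ℝ _ _ _ _ |>.2 ⟨1, by rw [one_smul, h]⟩

lemma rep_not_mem_span {Q : Finset (ProjSp d)} (hgen : GenericProj Q) {S : Finset (ProjSp d)}
    (hSQ : S ⊆ Q) (hcard : S.card + 1 ≤ d + 1) {x : ProjSp d} (hx : x ∈ Q) (hxS : x ∉ S) :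
    x.rep ∉ Submodule.span ℝ (Projectivization.rep '' (S : Set (ProjSp d))) := by
  have hins : insert x S ⊆ Q := Finset.insert_subset hx hSQ
  have hcard' : (insert x S).card ≤ d + 1 := by
    rw [Finset.card_insert_of_notMem hxS]; exact hcard
  have hli := hgen (insert x S) hins hcard'
  have := hli.notMem_span_image (s := {i : (insert x S : Finset _) | (i : ProjSp d) ∈ S})
    (x := ⟨x, Finset.mem_insert_self x S⟩) (by simpa using hxS)
  have himg : (fun i : (insert x S : Finset _) => Projectivization.rep (i : ProjSp d)) ''
      {i : (insert x S : Finset _) | (i : ProjSp d) ∈ S} =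
      Projectivization.rep '' (S : Set (ProjSp d)) := by
    ext w
    constructor
    · rintro ⟨⟨a, ha⟩, ha', rfl⟩
      exact ⟨a, by simpa using ha', rfl⟩
    · rintro ⟨a, ha, rfl⟩
      exact ⟨⟨a, Finset.mem_insert_of_mem ha⟩, by simpa using ha, rfl⟩
  rw [← himg]
  exact this

lemma finrank_span_S {Q : Finset (ProjSp d)} (hgen : GenericProj Q) {S : Finset (ProjSp d)}
    (hSQ : S ⊆ Q) (hScard : S.card = d) :
    finrank ℝ (Submodule.span ℝ (Projectivization.rep '' (S : Set (ProjSp d)))) = d := by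
  have hli := hgen S hSQ (by omega)
  have hrange : Set.range (fun s : S => Projectivization.rep (s : ProjSp d)) =
      Projectivization.rep '' (S : Set (ProjSp d)) := by
    ext w
    constructor
    · rintro ⟨⟨a, ha⟩, rfl⟩; exact ⟨a, ha, rfl⟩
    · rintro ⟨a, ha, rfl⟩; exact ⟨⟨a, ha⟩, rfl⟩
  rw [← hrange, finrank_span_eq_card hli, Fintype.card_coe, hScard]

lemma exists_phi {Q : Finset (ProjSp d)} (hgen : GenericProj Q) {S : Finset (ProjSp d)}
    (hSQ : S ⊆ Q) (hScard : S.card = d) :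
    ∃ φ : (Fin (d + 1) → ℝ) →ₗ[ℝ] ℝ,
      LinearMap.ker φ = Submodule.span ℝ (Projectivization.rep '' (S : Set (ProjSp d))) := by
  set W := Submodule.span ℝ (Projectivization.rep '' (S : Set (ProjSp d))) with hW
  have hfin : finrank ℝ W = d := finrank_span_S hgen hSQ hScard
  have htop : finrank ℝ (Fin (d + 1) → ℝ) = d + 1 := by
    rw [finrank_fintype_fun_eq_card, Fintype.card_fin]
  have hlt : W < ⊤ := by
    rw [lt_top_iff_ne_top]
    intro h
    rw [h, finrank_top, htop] at hfin
    omega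
  obtain ⟨φ, hφ0, hmap⟩ := Submodule.exists_dual_map_eq_bot_of_lt_top hlt inferInstance
  refine ⟨φ, ?_⟩
  have hle : W ≤ LinearMap.ker φ := by
    intro w hw
    rw [LinearMap.mem_ker]
    have : φ w ∈ W.map φ := Submodule.mem_map_of_mem hw
    rwa [hmap, Submodule.mem_bot] at this
  have hrange1 : finrank ℝ (LinearMap.range φ) = 1 := by
    have h1 : finrank ℝ (LinearMap.range φ) ≤ 1 := by
      simpa using (LinearMap.range φ).finrank_le
    have h0 : finrank ℝ (LinearMap.range φ) ≠ 0 := by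
      rw [Ne, Submodule.finrank_eq_zero]
      intro h
      exact hφ0 (LinearMap.range_eq_bot.1 h)
    omega
  have hker : finrank ℝ (LinearMap.ker φ) = d := by
    have := LinearMap.finrank_range_add_finrank_ker φ
    rw [hrange1, htop] at this
    omega
  exact (Submodule.eq_of_le_of_finrank_eq hle (by rw [hfin, hker])).symm

/-- The affine subspace `{f = 1} ∩ {φ = 0}`. -/
noncomputable def slabK (f φ : (Fin (d + 1) → ℝ) →ₗ[ℝ] ℝ) : AffineSubspace ℝ (Fin (d + 1) → ℝ) where
  carrier := {v | f v = 1 ∧ φ v = 0}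
  smul_vsub_vadd_mem' := by
    intro c p1 p2 p3 h1 h2 h3
    constructor
    · show f (c • (p1 -ᵥ p2) +ᵥ p3) = 1
      simp only [vsub_eq_sub, vadd_eq_add, map_add, map_smul, map_sub, smul_eq_mul,
        h1.1, h2.1, h3.1]
      ring
    · show φ (c • (p1 -ᵥ p2) +ᵥ p3) = 0
      simp only [vsub_eq_sub, vadd_eq_add, map_add, map_smul, map_sub, smul_eq_mul,
        h1.2, h2.2, h3.2]
      ring

lemma finrank_ker_of_ne {h : (Fin (d + 1) → ℝ) →ₗ[ℝ] ℝ} {v : Fin (d + 1) → ℝ}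
    (hv : h v ≠ 0) : finrank ℝ (LinearMap.ker h) = d := by
  have htop : finrank ℝ (Fin (d + 1) → ℝ) = d + 1 := by
    rw [finrank_fintype_fun_eq_card, Fintype.card_fin]
  have hrange1 : finrank ℝ (LinearMap.range h) = 1 := by
    have h1 : finrank ℝ (LinearMap.range h) ≤ 1 := by
      simpa using (LinearMap.range h).finrank_le
    have h0 : finrank ℝ (LinearMap.range h) ≠ 0 := by
      rw [Ne, Submodule.finrank_eq_zero]
      intro hb
      exact hv (by simpa using LinearMap.congr_fun (LinearMap.range_eq_bot.1 hb) v)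
    omega
  have := LinearMap.finrank_range_add_finrank_ker h
  rw [hrange1, htop] at this
  omega

lemma affineSpan_chart_eq (hd : 1 ≤ d) {Q : Finset (ProjSp d)} (hgen : GenericProj Q)
    {f : (Fin (d + 1) → ℝ) →ₗ[ℝ] ℝ} (hfQ : ∀ x ∈ Q, f x.rep ≠ 0)
    {S : Finset (ProjSp d)} (hSQ : S ⊆ Q) (hScard : S.card = d)
    {φ : (Fin (d + 1) → ℝ) →ₗ[ℝ] ℝ}
    (hφ : LinearMap.ker φ = Submodule.span ℝ (Projectivization.rep '' (S : Set (ProjSp d)))) :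
    ((affineSpan ℝ ((S.image (chart f)) : Set (Fin (d + 1) → ℝ))) : Set (Fin (d + 1) → ℝ))
      = {v | f v = 1 ∧ φ v = 0} := by
  have hfS : ∀ s ∈ S, f s.rep ≠ 0 := fun s hs => hfQ s (hSQ hs)
  have hSne : S.Nonempty := Finset.card_pos.1 (by omega)
  obtain ⟨s₀, hs₀⟩ := hSne
  have hφrep : ∀ s ∈ S, φ s.rep = 0 := by
    intro s hs
    have : s.rep ∈ Submodule.span ℝ (Projectivization.rep '' (S : Set (ProjSp d))) :=
      Submodule.subset_span ⟨s, hs, rfl⟩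
    rw [← hφ] at this
    exact this
  have hgen_pts : ∀ s ∈ S, (chart f s) ∈ slabK f φ := by
    intro s hs
    exact ⟨f_chart (hfS s hs), by
      show φ ((f s.rep)⁻¹ • s.rep) = 0
      rw [map_smul, hφrep s hs, smul_zero]⟩
  have hle : affineSpan ℝ ((S.image (chart f)) : Set (Fin (d + 1) → ℝ)) ≤ slabK f φ := by
    rw [affineSpan_le]
    intro v hv
    obtain ⟨s, hs, rfl⟩ := Finset.mem_coe.1 hv |> Finset.mem_image.1
    exact hgen_pts s hs
  -- affine independence of chart points
  have hli := hgen S hSQ (by omega)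
  have hliC : LinearIndependent ℝ (fun s : S => chart f (s : ProjSp d)) := by
    have := hli.units_smul (w := fun s : S =>
      Units.mk0 ((f (Projectivization.rep (s : ProjSp d)))⁻¹)
        (inv_ne_zero (hfS s s.2)))
    convert this using 1
    funext s; rfl
  have haff : AffineIndependent ℝ (fun s : S => chart f (s : ProjSp d)) := by
    rw [affineIndependent_iff]
    intro t w _ hsum e he
    exact linearIndependent_iff'.1 hliC t w hsum e he
  have hrange : Set.range (fun s : S => chart f (s : ProjSp d)) =
      ((S.image (chart f)) : Set (Fin (d + 1) → ℝ)) := by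
    ext w
    simp only [Set.mem_range, Finset.coe_image, Set.mem_image, Finset.mem_coe]
    constructor
    · rintro ⟨⟨a, ha⟩, rfl⟩; exact ⟨a, ha, rfl⟩
    · rintro ⟨a, ha, rfl⟩; exact ⟨⟨a, ha⟩, rfl⟩
  have hfinH : finrank ℝ (affineSpan ℝ ((S.image (chart f)) :
      Set (Fin (d + 1) → ℝ))).direction = d - 1 := by
    rw [← hrange, direction_affineSpan]
    exact haff.finrank_vectorSpan (by rw [Fintype.card_coe, hScard]; omega)
  -- direction of slabK
  have hmemK : chart f s₀ ∈ slabK f φ := hgen_pts s₀ hs₀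
  have hdirK : (slabK f φ).direction = LinearMap.ker f ⊓ LinearMap.ker φ := by
    apply le_antisymm
    · intro v hv
      rw [AffineSubspace.mem_direction_iff_eq_vsub ⟨_, hmemK⟩] at hv
      obtain ⟨p1, hp1, p2, hp2, rfl⟩ := hv
      rw [Submodule.mem_inf]
      refine ⟨LinearMap.mem_ker.2 ?_, LinearMap.mem_ker.2 ?_⟩
      · show f (p1 -ᵥ p2) = 0
        rw [vsub_eq_sub, map_sub, hp1.1, hp2.1, sub_self]
      · show φ (p1 -ᵥ p2) = 0
        rw [vsub_eq_sub, map_sub, hp1.2, hp2.2, sub_self]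
    · intro v hv
      rw [Submodule.mem_inf] at hv
      have h1 : v + chart f s₀ ∈ slabK f φ := by
        constructor
        · show f (v + chart f s₀) = 1
          rw [map_add, LinearMap.mem_ker.1 hv.1, hmemK.1, zero_add]
        · show φ (v + chart f s₀) = 0
          rw [map_add, LinearMap.mem_ker.1 hv.2, hmemK.2, zero_add]
      have : v = (v + chart f s₀) -ᵥ chart f s₀ := by rw [vsub_eq_sub]; ring
      rw [this]
      exact AffineSubspace.vsub_mem_direction h1 hmemK
  have htop : finrank ℝ (Fin (d + 1) → ℝ) = d + 1 := by
    rw [finrank_fintype_fun_eq_card, Fintype.card_fin]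
  have hkf : finrank ℝ (LinearMap.ker f) = d := finrank_ker_of_ne (hfS s₀ hs₀)
  have hkφ : finrank ℝ (LinearMap.ker φ) = d := by
    rw [hφ]; exact finrank_span_S hgen hSQ hScard
  have hsup : LinearMap.ker f ⊔ LinearMap.ker φ = ⊤ := by
    by_contra hne
    have hlt : LinearMap.ker f ⊔ LinearMap.ker φ < ⊤ := lt_top_iff_ne_top.2 hne
    have hfin := Submodule.finrank_lt (K := ℝ) (V := Fin (d + 1) → ℝ) hlt.ne
    rw [htop] at hfin
    have h1 : LinearMap.ker f = LinearMap.ker f ⊔ LinearMap.ker φ :=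
      Submodule.eq_of_le_of_finrank_le le_sup_left (by omega)
    have h2 : LinearMap.ker φ = LinearMap.ker f ⊔ LinearMap.ker φ :=
      Submodule.eq_of_le_of_finrank_le le_sup_right (by omega)
    have : φ s₀.rep = 0 := hφrep s₀ hs₀
    have hmem : s₀.rep ∈ LinearMap.ker f := by
      rw [h1, ← h2]
      exact LinearMap.mem_ker.2 this
    exact hfS s₀ hs₀ (LinearMap.mem_ker.1 hmem)
  have hfinK : finrank ℝ (slabK f φ).direction = d - 1 := by
    have := Submodule.finrank_sup_add_finrank_inf_eq (LinearMap.ker f) (LinearMap.ker φ)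
    rw [hsup, finrank_top, htop, hkf, hkφ] at this
    rw [hdirK]
    omega
  have hdireq : (affineSpan ℝ ((S.image (chart f)) : Set (Fin (d + 1) → ℝ))).direction
      = (slabK f φ).direction :=
    Submodule.eq_of_le_of_finrank_eq (AffineSubspace.direction_le hle) (by rw [hfinH, hfinK])
  have heq : affineSpan ℝ ((S.image (chart f)) : Set (Fin (d + 1) → ℝ)) = slabK f φ := by
    apply AffineSubspace.ext_of_direction_eq hdireq
    refine ⟨chart f s₀, ?_, hmemK⟩
    exact subset_affineSpan ℝ _ (by
      exact Finset.mem_coe.2 (Finset.mem_image.2 ⟨s₀, hs₀, rfl⟩))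
  rw [heq]
  rfl

lemma seg_pos {a b u t : ℝ} (ha : 0 < a) (hb : 0 < b) (hu : 0 ≤ u) (ht : 0 ≤ t)
    (h : u + t = 1) : 0 < u * a + t * b := by
  rcases eq_or_lt_of_le hu with h0 | h0
  · have ht1 : t = 1 := by linarith
    rw [← h0, ht1]; simpa using hb
  · have h1 : 0 < u * a := mul_pos h0 ha
    have h2 : 0 ≤ t * b := mul_nonneg ht hb.le
    linarith

lemma mul_inv_sign {a b : ℝ} (hb : b ≠ 0) : a * b⁻¹ < 0 ↔ a * b < 0 := by
  have h1 : a * b = a * b⁻¹ * (b * b) := by field_simp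
  have h2 : a * b⁻¹ = a * b * (b⁻¹ * b⁻¹) := by field_simp
  constructor
  · intro hh
    rw [h1]
    exact mul_neg_of_neg_of_pos hh (mul_self_pos.2 hb)
  · intro hh
    rw [h2]
    exact mul_neg_of_neg_of_pos hh (mul_self_pos.2 (inv_ne_zero hb))

lemma sep_criterion (hd : 1 ≤ d) {Q : Finset (ProjSp d)} (hgen : GenericProj Q)
    {f : (Fin (d + 1) → ℝ) →ₗ[ℝ] ℝ} (hfQ : ∀ x ∈ Q, f x.rep ≠ 0)
    {S : Finset (ProjSp d)} (hSQ : S ⊆ Q) (hScard : S.card = d)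
    {x y : ProjSp d} (hx : x ∈ Q) (hy : y ∈ Q) (hxS : x ∉ S) (hyS : y ∉ S)
    {φ : (Fin (d + 1) → ℝ) →ₗ[ℝ] ℝ}
    (hφ : LinearMap.ker φ = Submodule.span ℝ (Projectivization.rep '' (S : Set (ProjSp d)))) :
    SeparatesIn {v | f v = 1}
      ((affineSpan ℝ ((S.image (chart f)) : Set (Fin (d + 1) → ℝ))) : Set (Fin (d + 1) → ℝ))
      (chart f x) (chart f y)
      ↔ (φ x.rep * φ y.rep) * (f x.rep * f y.rep) < 0 := by
  have hfx := hfQ x hx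
  have hfy := hfQ y hy
  have hspan := affineSpan_chart_eq hd hgen hfQ hSQ hScard hφ
  have hφx : φ x.rep ≠ 0 := by
    intro h
    exact rep_not_mem_span hgen hSQ (by omega) hx hxS (hφ ▸ LinearMap.mem_ker.2 h)
  have hφy : φ y.rep ≠ 0 := by
    intro h
    exact rep_not_mem_span hgen hSQ (by omega) hy hyS (hφ ▸ LinearMap.mem_ker.2 h)
  set A := chart f x with hA
  set B := chart f y with hB
  have hφA : φ A = (f x.rep)⁻¹ * φ x.rep := by rw [hA]; simp [chart, map_smul]
  have hφB : φ B = (f y.rep)⁻¹ * φ y.rep := by rw [hB]; simp [chart, map_smul]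
  have hφAne : φ A ≠ 0 := by rw [hφA]; exact mul_ne_zero (inv_ne_zero hfx) hφx
  have hφBne : φ B ≠ 0 := by rw [hφB]; exact mul_ne_zero (inv_ne_zero hfy) hφy
  have hdiff : {v | f v = 1} \
      ((affineSpan ℝ ((S.image (chart f)) : Set (Fin (d + 1) → ℝ))) : Set (Fin (d + 1) → ℝ))
      = {v | f v = 1 ∧ φ v ≠ 0} := by
    rw [hspan]
    ext v
    simp only [Set.mem_diff, Set.mem_setOf_eq]
    tauto
  set F : Set (Fin (d + 1) → ℝ) := {v | f v = 1 ∧ φ v ≠ 0} with hF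
  have hAF : A ∈ F := ⟨f_chart hfx, hφAne⟩
  have hBF : B ∈ F := ⟨f_chart hfy, hφBne⟩
  have key : (A ∉ connectedComponentIn F B) ↔ φ A * φ B < 0 := by
    constructor
    · -- contrapositive: same sign implies joined
      intro hsep
      by_contra hns
      have hprod : 0 < φ A * φ B := (mul_ne_zero hφAne hφBne).lt_or_gt.resolve_left hns
      apply hsep
      have hseg : segment ℝ A B ⊆ F := by
        rintro v ⟨u, t, hu, ht, hut, rfl⟩
        constructor
        · show f (u • A + t • B) = 1
          simp only [map_add, map_smul, smul_eq_mul, hAF.1, hBF.1]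
          linarith
        · show φ (u • A + t • B) ≠ 0
          simp only [map_add, map_smul, smul_eq_mul]
          rcases mul_pos_iff.1 hprod with ⟨h1, h2⟩ | ⟨h1, h2⟩
          · exact ne_of_gt (seg_pos h1 h2 hu ht hut)
          · have hpos : 0 < u * (-(φ A)) + t * (-(φ B)) :=
              seg_pos (by linarith) (by linarith) hu ht hut
            intro hc
            nlinarith [hpos, hc]
      exact (convex_segment A B).isPreconnected.subset_connectedComponentIn
        (right_mem_segment ℝ A B) hseg (left_mem_segment ℝ A B)
    · -- opposite sign implies separated
      intro hprod hmem
      have hconn : IsPreconnected (connectedComponentIn F B) := isPreconnected_connectedComponentIn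
      have hcont : Continuous φ := φ.continuous_of_finiteDimensional
      have himg : IsPreconnected (φ '' connectedComponentIn F B) :=
        hconn.image φ hcont.continuousOn
      have hBmem : B ∈ connectedComponentIn F B := mem_connectedComponentIn hBF
      have hφAimg : φ A ∈ φ '' connectedComponentIn F B := ⟨A, hmem, rfl⟩
      have hφBimg : φ B ∈ φ '' connectedComponentIn F B := ⟨B, hBmem, rfl⟩
      have hzero : (0 : ℝ) ∈ φ '' connectedComponentIn F B := by
        rcases mul_neg_iff.1 hprod with ⟨h1, h2⟩ | ⟨h1, h2⟩
        · exact himg.ordConnected.out hφBimg hφAimg ⟨h2.le, h1.le⟩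
        · exact himg.ordConnected.out hφAimg hφBimg ⟨h1.le, h2.le⟩
      obtain ⟨v, hv, hv0⟩ := hzero
      exact (connectedComponentIn_subset F B hv).2 hv0
  have hmain : SeparatesIn {v | f v = 1}
      ((affineSpan ℝ ((S.image (chart f)) : Set (Fin (d + 1) → ℝ))) : Set (Fin (d + 1) → ℝ))
      A B ↔ φ A * φ B < 0 := by
    unfold SeparatesIn
    rw [hdiff]
    constructor
    · rintro ⟨-, -, h⟩
      exact key.1 h
    · intro h
      exact ⟨hAF, hBF, key.2 h⟩
  rw [hmain, hφA, hφB]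
  have hrw : (f x.rep)⁻¹ * φ x.rep * ((f y.rep)⁻¹ * φ y.rep)
      = (φ x.rep * φ y.rep) * (f x.rep * f y.rep)⁻¹ := by
    rw [mul_inv]
    ring
  rw [hrw, mul_inv_sign (mul_ne_zero hfx hfy)]

/-- Version of the separation count indexed by projective subsets. -/
noncomputable def pcount (f : (Fin (d + 1) → ℝ) →ₗ[ℝ] ℝ) (Q : Finset (ProjSp d))
    (x y : ProjSp d) : ℕ :=
  (((Q \ {x, y}).powersetCard d).filter (fun S => SeparatesIn {v | f v = 1}
    ((affineSpan ℝ ((S.image (chart f)) : Set (Fin (d + 1) → ℝ))) : Set (Fin (d + 1) → ℝ))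
    (chart f x) (chart f y))).card

lemma image_sdiff_pair {Q : Finset (ProjSp d)} {f : (Fin (d + 1) → ℝ) →ₗ[ℝ] ℝ}
    (hfQ : ∀ x ∈ Q, f x.rep ≠ 0) {x y : ProjSp d} (hx : x ∈ Q) (hy : y ∈ Q) :
    (Q.image (chart f)) \ {chart f x, chart f y} = (Q \ {x, y}).image (chart f) := by
  ext a
  simp only [Finset.mem_sdiff, Finset.mem_image, Finset.mem_insert, Finset.mem_singleton]
  constructor
  · rintro ⟨⟨q, hq, rfl⟩, hne⟩
    refine ⟨q, ⟨hq, ?_⟩, rfl⟩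
    push_neg at hne ⊢
    constructor
    · intro h; exact hne.1 (by rw [h])
    · intro h; exact hne.2 (by rw [h])
  · rintro ⟨q, ⟨hq, hne⟩, rfl⟩
    push_neg at hne
    refine ⟨⟨q, hq, rfl⟩, ?_⟩
    push_neg
    constructor
    · intro h; exact hne.1 (chart_inj (hfQ q hq) (hfQ x hx) h)
    · intro h; exact hne.2 (chart_inj (hfQ q hq) (hfQ y hy) h)

lemma bind_eq_image {α β : Type} [DecidableEq β] (W : Finset α) (g : α → β) :
    (do let a ← W; pure (g a)) = W.image g := by
  ext b; simp [Finset.mem_biUnion]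

lemma sepCount_eq_pcount {Q : Finset (ProjSp d)} {f : (Fin (d + 1) → ℝ) →ₗ[ℝ] ℝ}
    (hfQ : ∀ x ∈ Q, f x.rep ≠ 0) {x y : ProjSp d} (hx : x ∈ Q) (hy : y ∈ Q) :
    sepCountIn {v | f v = 1} (Q.image (chart f)) (chart f x) (chart f y) = pcount f Q x y := by
  rw [sepCountIn, pcount, image_sdiff_pair hfQ hx hy, bind_eq_image, Finset.filter_image,
    Finset.card_image_of_injective _ Finset.coe_injective]
  have hinj : ∀ S : Finset (ProjSp d), S ⊆ Q → ∀ T : Finset (ProjSp d), T ⊆ Q →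
      S.image (chart f) = T.image (chart f) → S = T := by
    intro S hS T hT h
    ext a
    constructor
    · intro ha
      have : chart f a ∈ T.image (chart f) := h ▸ Finset.mem_image_of_mem _ ha
      obtain ⟨b, hb, hba⟩ := Finset.mem_image.1 this
      rwa [← chart_inj (hfQ b (hT hb)) (hfQ a (hS ha)) hba]
    · intro ha
      have : chart f a ∈ S.image (chart f) := h ▸ Finset.mem_image_of_mem _ ha
      obtain ⟨b, hb, hba⟩ := Finset.mem_image.1 this
      rwa [← chart_inj (hfQ b (hS hb)) (hfQ a (hT ha)) hba]
  symm
  apply Finset.card_bij (fun S _ => S.image (chart f))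
  · intro S hS
    rw [Finset.mem_filter, Finset.mem_powersetCard] at hS ⊢
    obtain ⟨⟨hsub, hcard⟩, hsep⟩ := hS
    have hsubQ : S ⊆ Q := hsub.trans (Finset.sdiff_subset)
    refine ⟨⟨Finset.image_subset_image hsub, ?_⟩, ?_⟩
    · rw [Finset.card_image_of_injOn (fun a ha b hb h =>
        chart_inj (hfQ a (hsubQ ha)) (hfQ b (hsubQ hb)) h)]
      exact hcard
    · exact hsep
  · intro S hS T hT h
    rw [Finset.mem_filter, Finset.mem_powersetCard] at hS hT
    exact hinj S (hS.1.1.trans Finset.sdiff_subset) T (hT.1.1.trans Finset.sdiff_subset) h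
  · intro S' hS'
    rw [Finset.mem_filter, Finset.mem_powersetCard] at hS'
    obtain ⟨⟨hsub, hcard⟩, hsep⟩ := hS'
    obtain ⟨S, hSsub, rfl⟩ := Finset.subset_image_iff.1 hsub
    have hsubQ : S ⊆ Q := hSsub.trans Finset.sdiff_subset
    have hScard : S.card = d := by
      rwa [Finset.card_image_of_injOn (fun a ha b hb h =>
        chart_inj (hfQ a (hsubQ ha)) (hfQ b (hsubQ hb)) h)] at hcard
    refine ⟨S, ?_, rfl⟩
    rw [Finset.mem_filter, Finset.mem_powersetCard]
    exact ⟨⟨hSsub, hScard⟩, hsep⟩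

lemma card_filter_zmod {α : Type*} (s : Finset α) (p : α → Prop) [DecidablePred p] :
    (((s.filter p).card : ZMod 2)) = ∑ a ∈ s, if p a then (1 : ZMod 2) else 0 := by
  rw [Finset.card_filter, Nat.cast_sum]
  exact Finset.sum_congr rfl fun a _ => by split <;> simp

lemma zmod_ind_mul {a b : ℝ} (ha : a ≠ 0) (hb : b ≠ 0) :
    (if a * b < 0 then (1 : ZMod 2) else 0)
      = (if a < 0 then (1 : ZMod 2) else 0) + (if b < 0 then (1 : ZMod 2) else 0) := by
  rcases ha.lt_or_gt with h | h <;> rcases hb.lt_or_gt with h' | h'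
  · rw [if_neg (by nlinarith), if_pos h, if_pos h']; decide
  · rw [if_pos (by nlinarith), if_pos h, if_neg (by linarith)]; decide
  · rw [if_pos (by nlinarith), if_neg (by linarith), if_pos h']; decide
  · rw [if_neg (by nlinarith), if_neg (by linarith), if_neg (by linarith)]; decide

lemma zmod_ind_not {P Q : Prop} (h : P ↔ ¬Q) :
    (if P then (1 : ZMod 2) else 0) = 1 + (if Q then (1 : ZMod 2) else 0) := by
  by_cases hq : Q
  · rw [if_pos hq, if_neg (by rw [h]; exact not_not_intro hq)]; decide
  · rw [if_pos (h.2 hq), if_neg hq]; decide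

lemma zmod_even_cast {n : ℕ} (h : Even n) : ((n : ZMod 2)) = 0 := by
  obtain ⟨k, rfl⟩ := h
  push_cast
  ring_nf
  rw [show ((2 : ZMod 2)) = 0 from rfl]
  ring

lemma sign_transfer {p a b : ℝ} (hab : 0 < a * b) : p * a < 0 ↔ p * b < 0 := by
  rcases mul_pos_iff.1 hab with ⟨h1, h2⟩ | ⟨h1, h2⟩ <;>
    constructor <;> intro h <;> nlinarith

lemma sign_transfer_neg {p a b : ℝ} (hp : p ≠ 0) (hab : a * b < 0) :
    (p * a < 0 ↔ ¬(p * b < 0)) := by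
  rw [not_lt]
  rcases mul_neg_iff.1 hab with ⟨h1, h2⟩ | ⟨h1, h2⟩ <;> rcases hp.lt_or_gt with hp' | hp' <;>
    constructor <;> intro h <;> nlinarith

lemma phi_package (hd : 1 ≤ d) {Q : Finset (ProjSp d)} (hgen : GenericProj Q) {x y : ProjSp d}
    (hx : x ∈ Q) (hy : y ∈ Q) {S : Finset (ProjSp d)}
    (hS : S ∈ (Q \ {x, y}).powersetCard d) :
    ∃ φ : (Fin (d + 1) → ℝ) →ₗ[ℝ] ℝ, φ x.rep ≠ 0 ∧ φ y.rep ≠ 0 ∧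
      ∀ h : (Fin (d + 1) → ℝ) →ₗ[ℝ] ℝ, (∀ q ∈ Q, h q.rep ≠ 0) →
        (SeparatesIn {v | h v = 1}
          ((affineSpan ℝ ((S.image (chart h)) : Set (Fin (d + 1) → ℝ))) : Set (Fin (d + 1) → ℝ))
          (chart h x) (chart h y)
          ↔ (φ x.rep * φ y.rep) * (h x.rep * h y.rep) < 0) := by
  rw [Finset.mem_powersetCard] at hS
  have hSQ : S ⊆ Q := hS.1.trans Finset.sdiff_subset
  have hxS : x ∉ S := fun h => (Finset.mem_sdiff.1 (hS.1 h)).2 (by simp)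
  have hyS : y ∉ S := fun h => (Finset.mem_sdiff.1 (hS.1 h)).2 (by simp)
  obtain ⟨φ, hφ⟩ := exists_phi hgen hSQ hS.2
  refine ⟨φ, ?_, ?_, fun h hhQ => sep_criterion hd hgen hhQ hSQ hS.2 hx hy hxS hyS hφ⟩
  · intro h
    exact rep_not_mem_span hgen hSQ (by omega) hx hxS (hφ ▸ LinearMap.mem_ker.2 h)
  · intro h
    exact rep_not_mem_span hgen hSQ (by omega) hy hyS (hφ ▸ LinearMap.mem_ker.2 h)

lemma pcount_parity {n : ℕ} (hd : 1 ≤ d) {Q : Finset (ProjSp d)} (hn : Q.card = n)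
    (hgen : GenericProj Q) (heven : Even ((n - 2).choose d))
    {f g : (Fin (d + 1) → ℝ) →ₗ[ℝ] ℝ}
    (hfQ : ∀ q ∈ Q, f q.rep ≠ 0) (hgQ : ∀ q ∈ Q, g q.rep ≠ 0)
    {x y : ProjSp d} (hx : x ∈ Q) (hy : y ∈ Q) (hxy : x ≠ y) :
    ((pcount f Q x y : ZMod 2)) = pcount g Q x y := by
  classical
  set base := (Q \ {x, y}).powersetCard d with hbase
  have hpairsub : ({x, y} : Finset (ProjSp d)) ⊆ Q := by
    rw [Finset.insert_subset_iff]; exact ⟨hx, Finset.singleton_subset_iff.2 hy⟩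
  have hpaircard : ({x, y} : Finset (ProjSp d)).card = 2 := by
    rw [Finset.card_insert_of_notMem (by simpa using hxy), Finset.card_singleton]
  have hbasecard : base.card = (n - 2).choose d := by
    rw [hbase, Finset.card_powersetCard, Finset.card_sdiff_of_subset hpairsub, hpaircard, hn]
  have hτ : f x.rep * f y.rep * (g x.rep * g y.rep) ≠ 0 :=
    mul_ne_zero (mul_ne_zero (hfQ x hx) (hfQ y hy)) (mul_ne_zero (hgQ x hx) (hgQ y hy))
  rw [pcount, pcount, card_filter_zmod, card_filter_zmod]
  rcases hτ.lt_or_gt with hneg | hpos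
  · -- opposite charts
    have hstep : ∀ S ∈ base, (if SeparatesIn {v | f v = 1}
        ((affineSpan ℝ ((S.image (chart f)) : Set (Fin (d + 1) → ℝ))) : Set (Fin (d + 1) → ℝ))
        (chart f x) (chart f y) then (1 : ZMod 2) else 0)
        = 1 + (if SeparatesIn {v | g v = 1}
        ((affineSpan ℝ ((S.image (chart g)) : Set (Fin (d + 1) → ℝ))) : Set (Fin (d + 1) → ℝ))
        (chart g x) (chart g y) then (1 : ZMod 2) else 0) := by
      intro S hS
      obtain ⟨φ, hφx, hφy, hiff⟩ := phi_package hd hgen hx hy hS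
      apply zmod_ind_not
      rw [hiff f hfQ, hiff g hgQ]
      exact sign_transfer_neg (mul_ne_zero hφx hφy) hneg
    rw [Finset.sum_congr rfl hstep, Finset.sum_add_distrib, Finset.sum_const, nsmul_eq_mul,
      mul_one, ← hbase, hbasecard, zmod_even_cast heven, zero_add]
  · have hstep : ∀ S ∈ base, (if SeparatesIn {v | f v = 1}
        ((affineSpan ℝ ((S.image (chart f)) : Set (Fin (d + 1) → ℝ))) : Set (Fin (d + 1) → ℝ))
        (chart f x) (chart f y) then (1 : ZMod 2) else 0)
        = (if SeparatesIn {v | g v = 1}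
        ((affineSpan ℝ ((S.image (chart g)) : Set (Fin (d + 1) → ℝ))) : Set (Fin (d + 1) → ℝ))
        (chart g x) (chart g y) then (1 : ZMod 2) else 0) := by
      intro S hS
      obtain ⟨φ, hφx, hφy, hiff⟩ := phi_package hd hgen hx hy hS
      apply if_congr _ rfl rfl
      rw [hiff f hfQ, hiff g hgQ]
      exact sign_transfer hpos
    exact Finset.sum_congr rfl hstep

/-- Indicator value of the separation condition. -/
noncomputable def pInd (f : (Fin (d + 1) → ℝ) →ₗ[ℝ] ℝ) (S : Finset (ProjSp d))
    (x y : ProjSp d) : ZMod 2 :=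
  if SeparatesIn {v | f v = 1}
      ((affineSpan ℝ ((S.image (chart f)) : Set (Fin (d + 1) → ℝ))) : Set (Fin (d + 1) → ℝ))
      (chart f x) (chart f y) then 1 else 0

lemma zmod_ind_sq {t : ℝ} : (if t * t < 0 then (1 : ZMod 2) else 0) = 0 :=
  if_neg (not_lt.2 (mul_self_nonneg t))

lemma zmod_ind_neg {c : ℝ} (hc : c ≠ 0) :
    (if -c < 0 then (1 : ZMod 2) else 0) = 1 + (if c < 0 then (1 : ZMod 2) else 0) := by
  rcases hc.lt_or_gt with h | h
  · rw [if_neg (by linarith), if_pos h]; decide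
  · rw [if_pos (by linarith), if_neg (by linarith)]; decide

lemma zfinal : ∀ ib ic ifx ify ifz i2y i2z : ZMod 2, ib + i2y = (1 + ic) + i2z →
    (((ib + 0) + (ifx + ify)) + ((i2y + i2z) + (ify + ifz)) + ((ic + 0) + (ifx + ifz))) = 1 := by
  decide

lemma triangle_per_T (hd : 1 ≤ d) {Q : Finset (ProjSp d)} (hgen : GenericProj Q)
    {f : (Fin (d + 1) → ℝ) →ₗ[ℝ] ℝ} (hfQ : ∀ q ∈ Q, f q.rep ≠ 0)
    {x y z : ProjSp d} (hx : x ∈ Q) (hy : y ∈ Q) (hz : z ∈ Q)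
    (hxy : x ≠ y) (hyz : y ≠ z) (hxz : x ≠ z)
    {T : Finset (ProjSp d)} (hT : T ∈ (Q \ {x, y, z}).powersetCard (d - 1)) :
    pInd f (insert z T) x y + pInd f (insert x T) y z + pInd f (insert y T) x z = 1 := by
  classical
  rw [Finset.mem_powersetCard] at hT
  obtain ⟨hTsub, hTcard⟩ := hT
  have hTQ : T ⊆ Q := hTsub.trans Finset.sdiff_subset
  have hxT : x ∉ T := fun h => (Finset.mem_sdiff.1 (hTsub h)).2 (by simp)
  have hyT : y ∉ T := fun h => (Finset.mem_sdiff.1 (hTsub h)).2 (by simp)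
  have hzT : z ∉ T := fun h => (Finset.mem_sdiff.1 (hTsub h)).2 (by simp)
  -- the three hyperplane spanning sets
  set S₁ := insert z T with hS₁def
  set S₂ := insert x T with hS₂def
  set S₃ := insert y T with hS₃def
  have hS₁Q : S₁ ⊆ Q := Finset.insert_subset hz hTQ
  have hS₂Q : S₂ ⊆ Q := Finset.insert_subset hx hTQ
  have hS₃Q : S₃ ⊆ Q := Finset.insert_subset hy hTQ
  have hS₁card : S₁.card = d := by rw [hS₁def, Finset.card_insert_of_notMem hzT]; omega
  have hS₂card : S₂.card = d := by rw [hS₂def, Finset.card_insert_of_notMem hxT]; omega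
  have hS₃card : S₃.card = d := by rw [hS₃def, Finset.card_insert_of_notMem hyT]; omega
  have hxS₁ : x ∉ S₁ := by simp [hS₁def, hxz, hxT]
  have hyS₁ : y ∉ S₁ := by simp [hS₁def, hyz, hyT]
  have hyS₂ : y ∉ S₂ := by simp [hS₂def, Ne.symm hxy, hyT]
  have hzS₂ : z ∉ S₂ := by simp [hS₂def, Ne.symm hxz, hzT]
  have hxS₃ : x ∉ S₃ := by simp [hS₃def, hxy, hxT]
  have hzS₃ : z ∉ S₃ := by simp [hS₃def, Ne.symm hyz, hzT]
  obtain ⟨φ₁, hφ₁⟩ := exists_phi hgen hS₁Q hS₁card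
  obtain ⟨φ₂, hφ₂⟩ := exists_phi hgen hS₂Q hS₂card
  obtain ⟨φ₃, hφ₃⟩ := exists_phi hgen hS₃Q hS₃card
  have hφ₁x : φ₁ x.rep ≠ 0 := fun h =>
    rep_not_mem_span hgen hS₁Q (by omega) hx hxS₁ (hφ₁ ▸ LinearMap.mem_ker.2 h)
  have hφ₁y : φ₁ y.rep ≠ 0 := fun h =>
    rep_not_mem_span hgen hS₁Q (by omega) hy hyS₁ (hφ₁ ▸ LinearMap.mem_ker.2 h)
  have hφ₂y : φ₂ y.rep ≠ 0 := fun h =>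
    rep_not_mem_span hgen hS₂Q (by omega) hy hyS₂ (hφ₂ ▸ LinearMap.mem_ker.2 h)
  have hφ₂z : φ₂ z.rep ≠ 0 := fun h =>
    rep_not_mem_span hgen hS₂Q (by omega) hz hzS₂ (hφ₂ ▸ LinearMap.mem_ker.2 h)
  have hφ₃x : φ₃ x.rep ≠ 0 := fun h =>
    rep_not_mem_span hgen hS₃Q (by omega) hx hxS₃ (hφ₃ ▸ LinearMap.mem_ker.2 h)
  have hφ₃z : φ₃ z.rep ≠ 0 := fun h =>
    rep_not_mem_span hgen hS₃Q (by omega) hz hzS₃ (hφ₃ ▸ LinearMap.mem_ker.2 h)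
  -- the basis given by T ∪ {y, z}
  set U : Finset (ProjSp d) := insert y (insert z T) with hUdef
  have hyU : y ∈ U := Finset.mem_insert_self y _
  have hzU : z ∈ U := Finset.mem_insert_of_mem (Finset.mem_insert_self z T)
  have hUQ : U ⊆ Q := Finset.insert_subset hy hS₁Q
  have hUcard : U.card = d + 1 := by
    rw [hUdef, Finset.card_insert_of_notMem (by simp [hyz, hyT]),
      Finset.card_insert_of_notMem hzT]
    omega
  have hUli := hgen U hUQ (by omega)
  haveI : Nonempty (U : Finset (ProjSp d)) := ⟨⟨y, hyU⟩⟩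
  have hcardeq : Fintype.card (U : Finset (ProjSp d)) = finrank ℝ (Fin (d + 1) → ℝ) := by
    rw [Fintype.card_coe, hUcard, finrank_fintype_fun_eq_card, Fintype.card_fin]
  set B := basisOfLinearIndependentOfCardEqFinrank hUli hcardeq with hBdef
  have hB : ⇑B = fun u : U => (u : ProjSp d).rep :=
    coe_basisOfLinearIndependentOfCardEqFinrank hUli hcardeq
  set b := B.repr x.rep ⟨y, hyU⟩ with hbdef
  set c := B.repr x.rep ⟨z, hzU⟩ with hcdef
  have hexp : ∀ ψ : (Fin (d + 1) → ℝ) →ₗ[ℝ] ℝ,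
      ψ x.rep = ∑ i : U, B.repr x.rep i * ψ ((i : ProjSp d).rep) := by
    intro ψ
    have hsum := B.sum_repr x.rep
    conv_lhs => rw [← hsum]
    rw [map_sum]
    refine Finset.sum_congr rfl fun i _ => ?_
    rw [map_smul, smul_eq_mul, hB]
  have hker_mem : ∀ (φ : (Fin (d + 1) → ℝ) →ₗ[ℝ] ℝ) (S : Finset (ProjSp d)),
      LinearMap.ker φ = Submodule.span ℝ (Projectivization.rep '' (S : Set (ProjSp d))) →
      ∀ w ∈ S, φ w.rep = 0 := by
    intro φ S hS w hw
    have : w.rep ∈ Submodule.span ℝ (Projectivization.rep '' (S : Set (ProjSp d))) :=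
      Submodule.subset_span ⟨w, hw, rfl⟩
    rw [← hS] at this
    exact this
  -- φ₁ x = b φ₁ y
  have hφ₁exp : φ₁ x.rep = b * φ₁ y.rep := by
    rw [hexp φ₁, Finset.sum_eq_single_of_mem (⟨y, hyU⟩ : U) (Finset.mem_univ _)]
    intro i _ hne
    have hiS₁ : (i : ProjSp d) ∈ S₁ := by
      rcases Finset.mem_insert.1 i.2 with h | h
      · exact absurd (Subtype.ext h) hne
      · exact h
    rw [hker_mem φ₁ S₁ hφ₁ _ hiS₁, mul_zero]
  -- φ₃ x = c φ₃ z
  have hφ₃exp : φ₃ x.rep = c * φ₃ z.rep := by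
    rw [hexp φ₃, Finset.sum_eq_single_of_mem (⟨z, hzU⟩ : U) (Finset.mem_univ _)]
    intro i _ hne
    have hiS₃ : (i : ProjSp d) ∈ S₃ := by
      rcases Finset.mem_insert.1 i.2 with h | h
      · rw [hS₃def]; exact Finset.mem_insert.2 (Or.inl h)
      · rcases Finset.mem_insert.1 h with h' | h'
        · exact absurd (Subtype.ext h') hne
        · rw [hS₃def]; exact Finset.mem_insert.2 (Or.inr h')
    rw [hker_mem φ₃ S₃ hφ₃ _ hiS₃, mul_zero]
  -- 0 = φ₂ x = b φ₂ y + c φ₂ z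
  have hφ₂exp : b * φ₂ y.rep + c * φ₂ z.rep = 0 := by
    have hx0 : φ₂ x.rep = 0 := hker_mem φ₂ S₂ hφ₂ x (Finset.mem_insert_self x T)
    have := hexp φ₂
    rw [hx0] at this
    rw [Finset.sum_eq_add_of_mem (⟨y, hyU⟩ : U) (⟨z, hzU⟩ : U) (Finset.mem_univ _)
      (Finset.mem_univ _) (by simp [Subtype.ext_iff, hyz]) ?_] at this
    · exact this.symm
    · intro i _ hne
      have hiS₂ : (i : ProjSp d) ∈ S₂ := by
        rcases Finset.mem_insert.1 i.2 with h | h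
        · exact absurd (Subtype.ext h) hne.1
        · rcases Finset.mem_insert.1 h with h' | h'
          · exact absurd (Subtype.ext h') hne.2
          · rw [hS₂def]; exact Finset.mem_insert.2 (Or.inr h')
      rw [hker_mem φ₂ S₂ hφ₂ _ hiS₂, mul_zero]
  have hb : b ≠ 0 := by
    intro h
    rw [h, zero_mul] at hφ₁exp
    exact hφ₁x hφ₁exp
  have hc : c ≠ 0 := by
    intro h
    rw [h, zero_mul] at hφ₃exp
    exact hφ₃x hφ₃exp
  have hfx := hfQ x hx
  have hfy := hfQ y hy
  have hfz := hfQ z hz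
  -- decompose the three indicators
  have e1 : pInd f S₁ x y = ((if b < 0 then (1 : ZMod 2) else 0) + 0)
      + ((if f x.rep < 0 then (1 : ZMod 2) else 0) + (if f y.rep < 0 then (1 : ZMod 2) else 0)) := by
    rw [pInd, if_congr (sep_criterion hd hgen hfQ hS₁Q hS₁card hx hy hxS₁ hyS₁ hφ₁) rfl rfl]
    rw [zmod_ind_mul (mul_ne_zero hφ₁x hφ₁y) (mul_ne_zero hfx hfy),
      zmod_ind_mul hfx hfy]
    congr 1
    have hv : φ₁ x.rep * φ₁ y.rep = b * (φ₁ y.rep * φ₁ y.rep) := by rw [hφ₁exp]; ring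
    rw [hv, zmod_ind_mul hb (mul_ne_zero hφ₁y hφ₁y), zmod_ind_sq]
  have e2 : pInd f S₂ y z = (((if φ₂ y.rep < 0 then (1 : ZMod 2) else 0)
      + (if φ₂ z.rep < 0 then (1 : ZMod 2) else 0)))
      + ((if f y.rep < 0 then (1 : ZMod 2) else 0) + (if f z.rep < 0 then (1 : ZMod 2) else 0)) := by
    rw [pInd, if_congr (sep_criterion hd hgen hfQ hS₂Q hS₂card hy hz hyS₂ hzS₂ hφ₂) rfl rfl]
    rw [zmod_ind_mul (mul_ne_zero hφ₂y hφ₂z) (mul_ne_zero hfy hfz),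
      zmod_ind_mul hφ₂y hφ₂z, zmod_ind_mul hfy hfz]
  have e3 : pInd f S₃ x z = ((if c < 0 then (1 : ZMod 2) else 0) + 0)
      + ((if f x.rep < 0 then (1 : ZMod 2) else 0) + (if f z.rep < 0 then (1 : ZMod 2) else 0)) := by
    rw [pInd, if_congr (sep_criterion hd hgen hfQ hS₃Q hS₃card hx hz hxS₃ hzS₃ hφ₃) rfl rfl]
    rw [zmod_ind_mul (mul_ne_zero hφ₃x hφ₃z) (mul_ne_zero hfx hfz),
      zmod_ind_mul hfx hfz]
    congr 1
    have hv : φ₃ x.rep * φ₃ z.rep = c * (φ₃ z.rep * φ₃ z.rep) := by rw [hφ₃exp]; ring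
    rw [hv, zmod_ind_mul hc (mul_ne_zero hφ₃z hφ₃z), zmod_ind_sq]
  have hrel : (if b < 0 then (1 : ZMod 2) else 0) + (if φ₂ y.rep < 0 then (1 : ZMod 2) else 0)
      = (1 + (if c < 0 then (1 : ZMod 2) else 0))
        + (if φ₂ z.rep < 0 then (1 : ZMod 2) else 0) := by
    have heq : b * φ₂ y.rep = -c * φ₂ z.rep := by linarith [hφ₂exp]
    rw [← zmod_ind_mul hb hφ₂y, ← zmod_ind_neg hc, ← zmod_ind_mul (neg_ne_zero.2 hc) hφ₂z, heq]
  rw [e1, e2, e3]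
  exact zfinal _ _ _ _ _ _ _ hrel

lemma pcount_split (hd : 1 ≤ d) {Q : Finset (ProjSp d)} {f : (Fin (d + 1) → ℝ) →ₗ[ℝ] ℝ}
    {x y z : ProjSp d} (hz : z ∈ Q) (hzx : z ≠ x) (hzy : z ≠ y) :
    ((pcount f Q x y : ZMod 2)) =
      (∑ S ∈ ((Q \ {x, y}).erase z).powersetCard d, pInd f S x y)
      + ∑ T ∈ ((Q \ {x, y}).erase z).powersetCard (d - 1), pInd f (insert z T) x y := by
  classical
  rw [pcount, card_filter_zmod]
  have hpind : ∀ S : Finset (ProjSp d), (if SeparatesIn {v | f v = 1}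
      ((affineSpan ℝ ((S.image (chart f)) : Set (Fin (d + 1) → ℝ))) : Set (Fin (d + 1) → ℝ))
      (chart f x) (chart f y) then (1 : ZMod 2) else 0) = pInd f S x y := by
    intro S; rw [pInd]
  simp_rw [hpind]
  rw [← Finset.sum_filter_add_sum_filter_not ((Q \ {x, y}).powersetCard d)
    (fun S => z ∈ S) (fun S => pInd f S x y)]
  have hnot : ((Q \ {x, y}).powersetCard d).filter (fun S => ¬ z ∈ S)
      = ((Q \ {x, y}).erase z).powersetCard d := by
    ext S
    simp only [Finset.mem_filter, Finset.mem_powersetCard, Finset.subset_erase]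
    tauto
  have hin : (((Q \ {x, y}).powersetCard d).filter (fun S => z ∈ S)).sum
      (fun S => pInd f S x y)
      = ∑ T ∈ ((Q \ {x, y}).erase z).powersetCard (d - 1), pInd f (insert z T) x y := by
    refine Finset.sum_bij' (fun S _ => S.erase z) (fun T _ => insert z T) ?_ ?_ ?_ ?_ ?_
    case refine_1 =>
      intro S hS
      rw [Finset.mem_filter, Finset.mem_powersetCard] at hS
      rw [Finset.mem_powersetCard]
      refine ⟨Finset.erase_subset_erase z hS.1.1, ?_⟩
      rw [Finset.card_erase_of_mem hS.2, hS.1.2]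
    case refine_2 =>
      intro T hT
      rw [Finset.mem_powersetCard, Finset.subset_erase] at hT
      rw [Finset.mem_filter, Finset.mem_powersetCard]
      refine ⟨⟨Finset.insert_subset (Finset.mem_sdiff.2 ⟨hz, by simp [hzx, hzy]⟩) hT.1.1, ?_⟩,
        Finset.mem_insert_self z T⟩
      rw [Finset.card_insert_of_notMem hT.1.2, hT.2]
      omega
    case refine_3 =>
      intro S hS
      rw [Finset.mem_filter] at hS
      exact Finset.insert_erase hS.2
    case refine_4 =>
      intro T hT
      rw [Finset.mem_powersetCard, Finset.subset_erase] at hT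
      exact Finset.erase_insert hT.1.2
    case refine_5 =>
      intro S hS
      rw [Finset.mem_filter] at hS
      rw [Finset.insert_erase hS.2]
  rw [hnot, hin, add_comm]

lemma pcount_triangle {n : ℕ} (hd : 1 ≤ d) {Q : Finset (ProjSp d)} (hn : Q.card = n)
    (hgen : GenericProj Q) {f : (Fin (d + 1) → ℝ) →ₗ[ℝ] ℝ} (hfQ : ∀ q ∈ Q, f q.rep ≠ 0)
    {x y z : ProjSp d} (hx : x ∈ Q) (hy : y ∈ Q) (hz : z ∈ Q)
    (hxy : x ≠ y) (hyz : y ≠ z) (hxz : x ≠ z) :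
    ((pcount f Q x y : ZMod 2)) + pcount f Q y z + pcount f Q x z
      = ((n - 3).choose (d - 1) : ZMod 2) := by
  classical
  set R : Finset (ProjSp d) := Q \ {x, y, z} with hRdef
  have e1 : (Q \ {x, y}).erase z = R := by
    ext a
    simp only [hRdef, Finset.mem_erase, Finset.mem_sdiff, Finset.mem_insert,
      Finset.mem_singleton]
    tauto
  have e2 : (Q \ {y, z}).erase x = R := by
    ext a
    simp only [hRdef, Finset.mem_erase, Finset.mem_sdiff, Finset.mem_insert,
      Finset.mem_singleton]
    tauto
  have e3 : (Q \ {x, z}).erase y = R := by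
    ext a
    simp only [hRdef, Finset.mem_erase, Finset.mem_sdiff, Finset.mem_insert,
      Finset.mem_singleton]
    tauto
  have h1 := pcount_split (f := f) (Q := Q) hd hz (Ne.symm hxz) (Ne.symm hyz)
  have h2 := pcount_split (f := f) (Q := Q) hd hx hxy hxz
  have h3 := pcount_split (f := f) (Q := Q) hd hy (Ne.symm hxy) hyz
  rw [e1] at h1
  rw [e2] at h2
  rw [e3] at h3
  rw [h1, h2, h3]
  -- even part
  have hA : (∑ S ∈ R.powersetCard d, pInd f S x y) + (∑ S ∈ R.powersetCard d, pInd f S y z)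
      + (∑ S ∈ R.powersetCard d, pInd f S x z) = 0 := by
    rw [← Finset.sum_add_distrib, ← Finset.sum_add_distrib]
    rw [Finset.sum_congr rfl (g := fun _ => (0 : ZMod 2)) ?_, Finset.sum_const, smul_zero]
    intro S hS
    rw [Finset.mem_powersetCard] at hS
    obtain ⟨hSsub, hScard⟩ := hS
    have hSQ : S ⊆ Q := hSsub.trans Finset.sdiff_subset
    have hxS : x ∉ S := fun h => (Finset.mem_sdiff.1 (hSsub h)).2 (by simp)
    have hyS : y ∉ S := fun h => (Finset.mem_sdiff.1 (hSsub h)).2 (by simp)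
    have hzS : z ∉ S := fun h => (Finset.mem_sdiff.1 (hSsub h)).2 (by simp)
    obtain ⟨φ, hφ⟩ := exists_phi hgen hSQ hScard
    have hφx : φ x.rep ≠ 0 := fun h =>
      rep_not_mem_span hgen hSQ (by omega) hx hxS (hφ ▸ LinearMap.mem_ker.2 h)
    have hφy : φ y.rep ≠ 0 := fun h =>
      rep_not_mem_span hgen hSQ (by omega) hy hyS (hφ ▸ LinearMap.mem_ker.2 h)
    have hφz : φ z.rep ≠ 0 := fun h =>
      rep_not_mem_span hgen hSQ (by omega) hz hzS (hφ ▸ LinearMap.mem_ker.2 h)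
    have hfx := hfQ x hx
    have hfy := hfQ y hy
    have hfz := hfQ z hz
    have d1 : pInd f S x y = ((if φ x.rep < 0 then (1 : ZMod 2) else 0)
        + (if φ y.rep < 0 then (1 : ZMod 2) else 0))
        + ((if f x.rep < 0 then (1 : ZMod 2) else 0)
        + (if f y.rep < 0 then (1 : ZMod 2) else 0)) := by
      rw [pInd, if_congr (sep_criterion hd hgen hfQ hSQ hScard hx hy hxS hyS hφ) rfl rfl,
        zmod_ind_mul (mul_ne_zero hφx hφy) (mul_ne_zero hfx hfy),
        zmod_ind_mul hφx hφy, zmod_ind_mul hfx hfy]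
    have d2 : pInd f S y z = ((if φ y.rep < 0 then (1 : ZMod 2) else 0)
        + (if φ z.rep < 0 then (1 : ZMod 2) else 0))
        + ((if f y.rep < 0 then (1 : ZMod 2) else 0)
        + (if f z.rep < 0 then (1 : ZMod 2) else 0)) := by
      rw [pInd, if_congr (sep_criterion hd hgen hfQ hSQ hScard hy hz hyS hzS hφ) rfl rfl,
        zmod_ind_mul (mul_ne_zero hφy hφz) (mul_ne_zero hfy hfz),
        zmod_ind_mul hφy hφz, zmod_ind_mul hfy hfz]
    have d3 : pInd f S x z = ((if φ x.rep < 0 then (1 : ZMod 2) else 0)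
        + (if φ z.rep < 0 then (1 : ZMod 2) else 0))
        + ((if f x.rep < 0 then (1 : ZMod 2) else 0)
        + (if f z.rep < 0 then (1 : ZMod 2) else 0)) := by
      rw [pInd, if_congr (sep_criterion hd hgen hfQ hSQ hScard hx hz hxS hzS hφ) rfl rfl,
        zmod_ind_mul (mul_ne_zero hφx hφz) (mul_ne_zero hfx hfz),
        zmod_ind_mul hφx hφz, zmod_ind_mul hfx hfz]
    rw [d1, d2, d3]
    have : ∀ a b c p q r : ZMod 2,
        ((a + b) + (p + q)) + ((b + c) + (q + r)) + ((a + c) + (p + r)) = 0 := by decide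
    exact this _ _ _ _ _ _
  -- odd part
  have hRcard : R.card = n - 3 := by
    have hsub : ({x, y, z} : Finset (ProjSp d)) ⊆ Q := by
      rw [Finset.insert_subset_iff, Finset.insert_subset_iff]
      exact ⟨hx, hy, Finset.singleton_subset_iff.2 hz⟩
    have hcard3 : ({x, y, z} : Finset (ProjSp d)).card = 3 := by
      rw [Finset.card_insert_of_notMem (by simp [hxy, hxz]),
        Finset.card_insert_of_notMem (by simpa using hyz), Finset.card_singleton]
    rw [hRdef, Finset.card_sdiff_of_subset hsub, hcard3, hn]
  have hB : (∑ T ∈ R.powersetCard (d - 1), pInd f (insert z T) x y)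
      + (∑ T ∈ R.powersetCard (d - 1), pInd f (insert x T) y z)
      + (∑ T ∈ R.powersetCard (d - 1), pInd f (insert y T) x z)
      = ((n - 3).choose (d - 1) : ZMod 2) := by
    rw [← Finset.sum_add_distrib, ← Finset.sum_add_distrib]
    rw [Finset.sum_congr rfl (g := fun _ => (1 : ZMod 2))
      (fun T hT => triangle_per_T hd hgen hfQ hx hy hz hxy hyz hxz hT)]
    rw [Finset.sum_const, Finset.card_powersetCard, hRcard, nsmul_eq_mul, mul_one]
  linear_combination hA + hB

lemma separatesIn_symm {Amb H : Set (Fin (d + 1) → ℝ)} {A B : Fin (d + 1) → ℝ}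
    (h : SeparatesIn Amb H A B) : SeparatesIn Amb H B A := by
  obtain ⟨h1, h2, h3⟩ := h
  refine ⟨h2, h1, fun hmem => h3 ?_⟩
  rw [← connectedComponentIn_eq hmem]
  exact mem_connectedComponentIn h1

lemma pcount_symm {Q : Finset (ProjSp d)} {f : (Fin (d + 1) → ℝ) →ₗ[ℝ] ℝ} {x y : ProjSp d} :
    pcount f Q x y = pcount f Q y x := by
  classical
  rw [pcount, pcount, Finset.pair_comm x y]
  congr 1
  apply Finset.filter_congr
  intro S _
  constructor
  · exact separatesIn_symm
  · exact separatesIn_symm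

/-- Theorem 4.1A, Projective Orchard Theorem: for a generic configuration
`Q` of `n` points in `RP^d` with `binom (n-2) d` even, the Orchard partition computed in an
affine chart `RP^d \ H ≅ ℝ^d` (for any hyperplane `H` disjoint from `Q`) does not depend on
the chart; hence `Q` carries a natural partition into at most two classes: an equivalence
relation with at most two equivalence classes. -/
theorem projective_orchard {d n : ℕ} (Q : Finset (ProjSp d)) (hn : Q.card = n)
    (hgen : GenericProj Q) (heven : Even (Nat.choose (n - 2) d))
    (f g : (Fin (d + 1) → ℝ) →ₗ[ℝ] ℝ) (hf : f ≠ 0) (hg : g ≠ 0)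
    (hfQ : ∀ x ∈ Q, f (Projectivization.rep x) ≠ 0)
    (hgQ : ∀ x ∈ Q, g (Projectivization.rep x) ≠ 0) :
    (∀ x ∈ Q, ∀ y ∈ Q, (ChartRel f Q x y ↔ ChartRel g Q x y)) ∧
    (∀ x ∈ Q, ChartRel f Q x x) ∧
    (∀ x ∈ Q, ∀ y ∈ Q, ChartRel f Q x y → ChartRel f Q y x) ∧
    (∀ x ∈ Q, ∀ y ∈ Q, ∀ z ∈ Q, ChartRel f Q x y → ChartRel f Q y z → ChartRel f Q x z) ∧
    (∀ x ∈ Q, ∀ y ∈ Q, ∀ z ∈ Q, ChartRel f Q x y ∨ ChartRel f Q y z ∨ ChartRel f Q x z) := by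
  rcases Nat.eq_zero_or_pos d with hd0 | hd
  · subst hd0
    refine ⟨?_, ?_, ?_, ?_, ?_⟩
    · intro x _ y _
      constructor
      · intro _; exact Or.inl (projsp0_eq x y)
      · intro _; exact Or.inl (projsp0_eq x y)
    · intro x _; exact Or.inl rfl
    · intro x _ y _ _; exact Or.inl (projsp0_eq y x)
    · intro x _ y _ z _ _ _; exact Or.inl (projsp0_eq x z)
    · intro x _ y _ z _; exact Or.inl (Or.inl (projsp0_eq x y))
  · have hrel : ∀ (h : (Fin (d + 1) → ℝ) →ₗ[ℝ] ℝ), (∀ q ∈ Q, h q.rep ≠ 0) →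
        ∀ u v : ProjSp d, u ∈ Q → v ∈ Q → u ≠ v →
        (ChartRel h Q u v ↔
          ((pcount h Q u v : ZMod 2) = (((n - 3).choose (d - 1) : ℕ) : ZMod 2))) := by
      intro h hhQ u v hu hv huv
      rw [ChartRel, sepCount_eq_pcount hhQ hu hv, hn]
      constructor
      · intro hor
        rcases hor with hor | hor
        · exact absurd hor huv
        · exact (ZMod.natCast_eq_natCast_iff' _ _ 2).2 hor
      · intro hcast
        exact Or.inr ((ZMod.natCast_eq_natCast_iff' _ _ 2).1 hcast)
    set K : ZMod 2 := (((n - 3).choose (d - 1) : ℕ) : ZMod 2) with hK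
    refine ⟨?_, ?_, ?_, ?_, ?_⟩
    · -- chart independence
      intro x hx y hy
      by_cases hxy : x = y
      · subst hxy
        constructor <;> intro _ <;> exact Or.inl rfl
      · rw [hrel f hfQ x y hx hy hxy, hrel g hgQ x y hx hy hxy,
          ← pcount_parity hd hn hgen heven hfQ hgQ hx hy hxy]
    · intro x _; exact Or.inl rfl
    · -- symmetry
      intro x hx y hy hcr
      by_cases hxy : x = y
      · exact Or.inl hxy.symm
      · rw [hrel f hfQ x y hx hy hxy] at hcr
        rw [hrel f hfQ y x hy hx (Ne.symm hxy), ← pcount_symm]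
        exact hcr
    · -- transitivity
      intro x hx y hy z hz hcxy hcyz
      by_cases hxz : x = z
      · exact Or.inl hxz
      by_cases hxy : x = y
      · subst hxy; exact hcyz
      by_cases hyz : y = z
      · subst hyz; exact hcxy
      rw [hrel f hfQ x y hx hy hxy] at hcxy
      rw [hrel f hfQ y z hy hz hyz] at hcyz
      rw [hrel f hfQ x z hx hz hxz]
      have htri := pcount_triangle hd hn hgen hfQ hx hy hz hxy hyz hxz
      rw [← hK] at htri
      have : ∀ a b c k : ZMod 2, a + b + c = k → a = k → b = k → c = k := by decide
      exact this _ _ _ _ htri hcxy hcyz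
    · -- totality
      intro x hx y hy z hz
      by_cases hxy : x = y
      · exact Or.inl (Or.inl hxy)
      by_cases hyz : y = z
      · exact Or.inr (Or.inl (Or.inl hyz))
      by_cases hxz : x = z
      · exact Or.inr (Or.inr (Or.inl hxz))
      have htri := pcount_triangle hd hn hgen hfQ hx hy hz hxy hyz hxz
      rw [← hK] at htri
      have hone : ∀ a b c k : ZMod 2, a + b + c = k → a = k ∨ b = k ∨ c = k := by decide
      rcases hone _ _ _ _ htri with h1 | h1 | h1
      · exact Or.inl ((hrel f hfQ x y hx hy hxy).2 h1)
      · exact Or.inr (Or.inl ((hrel f hfQ y z hy hz hyz).2 h1))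
      · exact Or.inr (Or.inr ((hrel f hfQ x z hx hz hxz).2 h1))
end
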